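/- arXiv:1301.1452 — 9 statements merged into one kernel-verified Lean document; each statement's English description precedes it below -/
import Mathlib

section
/- Let F1 and F2 be finite fields with |F1 \ {0}| = m and |F2 \ {0}| = n. Then the independence number of the zero-divisor graph of the product ring F1 × F2 equals max{m, n}. -/
/-- The zero-divisor graph `Γ(R)`: vertices are the nonzero zero-divisors of `R`,
with distinct vertices `x`, `y` adjacent iff `x * y = 0`. -/
def zdvGraph (R : Type*) [CommRing R] :
    SimpleGraph {x : R // x ≠ 0 ∧ ∃ y ≠ 0, x * y = 0} where
  Adj x y := x ≠ y ∧ (x : R) * y = 0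
  symm := ⟨fun x y ⟨hxy, h⟩ => ⟨hxy.symm, by rwa [mul_comm]⟩⟩
  loopless := ⟨fun x ⟨h, _⟩ => h rfl⟩

/-- The independence number of a simple graph: the maximum cardinality of a set of
pairwise non-adjacent vertices. -/
noncomputable def indepNum {V : Type*} (G : SimpleGraph V) : ℕ :=
  sSup {n | ∃ s : Finset V, (s : Set V).Pairwise (fun a b => ¬ G.Adj a b) ∧ s.card = n}

theorem stmt0 (F₁ F₂ : Type*) [Field F₁] [Field F₂] [Finite F₁] [Finite F₂]
    (m n : ℕ) (hm : Nat.card {x : F₁ // x ≠ 0} = m) (hn : Nat.card {x : F₂ // x ≠ 0} = n) :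
    indepNum (zdvGraph (F₁ × F₂)) = max m n := by
  classical
  haveI : Fintype F₁ := Fintype.ofFinite F₁
  haveI : Fintype F₂ := Fintype.ofFinite F₂
  set V := {x : F₁ × F₂ // x ≠ 0 ∧ ∃ y ≠ 0, x * y = 0} with hV
  haveI : Fintype V := Fintype.ofFinite V
  set S := {k | ∃ s : Finset V, (s : Set V).Pairwise
      (fun a b => ¬ (zdvGraph (F₁ × F₂)).Adj a b) ∧ s.card = k} with hS
  -- every vertex has at least one zero coordinate
  have vert : ∀ v : V, v.1.1 = 0 ∨ v.1.2 = 0 := by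
    rintro ⟨⟨a, b⟩, hne, ⟨y1, y2⟩, hy, hxy⟩
    by_contra h
    push_neg at h
    have h1 : a * y1 = 0 := congrArg Prod.fst hxy
    have h2 : b * y2 = 0 := congrArg Prod.snd hxy
    have : y1 = 0 := by
      rcases mul_eq_zero.mp h1 with h' | h'
      · exact absurd h' h.1
      · exact h'
    have : y2 = 0 := by
      rcases mul_eq_zero.mp h2 with h' | h'
      · exact absurd h' h.2
      · exact h'
    exact hy (Prod.ext ‹y1 = 0› ‹y2 = 0›)
  have bdd : BddAbove S := by
    refine ⟨Fintype.card V, ?_⟩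
    rintro k ⟨s, -, rfl⟩
    exact Finset.card_le_univ s
  -- membership of m
  have memm : m ∈ S := by
    refine ⟨Finset.univ.image (fun a : {a : F₁ // a ≠ 0} =>
      (⟨(a.1, 0), by
        constructor
        · simp [Prod.ext_iff, a.2]
        · exact ⟨(0, 1), by simp [Prod.ext_iff], by simp [Prod.ext_iff]⟩⟩ : V)), ?_, ?_⟩
    · rintro x hx y hy hxy hadj
      simp only [Finset.coe_image, Set.mem_image] at hx hy
      obtain ⟨a, -, rfl⟩ := hx
      obtain ⟨b, -, rfl⟩ := hy
      have : (a.1 * b.1, (0 : F₂) * 0) = (0 : F₁ × F₂) := hadj.2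
      have := congrArg Prod.fst this
      simp at this
      exact this.elim a.2 b.2
    · rw [Finset.card_image_of_injective _ (fun a b hab => by
        apply Subtype.ext
        have := congrArg (fun v : V => v.1.1) hab
        simpa using this)]
      simp [← hm, Nat.card_eq_fintype_card]
  have memn : n ∈ S := by
    refine ⟨Finset.univ.image (fun b : {b : F₂ // b ≠ 0} =>
      (⟨(0, b.1), by
        constructor
        · simp [Prod.ext_iff, b.2]
        · exact ⟨(1, 0), by simp [Prod.ext_iff], by simp [Prod.ext_iff]⟩⟩ : V)), ?_, ?_⟩
    · rintro x hx y hy hxy hadj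
      simp only [Finset.coe_image, Set.mem_image] at hx hy
      obtain ⟨a, -, rfl⟩ := hx
      obtain ⟨b, -, rfl⟩ := hy
      have : ((0 : F₁) * 0, a.1 * b.1) = (0 : F₁ × F₂) := hadj.2
      have := congrArg Prod.snd this
      simp at this
      exact this.elim a.2 b.2
    · rw [Finset.card_image_of_injective _ (fun a b hab => by
        apply Subtype.ext
        have := congrArg (fun v : V => v.1.2) hab
        simpa using this)]
      simp [← hn, Nat.card_eq_fintype_card]
  -- upper bound
  have ub : ∀ k ∈ S, k ≤ max m n := by
    rintro k ⟨s, hps, rfl⟩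
    by_cases hall : ∀ v ∈ s, (v : V).1.2 = 0
    · refine le_trans ?_ (le_max_left m n)
      have hc : s.card ≤ (Finset.univ.filter (fun a : F₁ => a ≠ 0)).card := by
        apply Finset.card_le_card_of_injOn (fun v => (v : V).1.1)
        · intro v hv
          simp only [Finset.mem_coe, Finset.mem_filter, Finset.mem_univ, true_and]
          intro h0
          exact v.2.1 (Prod.ext h0 (hall v hv))
        · intro v hv w hw h
          exact Subtype.ext (Prod.ext h ((hall v hv).trans (hall w hw).symm))
      rwa [← Fintype.card_subtype, ← Nat.card_eq_fintype_card, hm] at hc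
    · push_neg at hall
      obtain ⟨w, hw, hw2⟩ := hall
      have hw1 : w.1.1 = 0 := (vert w).resolve_right hw2
      have hall1 : ∀ v ∈ s, (v : V).1.1 = 0 := by
        intro v hv
        by_contra hv1
        have hv2 : v.1.2 = 0 := (vert v).resolve_left hv1
        have hne : v ≠ w := fun h => hv1 (h ▸ hw1)
        apply hps hv hw hne
        refine ⟨hne, ?_⟩
        have : (v.1.1 * w.1.1, v.1.2 * w.1.2) = ((0 : F₁), (0 : F₂)) := by
          rw [hw1, hv2, mul_zero, zero_mul]
        exact this
      refine le_trans ?_ (le_max_right m n)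
      have hc : s.card ≤ (Finset.univ.filter (fun b : F₂ => b ≠ 0)).card := by
        apply Finset.card_le_card_of_injOn (fun v => (v : V).1.2)
        · intro v hv
          simp only [Finset.mem_coe, Finset.mem_filter, Finset.mem_univ, true_and]
          intro h0
          exact v.2.1 (Prod.ext (hall1 v hv) h0)
        · intro v hv w hw h
          exact Subtype.ext (Prod.ext ((hall1 v hv).trans (hall1 w hw).symm) h)
      rwa [← Fintype.card_subtype, ← Nat.card_eq_fintype_card, hn] at hc
  have : indepNum (zdvGraph (F₁ × F₂)) = sSup S := rfl
  rw [this]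
  exact le_antisymm (csSup_le ⟨m, memm⟩ ub)
    (max_le (le_csSup bdd memm) (le_csSup bdd memn))
end

section
/- Let F1 be a finite field with |F1 \ {0}| = m. Then the independence number of the zero-divisor graph of the product ring F1 × ℤ/4ℤ equals max{2m, 3}. -/
section Aux

variable {F₁ : Type*} [Field F₁]

lemma zmod4_aux : ∀ b d : ZMod 4, d ≠ 0 → b * d = 0 → b = 0 ∨ b = 2 := by decide

lemma zmod4_ne_zero : ∀ b : ZMod 4, b ≠ 0 → b ∈ ({1, 2, 3} : Finset (ZMod 4)) := by decide

lemma zmod4_ne02 : ∀ b : ZMod 4, b ≠ 0 → b ≠ 2 → b ∈ ({1, 3} : Finset (ZMod 4)) := by decide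

lemma zmod4_units : ∀ b b' : ZMod 4, (b = 1 ∨ b = 2 ∨ b = 3) → (b' = 1 ∨ b' = 2 ∨ b' = 3) →
    b ≠ b' → b * b' ≠ 0 := by decide

lemma vx_snd (v : {x : F₁ × ZMod 4 // x ≠ 0 ∧ ∃ y ≠ 0, x * y = 0})
    (h : v.1.1 ≠ 0) : v.1.2 = 0 ∨ v.1.2 = 2 := by
  obtain ⟨⟨a, b⟩, hne, ⟨c, d⟩, hy0, hxy⟩ := v
  simp only at h
  rw [Prod.mk_mul_mk, Prod.mk_eq_zero] at hxy
  have hc : c = 0 := by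
    rcases mul_eq_zero.mp hxy.1 with h' | h'
    · exact absurd h' h
    · exact h'
  have hd : d ≠ 0 := fun hd => hy0 (by rw [hc, hd]; rfl)
  exact zmod4_aux b d hd hxy.2

lemma vx_mem (a : F₁) (ha : a ≠ 0) (b : ZMod 4) (hb : b = 0 ∨ b = 2) :
    ((a, b) : F₁ × ZMod 4) ≠ 0 ∧ ∃ y ≠ 0, ((a, b) : F₁ × ZMod 4) * y = 0 := by
  refine ⟨fun h => ha (Prod.mk_eq_zero.mp h).1, ⟨(0, 2), ?_, ?_⟩⟩
  · intro h
    exact (by decide : (2 : ZMod 4) ≠ 0) (Prod.mk_eq_zero.mp h).2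
  · rw [Prod.mk_mul_mk, Prod.mk_eq_zero]
    exact ⟨mul_zero a, by rcases hb with h | h <;> rw [h] <;> decide⟩

lemma vx0_mem (b : ZMod 4) (hb : b ≠ 0) :
    (((0 : F₁), b) : F₁ × ZMod 4) ≠ 0 ∧ ∃ y ≠ 0, (((0 : F₁), b) : F₁ × ZMod 4) * y = 0 := by
  refine ⟨fun h => hb (Prod.mk_eq_zero.mp h).2, ⟨(1, 0), ?_, ?_⟩⟩
  · intro h
    exact one_ne_zero (α := F₁) (Prod.mk_eq_zero.mp h).1
  · rw [Prod.mk_mul_mk, Prod.mk_eq_zero]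
    exact ⟨zero_mul 1, mul_zero b⟩

end Aux

theorem stmt1 (F₁ : Type*) [Field F₁] [Finite F₁]
    (m : ℕ) (hm : Nat.card {x : F₁ // x ≠ 0} = m) :
    indepNum (zdvGraph (F₁ × ZMod 4)) = max (2 * m) 3 := by
  classical
  have _i : Fintype F₁ := Fintype.ofFinite F₁
  have hm1 : 1 ≤ m := by
    rw [← hm]
    exact Nat.one_le_iff_ne_zero.mpr (Nat.card_ne_zero.mpr ⟨⟨⟨1, one_ne_zero⟩⟩, inferInstance⟩)
  set P : F₁ × ZMod 4 → Prop := fun x => x ≠ 0 ∧ ∃ y ≠ 0, x * y = 0 with hPdef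
  set U : Finset F₁ := Finset.univ.filter (fun a => a ≠ 0) with hUdef
  have hUmem : ∀ a : F₁, a ∈ U ↔ a ≠ 0 := by intro a; simp [hUdef]
  have hU : U.card = m := by
    rw [← hm, Nat.card_eq_fintype_card, Fintype.card_subtype]
  unfold indepNum
  set SS := {n | ∃ s : Finset {x : F₁ × ZMod 4 // x ≠ 0 ∧ ∃ y ≠ 0, x * y = 0},
      (s : Set _).Pairwise (fun a b => ¬ (zdvGraph (F₁ × ZMod 4)).Adj a b) ∧ s.card = n}
    with hSS
  have hbdd : BddAbove SS := by
    refine ⟨Fintype.card {x : F₁ × ZMod 4 // x ≠ 0 ∧ ∃ y ≠ 0, x * y = 0}, ?_⟩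
    rintro n ⟨s, -, rfl⟩
    exact (Finset.card_le_univ s).trans (le_of_eq (Finset.card_univ))
  have h2m : 2 * m ∈ SS := by
    refine ⟨(U ×ˢ ({0, 2} : Finset (ZMod 4))).subtype P, ?_, ?_⟩
    · rintro ⟨x, hx⟩ hxs ⟨y, hy⟩ hys hne (⟨-, hmul⟩ : _ ∧ _)
      simp only [Finset.mem_coe, Finset.mem_subtype, Finset.mem_product] at hxs hys
      have hx1 : x.1 ≠ 0 := (hUmem _).mp hxs.1
      have hy1 : y.1 ≠ 0 := (hUmem _).mp hys.1
      have h0 : (x * y).1 = 0 := by rw [hmul]; rfl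
      rw [Prod.fst_mul] at h0
      exact mul_ne_zero hx1 hy1 h0
    · rw [Finset.card_subtype, Finset.filter_true_of_mem, Finset.card_product, hU,
        (by decide : ({0, 2} : Finset (ZMod 4)).card = 2), Nat.mul_comm]
      rintro ⟨a, b⟩ hab
      rw [Finset.mem_product] at hab
      exact vx_mem a ((hUmem a).mp hab.1) b (by simpa using hab.2)
  have h3 : 3 ∈ SS := by
    refine ⟨({((0:F₁), (1:ZMod 4)), (0, 2), (0, 3)} : Finset (F₁ × ZMod 4)).subtype P, ?_, ?_⟩
    · rintro ⟨x, hx⟩ hxs ⟨y, hy⟩ hys hne (⟨-, hmul⟩ : _ ∧ _)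
      simp only [Finset.mem_coe, Finset.mem_subtype, Finset.mem_insert,
        Finset.mem_singleton] at hxs hys
      have hxy : x ≠ y := fun h => hne (Subtype.ext h)
      rcases hxs with rfl | rfl | rfl <;> rcases hys with rfl | rfl | rfl <;>
        first
          | exact hxy rfl
          | · rw [Prod.mk_mul_mk, Prod.mk_eq_zero] at hmul
              exact absurd hmul.2 (by decide)
    · rw [Finset.card_subtype, Finset.filter_true_of_mem]
      · rw [Finset.card_insert_of_notMem, Finset.card_insert_of_notMem,
          Finset.card_singleton]
        · simp only [Finset.mem_singleton, Prod.mk.injEq, not_and]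
          intro _; decide
        · simp only [Finset.mem_insert, Finset.mem_singleton, Prod.mk.injEq, not_or, not_and]
          exact ⟨fun _ => by decide, fun _ => by decide⟩
      · intro x hx
        simp only [Finset.mem_insert, Finset.mem_singleton] at hx
        rcases hx with rfl | rfl | rfl
        · exact vx0_mem 1 (by decide)
        · exact vx0_mem 2 (by decide)
        · exact vx0_mem 3 (by decide)
  have hub : ∀ n ∈ SS, n ≤ max (2 * m) 3 := by
    rintro n ⟨s, hpair, rfl⟩
    by_cases h1 : ∃ v ∈ s, (v : {x : F₁ × ZMod 4 // P x}).1.1 ≠ 0 ∧ v.1.2 = 0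
    · obtain ⟨v, hv, hv1, hv2⟩ := h1
      have hall : ∀ w ∈ s, (w : {x : F₁ × ZMod 4 // P x}).1.1 ≠ 0 := by
        intro w hw
        by_contra hw1

        have hne : v ≠ w := fun h => hv1 (by rw [h]; exact hw1)
        have hmul : (v : F₁ × ZMod 4) * w = 0 := by
          rw [Prod.ext_iff, Prod.fst_mul, Prod.snd_mul]
          constructor <;> simp [hw1, hv2]
        exact hpair hv hw hne (show _ ∧ _ from ⟨hne, hmul⟩)
      have hcard : s.card ≤ (U ×ˢ ({0, 2} : Finset (ZMod 4))).card := by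
        apply Finset.card_le_card_of_injOn Subtype.val
        · intro w hw
          rw [Finset.mem_coe, Finset.mem_product]
          refine ⟨(hUmem _).mpr (hall w hw), ?_⟩
          rcases vx_snd w (hall w hw) with h | h <;> simp [h]
        · intro a _ b _ hab
          exact Subtype.ext hab
      rw [Finset.card_product, hU, (by decide : ({0, 2} : Finset (ZMod 4)).card = 2)] at hcard
      exact le_trans hcard (le_trans (le_of_eq (Nat.mul_comm m 2)) (le_max_left _ _))
    · by_cases h2 : ∃ v ∈ s, (v : {x : F₁ × ZMod 4 // P x}).1 = ((0:F₁), (2:ZMod 4))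
      · obtain ⟨v, hv, hveq⟩ := h2
        have hv1 : (v : F₁ × ZMod 4).1 = 0 := by rw [hveq]
        have hv2 : (v : F₁ × ZMod 4).2 = 2 := by rw [hveq]
        have hall : ∀ w ∈ s, (w : {x : F₁ × ZMod 4 // P x}).1.1 = 0 := by
          intro w hw
          by_contra hw1
          have hw2 : (w : F₁ × ZMod 4).2 = 2 := by
            rcases vx_snd w hw1 with h | h
            · exact absurd ⟨w, hw, hw1, h⟩ h1
            · exact h
          have hne : v ≠ w := fun h => hw1 (by rw [← h]; exact hv1)
          have hmul : (v : F₁ × ZMod 4) * w = 0 := by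
            rw [Prod.ext_iff, Prod.fst_mul, Prod.snd_mul, hv1, hv2, hw2]
            exact ⟨zero_mul _, show (2 : ZMod 4) * 2 = 0 by decide⟩
          exact hpair hv hw hne (show _ ∧ _ from ⟨hne, hmul⟩)
        have hcard : s.card ≤ ({1, 2, 3} : Finset (ZMod 4)).card := by
          apply Finset.card_le_card_of_injOn (fun w => (Subtype.val w).2)
          · intro w hw
            refine zmod4_ne_zero _ (fun h => w.2.1 ?_)
            exact Prod.ext (hall w hw) h
          · intro a ha b hb hab
            exact Subtype.ext (Prod.ext ((hall a ha).trans (hall b hb).symm) hab)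
        rw [(by decide : ({1, 2, 3} : Finset (ZMod 4)).card = 3)] at hcard
        exact le_trans hcard (le_max_right _ _)
      · have hcard : s.card ≤ (U ×ˢ ({2} : Finset (ZMod 4)) ∪
            ({(0:F₁)} : Finset F₁) ×ˢ ({1, 3} : Finset (ZMod 4))).card := by
          apply Finset.card_le_card_of_injOn Subtype.val
          · intro w hw
            rw [Finset.mem_coe, Finset.mem_union, Finset.mem_product, Finset.mem_product]
            by_cases hw1 : (w : F₁ × ZMod 4).1 = 0
            · right
              refine ⟨Finset.mem_singleton.mpr hw1, ?_⟩
              refine zmod4_ne02 _ (fun h => w.2.1 (Prod.ext hw1 h))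
                (fun h => h2 ⟨w, hw, Prod.ext hw1 h⟩)
            · left
              refine ⟨(hUmem _).mpr hw1, Finset.mem_singleton.mpr ?_⟩
              rcases vx_snd w hw1 with h | h
              · exact absurd ⟨w, hw, hw1, h⟩ h1
              · exact h
          · intro a _ b _ hab
            exact Subtype.ext hab
        have hle : (U ×ˢ ({2} : Finset (ZMod 4)) ∪
            ({(0:F₁)} : Finset F₁) ×ˢ ({1, 3} : Finset (ZMod 4))).card ≤ m + 2 := by
          refine (Finset.card_union_le _ _).trans ?_
          rw [Finset.card_product, Finset.card_product, hU, Finset.card_singleton,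
            Finset.card_singleton, (by decide : ({1, 3} : Finset (ZMod 4)).card = 2)]
          omega
        have := hcard.trans hle
        omega
  apply le_antisymm
  · exact csSup_le (Set.nonempty_of_mem h3) hub
  · exact max_le (le_csSup hbdd h2m) (le_csSup hbdd h3)
end

section
/- Let R be a finite commutative ring with identity 1 ≠ 0 which is not an integral domain. If the zero-divisor graph Γ(R) is a regular graph of degree r (every vertex has exactly r neighbours), then the independence number α(Γ(R)) equals either 1 or r. -/
section Aux

variable {R : Type*} [CommRing R] [Finite R]

/-- annihilator as a set -/
def annS (a : R) : Set R := {z | a * z = 0}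

lemma mem_annS {a z : R} : z ∈ annS a ↔ a * z = 0 := Iff.rfl

lemma annS_double {a b x : R} (hsub : ∀ z, a * z = 0 → b * z = 0)
    (hx : b * x = 0) (hax : a * x ≠ 0) :
    2 * (annS a).ncard ≤ (annS b).ncard := by
  have hsub1 : annS a ⊆ annS b := fun z hz => hsub z hz
  have hsub2 : (x + ·) '' annS a ⊆ annS b := by
    rintro _ ⟨z, hz, rfl⟩
    show b * (x + z) = 0
    rw [mul_add, hx, hsub z hz, add_zero]
  have hdisj : Disjoint (annS a) ((x + ·) '' annS a) := by
    rw [Set.disjoint_left]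
    rintro w hw ⟨z, hz, rfl⟩
    apply hax
    have h1 : a * (x + z) = 0 := hw
    have h2 : a * z = 0 := hz
    rw [mul_add, h2, add_zero] at h1
    exact h1
  have himg : ((x + ·) '' annS a).ncard = (annS a).ncard :=
    Set.ncard_image_of_injective _ (add_right_injective x)
  have hun := Set.ncard_union_eq hdisj (Set.toFinite _) (Set.toFinite _)
  have hle : (annS a ∪ (x + ·) '' annS a).ncard ≤ (annS b).ncard :=
    Set.ncard_le_ncard (Set.union_subset hsub1 hsub2) (Set.toFinite _)
  omega

end Aux

section Aux2
set_option linter.unusedSectionVars false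

variable {R : Type*} [CommRing R] [Finite R]

lemma neigh_card (v : {x : R // x ≠ 0 ∧ ∃ y ≠ 0, x * y = 0}) :
    ((zdvGraph R).neighborSet v).ncard = (annS v.1 \ {0, v.1}).ncard := by
  rw [← Set.ncard_image_of_injective ((zdvGraph R).neighborSet v) Subtype.val_injective]
  congr 1
  ext z
  constructor
  · rintro ⟨w, hw, rfl⟩
    obtain ⟨hne, h0⟩ : v ≠ w ∧ (v : R) * w = 0 := hw
    refine ⟨h0, ?_⟩
    rintro (h | h)
    · exact w.2.1 h
    · exact hne (Subtype.ext h.symm)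
  · rintro ⟨hz, hz2⟩
    simp only [Set.mem_insert_iff, Set.mem_singleton_iff, not_or] at hz2
    refine ⟨⟨z, hz2.1, v.1, v.2.1, by rw [mul_comm]; exact hz⟩, ⟨?_, hz⟩, rfl⟩
    intro h
    exact hz2.2 (congrArg Subtype.val h).symm

lemma annS_card_sq_ne {a : R} (hsq : a * a ≠ 0) :
    (annS a).ncard = (annS a \ {0, a}).ncard + 1 := by
  have h1 : annS a = insert 0 (annS a \ {0, a}) := by
    ext z
    simp only [Set.mem_insert_iff, Set.mem_diff, Set.mem_singleton_iff, not_or, mem_annS]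
    constructor
    · intro hz
      by_cases h0 : z = 0
      · exact Or.inl h0
      · refine Or.inr ⟨hz, h0, ?_⟩
        rintro rfl; exact hsq hz
    · rintro (rfl | ⟨hz, _⟩)
      · exact mul_zero a
      · exact hz
  conv_lhs => rw [h1]
  rw [Set.ncard_insert_of_notMem (by simp) (Set.toFinite _)]

lemma annS_card_sq_eq {a : R} (ha : a ≠ 0) (hsq : a * a = 0) :
    (annS a).ncard = (annS a \ {0, a}).ncard + 2 := by
  have h1 : annS a = insert 0 (insert a (annS a \ {0, a})) := by
    ext z
    simp only [Set.mem_insert_iff, Set.mem_diff, Set.mem_singleton_iff, not_or, mem_annS]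
    constructor
    · intro hz
      by_cases h0 : z = 0
      · exact Or.inl h0
      by_cases hza : z = a
      · exact Or.inr (Or.inl hza)
      · exact Or.inr (Or.inr ⟨hz, h0, hza⟩)
    · rintro (rfl | rfl | ⟨hz, _⟩)
      · exact mul_zero a
      · exact hsq
      · exact hz
  conv_lhs => rw [h1]
  rw [Set.ncard_insert_of_notMem (by simp [ha.symm]) (Set.toFinite _),
    Set.ncard_insert_of_notMem (by simp) (Set.toFinite _)]

end Aux2

theorem stmt4 (R : Type*) [CommRing R] [Nontrivial R] [Finite R]
    (hnd : ¬ IsDomain R) (r : ℕ)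
    (hreg : ∀ v, ((zdvGraph R).neighborSet v).ncard = r) :
    indepNum (zdvGraph R) = 1 ∨ indepNum (zdvGraph R) = r := by
  classical
  set V := {x : R // x ≠ 0 ∧ ∃ y ≠ 0, x * y = 0} with hV
  have hdeg : ∀ v : V, (annS v.1 \ {0, v.1}).ncard = r := by
    intro v; rw [← neigh_card v]; exact hreg v
  have hcard_ne : ∀ v : V, v.1 * v.1 ≠ 0 → (annS v.1).ncard = r + 1 := by
    intro v h; rw [annS_card_sq_ne h, hdeg v]
  have hcard_eq : ∀ v : V, v.1 * v.1 = 0 → (annS v.1).ncard = r + 2 := by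
    intro v h; rw [annS_card_sq_eq v.2.1 h, hdeg v]
  have hcard_le : ∀ v : V, (annS v.1).ncard ≤ r + 2 := by
    intro v
    by_cases h : v.1 * v.1 = 0
    · exact le_of_eq (hcard_eq v h)
    · rw [hcard_ne v h]; omega
  have hex : ∃ a b : R, a ≠ 0 ∧ b ≠ 0 ∧ a * b = 0 := by
    by_contra h
    push_neg at h
    have : NoZeroDivisors R := ⟨fun {a b} hab => by
      by_cases ha : a = 0
      · exact Or.inl ha
      · by_cases hb : b = 0
        · exact Or.inr hb
        · exact absurd hab (h a b ha hb)⟩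
    exact hnd (NoZeroDivisors.to_isDomain R)
  obtain ⟨a0, b0, ha0, hb0, hab0⟩ := hex
  have v0 : V := ⟨a0, ha0, b0, hb0, hab0⟩
  by_cases hcomp : ∀ v w : V, v ≠ w → v.1 * w.1 = 0
  · -- complete graph: independence number 1
    left
    unfold indepNum
    have h1P : 1 ∈ {n | ∃ s : Finset V, (s : Set V).Pairwise
        (fun a b => ¬ (zdvGraph R).Adj a b) ∧ s.card = n} :=
      ⟨{v0}, by simp, Finset.card_singleton v0⟩
    have hub : ∀ n ∈ {n | ∃ s : Finset V, (s : Set V).Pairwise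
        (fun a b => ¬ (zdvGraph R).Adj a b) ∧ s.card = n}, n ≤ 1 := by
      rintro n ⟨s, hs, rfl⟩
      by_contra hn
      push_neg at hn
      obtain ⟨u, hu, w, hw, huw⟩ := Finset.one_lt_card.mp hn
      exact hs hu hw huw ⟨huw, hcomp u w huw⟩
    exact le_antisymm (csSup_le ⟨1, h1P⟩ hub) (le_csSup ⟨1, hub⟩ h1P)
  · right
    push_neg at hcomp
    -- Step 1: there is a vertex with nonzero square
    have hsqx : ∃ x : V, x.1 * x.1 ≠ 0 := by
      by_contra h
      push_neg at h
      obtain ⟨v, w, hvw, hmul⟩ := hcomp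
      have ha2 : v.1 * v.1 = 0 := h v
      have hb2 : w.1 * w.1 = 0 := h w
      have hca : (v.1 * w.1) * v.1 = 0 := by
        have h1 : (v.1 * w.1) * v.1 = (v.1 * v.1) * w.1 := by ring
        rw [h1, ha2, zero_mul]
      have hd := annS_double (a := v.1) (b := v.1 * w.1)
        (fun z hz => by
          have h1 : (v.1 * w.1) * z = w.1 * (v.1 * z) := by ring
          rw [h1, hz, mul_zero])
        (show (v.1 * w.1) * w.1 = 0 by
          have h1 : (v.1 * w.1) * w.1 = v.1 * (w.1 * w.1) := by ring
          rw [h1, hb2, mul_zero])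
        hmul
      have h1 : (annS v.1).ncard = r + 2 := hcard_eq v ha2
      have h2 : (annS (v.1 * w.1)).ncard ≤ r + 2 :=
        hcard_le ⟨v.1 * w.1, hmul, v.1, v.2.1, hca⟩
      omega
    obtain ⟨x, hx2⟩ := hsqx
    -- Step 2: r ≥ 1
    have hr1 : 1 ≤ r := by
      obtain ⟨y, hy0, hxy⟩ := x.2.2
      have hmem : y ∈ annS x.1 \ {0, x.1} := by
        refine ⟨hxy, ?_⟩
        simp only [Set.mem_insert_iff, Set.mem_singleton_iff, not_or]
        exact ⟨hy0, by rintro rfl; exact hx2 hxy⟩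
      have hpos : 0 < (annS x.1 \ {0, x.1}).ncard :=
        (Set.ncard_pos (Set.toFinite _)).mpr ⟨y, hmem⟩
      rw [hdeg x] at hpos
      omega
    -- Step 3: x is not nilpotent
    have hnonnil : ∀ k, x.1 ^ k ≠ 0 := by
      intro k hk
      have hexk : ∃ n, x.1 ^ n = 0 := ⟨k, hk⟩
      set k0 := Nat.find hexk with hk0
      have hk0z : x.1 ^ k0 = 0 := Nat.find_spec hexk
      have hk03 : 3 ≤ k0 := by
        by_contra h3
        interval_cases k0
        · simp at hk0z
        · rw [pow_one] at hk0z; exact x.2.1 hk0z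
        · rw [pow_two] at hk0z; exact hx2 hk0z
      obtain ⟨m, hm⟩ : ∃ m, k0 = m + 3 := ⟨k0 - 3, by omega⟩
      set y := x.1 ^ (m + 2) with hy
      have hy0 : y ≠ 0 := Nat.find_min hexk (by omega)
      have hyx : y * x.1 = 0 := by rw [hy, ← pow_succ, ← hm, hk0z]
      have hyy : y * y = 0 := by
        rw [hy, ← pow_add]
        have h1 : m + 2 + (m + 2) = (m + 3) + (m + 1) := by ring
        rw [h1, pow_add, ← hm, hk0z, zero_mul]
      have hd := annS_double (a := x.1) (b := y)
        (fun z hz => by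
          have h1 : y * z = x.1 ^ (m + 1) * (x.1 * z) := by
            rw [hy, ← mul_assoc, ← pow_succ]
          rw [h1, hz, mul_zero])
        (show y * x.1 ^ (m + 1) = 0 by
          rw [hy, ← pow_add]
          have h1 : m + 2 + (m + 1) = (m + 3) + m := by ring
          rw [h1, pow_add, ← hm, hk0z, zero_mul])
        (show x.1 * x.1 ^ (m + 1) ≠ 0 by
          rw [← pow_succ']
          exact hy0)
      have h1 : (annS x.1).ncard = r + 1 := hcard_ne x hx2
      have h2 : (annS y).ncard = r + 2 := hcard_eq ⟨y, hy0, x.1, x.2.1, hyx⟩ hyy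
      omega
    -- Step 4: an idempotent power
    have hidem : ∃ m, 1 ≤ m ∧ x.1 ^ m * x.1 ^ m = x.1 ^ m := by
      obtain ⟨i, j, hij, hXij⟩ := Finite.exists_ne_map_eq_of_infinite (fun n : ℕ => x.1 ^ n)
      wlog hlt : i < j generalizing i j
      · exact this j i hij.symm hXij.symm (by omega)
      obtain ⟨d, hd1, hjd⟩ : ∃ d, 1 ≤ d ∧ j = i + d := ⟨j - i, by omega, by omega⟩
      have hbase : ∀ n, x.1 ^ (i + n + d) = x.1 ^ (i + n) := by
        intro n
        calc x.1 ^ (i + n + d) = x.1 ^ n * x.1 ^ j := by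
              rw [← pow_add]; congr 1; omega
          _ = x.1 ^ n * x.1 ^ i := by rw [← hXij]
          _ = x.1 ^ (i + n) := by rw [← pow_add]; congr 1; omega
      have hper : ∀ t n, x.1 ^ (i + n + t * d) = x.1 ^ (i + n) := by
        intro t
        induction t with
        | zero => simp
        | succ t ih =>
          intro n
          have h1 : i + n + (t + 1) * d = i + (n + t * d) + d := by ring
          have h2 : i + (n + t * d) = i + n + t * d := by ring
          rw [h1, hbase (n + t * d), h2, ih n]
      have hile : i + 1 ≤ (i + 1) * d := Nat.le_mul_of_pos_right (i + 1) (by omega)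
      obtain ⟨n, hn⟩ : ∃ n, (i + 1) * d = i + n := ⟨(i + 1) * d - i, by omega⟩
      refine ⟨(i + 1) * d, by omega, ?_⟩
      rw [← pow_add]
      have h1 : (i + 1) * d + (i + 1) * d = i + n + (i + 1) * d := by omega
      rw [h1, hper (i + 1) n, ← hn]
    obtain ⟨m, hm1, hee⟩ := hidem
    set e := x.1 ^ m with he
    set f := 1 - e with hf
    have he0 : e ≠ 0 := hnonnil m
    have hef : e * f = 0 := by rw [hf, mul_sub, mul_one, hee, sub_self]
    have he1 : e ≠ 1 := by
      intro h1
      obtain ⟨y, hy0, hxy⟩ := x.2.2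
      apply hy0
      obtain ⟨m', rfl⟩ : ∃ m', m = m' + 1 := ⟨m - 1, by omega⟩
      calc y = 1 * y := (one_mul y).symm
        _ = e * y := by rw [h1]
        _ = x.1 ^ m' * (x.1 * y) := by rw [he, pow_succ, mul_assoc]
        _ = 0 := by rw [hxy, mul_zero]
    have hf0 : f ≠ 0 := sub_ne_zero.mpr (Ne.symm he1)
    have hfe : f * e = 0 := by rw [mul_comm]; exact hef
    have hef1 : e + f = 1 := by rw [hf]; ring
    -- the key "no zero divisors within a part" lemma
    have key : ∀ g h' : R, g * h' = 0 → g + h' = 1 → g ≠ 0 → h' ≠ 0 →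
        ∀ u w : R, h' * u = 0 → h' * w = 0 → u ≠ 0 → w ≠ 0 → u * w ≠ 0 := by
      intro g h' hgh hsum hg hh u w hu hw hu0 hw0 huw
      have hgg : g * g = g := by
        calc g * g = g * g + g * h' := by rw [hgh, add_zero]
          _ = g * (g + h') := (mul_add g g h').symm
          _ = g := by rw [hsum, mul_one]
      have hcardg : (annS g).ncard = r + 1 :=
        hcard_ne ⟨g, hg, h', hh, hgh⟩ (by simpa [hgg] using hg)
      have hgu : g * u = u := by
        calc g * u = g * u + h' * u := by rw [hu, add_zero]
          _ = (g + h') * u := (add_mul g h' u).symm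
          _ = u := by rw [hsum, one_mul]
      have hgw : g * w = w := by
        calc g * w = g * w + h' * w := by rw [hw, add_zero]
          _ = (g + h') * w := (add_mul g h' w).symm
          _ = w := by rw [hsum, one_mul]
      have hd := annS_double (a := g) (b := u)
        (fun z hz => by
          have h1 : (g * u) * z = u * (g * z) := by ring
          rw [← hgu, h1, hz, mul_zero])
        huw
        (by rw [hgw]; exact hw0)
      have h2 : (annS u).ncard ≤ r + 2 := hcard_le ⟨u, hu0, w, hw0, huw⟩
      omega
    have keyE := key e f hef hef1 he0 hf0
    have keyF := key f e hfe (by rw [add_comm]; exact hef1) hf0 he0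
    -- every vertex is in one of the two parts
    have hpart : ∀ v : V, f * v.1 = 0 ∨ e * v.1 = 0 := by
      intro v
      by_contra h
      push_neg at h
      obtain ⟨hfv, hev⟩ := h
      obtain ⟨w, hw0, hvw⟩ := v.2.2
      by_cases hew : e * w = 0
      · have hfw : f * w ≠ 0 := by
          intro h'
          apply hw0
          calc w = (e + f) * w := by rw [hef1, one_mul]
            _ = 0 := by rw [add_mul, hew, h', add_zero]
        refine keyF (f * v.1) (f * w) ?_ ?_ hfv hfw ?_
        · have : e * (f * v.1) = (e * f) * v.1 := by ring
          rw [this, hef, zero_mul]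
        · have : e * (f * w) = (e * f) * w := by ring
          rw [this, hef, zero_mul]
        · have : (f * v.1) * (f * w) = (f * f) * (v.1 * w) := by ring
          rw [this, hvw, mul_zero]
      · refine keyE (e * v.1) (e * w) ?_ ?_ hev hew ?_
        · have : f * (e * v.1) = (e * f) * v.1 := by ring
          rw [this, hef, zero_mul]
        · have : f * (e * w) = (e * f) * w := by ring
          rw [this, hef, zero_mul]
        · have : (e * v.1) * (e * w) = (e * e) * (v.1 * w) := by ring
          rw [this, hvw, mul_zero]
    -- part cardinalities
    have hcardPart : ∀ g h' : R, g * h' = 0 → g + h' = 1 → g ≠ 0 → h' ≠ 0 →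
        ({z : V | h' * z.1 = 0} : Set V).ncard = r := by
      intro g h' hgh hsum hg hh
      have hhh : h' * h' = h' := by
        calc h' * h' = g * h' + h' * h' := by rw [hgh, zero_add]
          _ = (g + h') * h' := (add_mul g h' h').symm
          _ = h' := by rw [hsum, one_mul]
      have hcardh : (annS h').ncard = r + 1 :=
        hcard_ne ⟨h', hh, g, hg, by rw [mul_comm]; exact hgh⟩ (by simpa [hhh] using hh)
      have hval : Subtype.val '' ({z : V | h' * z.1 = 0} : Set V) = annS h' \ {0} := by
        ext z
        constructor
        · rintro ⟨w, hw, rfl⟩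
          exact ⟨hw, w.2.1⟩
        · rintro ⟨hz, hz0⟩
          exact ⟨⟨z, hz0, h', hh, by rw [mul_comm]; exact hz⟩, hz, rfl⟩
      have h1 : ({z : V | h' * z.1 = 0} : Set V).ncard = (annS h' \ {0}).ncard := by
        rw [← hval, Set.ncard_image_of_injective _ Subtype.val_injective]
      have h2 : annS h' = insert 0 (annS h' \ {0}) := by
        ext z
        simp only [Set.mem_insert_iff, Set.mem_diff, Set.mem_singleton_iff, mem_annS]
        constructor
        · intro hz
          by_cases h0 : z = 0
          · exact Or.inl h0
          · exact Or.inr ⟨hz, h0⟩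
        · rintro (rfl | ⟨hz, _⟩)
          · exact mul_zero h'
          · exact hz
      have h3 : (annS h').ncard = (annS h' \ {0}).ncard + 1 := by
        conv_lhs => rw [h2]
        rw [Set.ncard_insert_of_notMem (by simp) (Set.toFinite _)]
      omega
    have hcardA := hcardPart e f hef hef1 he0 hf0
    have hcardB := hcardPart f e hfe (by rw [add_comm]; exact hef1) hf0 he0
    -- now compute the independence number
    unfold indepNum
    set P := {n | ∃ s : Finset V, (s : Set V).Pairwise
        (fun a b => ¬ (zdvGraph R).Adj a b) ∧ s.card = n} with hPdef
    have hmemA : r ∈ P := by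
      refine ⟨(Set.toFinite ({z : V | f * z.1 = 0} : Set V)).toFinset, ?_, ?_⟩
      · intro u hu w hw huw hadj
        rw [Set.Finite.coe_toFinset] at hu hw
        exact keyE u.1 w.1 hu hw u.2.1 w.2.1 hadj.2
      · rw [← Set.ncard_eq_toFinset_card _ (Set.toFinite _)]
        exact hcardA
    have hub : ∀ n ∈ P, n ≤ r := by
      rintro n ⟨s, hs, rfl⟩
      rcases s.eq_empty_or_nonempty with rfl | ⟨u, hu⟩
      · simp
      have hgen : ∀ g h' : R, g * h' = 0 → g + h' = 1 → h' * u.1 = 0 →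
          (∀ z : V, h' * z.1 = 0 ∨ g * z.1 = 0) →
          s.card ≤ ({z : V | h' * z.1 = 0} : Set V).ncard := by
        intro g h' hgh hsum hu' hpart'
        have hsubA : (↑s : Set V) ⊆ {z : V | h' * z.1 = 0} := by
          intro z hz
          rcases hpart' z with h1 | h2
          · exact h1
          · exfalso
            have hzu : z ≠ u := by
              rintro rfl
              apply z.2.1
              calc z.1 = (g + h') * z.1 := by rw [hsum, one_mul]
                _ = 0 := by rw [add_mul, h2, hu', add_zero]
            have hu1 : g * u.1 = u.1 := by
              calc g * u.1 = g * u.1 + h' * u.1 := by rw [hu', add_zero]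
                _ = (g + h') * u.1 := (add_mul g h' u.1).symm
                _ = u.1 := by rw [hsum, one_mul]
            have hz1 : h' * z.1 = z.1 := by
              calc h' * z.1 = g * z.1 + h' * z.1 := by rw [h2, zero_add]
                _ = (g + h') * z.1 := (add_mul g h' z.1).symm
                _ = z.1 := by rw [hsum, one_mul]
            have hmul0 : u.1 * z.1 = 0 := by
              calc u.1 * z.1 = (g * u.1) * (h' * z.1) := by rw [hu1, hz1]
                _ = (g * h') * (u.1 * z.1) := by ring
                _ = 0 := by rw [hgh, zero_mul]
            exact hs hu hz (fun hh => hzu hh.symm)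
              ⟨fun hh => hzu hh.symm, hmul0⟩
        calc s.card = (↑s : Set V).ncard := (Set.ncard_coe_finset s).symm
          _ ≤ _ := Set.ncard_le_ncard hsubA (Set.toFinite _)
      rcases hpart u with h1 | h2
      · exact (hgen e f hef hef1 h1 hpart).trans_eq hcardA
      · have hpart' : ∀ z : V, e * z.1 = 0 ∨ f * z.1 = 0 := fun z => (hpart z).symm
        exact (hgen f e hfe (by rw [add_comm]; exact hef1) h2 hpart').trans_eq hcardB
    exact le_antisymm (csSup_le ⟨r, hmemA⟩ hub) (le_csSup ⟨r, hub⟩ hmemA)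
end

section
/- Let R be a finite commutative ring with identity 1 ≠ 0 which is decomposable, i.e., R is isomorphic to a product R1 × R2 of two nonzero rings. If the zero-divisor graph Γ(R) is Hamiltonian (contains a Hamiltonian cycle), then α(Γ(R)) = |Z*(R)| / 2. -/
universe u

/-- A ring is decomposable if it is isomorphic to a product of two nonzero rings. -/
def IsDecomposable (R : Type u) [CommRing R] : Prop :=
  ∃ (R₁ R₂ : Type u) (i₁ : CommRing R₁) (i₂ : CommRing R₂),
    Nontrivial R₁ ∧ Nontrivial R₂ ∧
      (letI := i₁; letI := i₂; Nonempty (R ≃+* R₁ × R₂))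

open Function List


lemma list_succ {V : Type*} [DecidableEq V] (Adj : V → V → Prop) (t : List V)
    (ht : t ≠ []) (hnd : t.Nodup) (hall : ∀ v, v ∈ t) (hchain : List.Chain' Adj t)
    (hlast : Adj (t.getLast ht) (t.head ht)) :
    ∃ f : V → V, Function.Injective f ∧ ∀ x, Adj x (f x) := by
  have hL : 0 < t.length := List.length_pos_iff.mpr ht
  refine ⟨fun x => t.get ⟨(t.idxOf x + 1) % t.length, Nat.mod_lt _ hL⟩, ?_, ?_⟩
  · intro x y hxy
    have hx : t.idxOf x < t.length := List.idxOf_lt_length_iff.mpr (hall x)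
    have hy : t.idxOf y < t.length := List.idxOf_lt_length_iff.mpr (hall y)
    have h1 : ((t.idxOf x + 1) % t.length : ℕ) = (t.idxOf y + 1) % t.length :=
      congrArg Fin.val ((hnd.get_inj_iff).mp hxy)
    have h2 : t.idxOf x = t.idxOf y := by
      rcases Nat.lt_or_ge (t.idxOf x + 1) t.length with h | h <;>
      rcases Nat.lt_or_ge (t.idxOf y + 1) t.length with h' | h'
      · rwa [Nat.mod_eq_of_lt h, Nat.mod_eq_of_lt h', Nat.add_right_cancel_iff] at h1
      · have hy' : t.idxOf y + 1 = t.length := by omega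
        rw [Nat.mod_eq_of_lt h, hy', Nat.mod_self] at h1; omega
      · have hx' : t.idxOf x + 1 = t.length := by omega
        rw [Nat.mod_eq_of_lt h', hx', Nat.mod_self] at h1; omega
      · omega
    calc x = t.get ⟨t.idxOf x, hx⟩ := (List.idxOf_get hx).symm
      _ = t.get ⟨t.idxOf y, hy⟩ := by congr 1; exact Fin.ext h2
      _ = y := List.idxOf_get hy
  · intro x
    have hx : t.idxOf x < t.length := List.idxOf_lt_length_iff.mpr (hall x)
    have hxg : t.get ⟨t.idxOf x, hx⟩ = x := List.idxOf_get hx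
    rcases Nat.lt_or_ge (t.idxOf x + 1) t.length with h | h
    · have heq : (t.idxOf x + 1) % t.length = t.idxOf x + 1 := Nat.mod_eq_of_lt h
      have hadj := List.isChain_iff_getElem.mp hchain (t.idxOf x) (by omega)
      rw [show t[t.idxOf x] = x from hxg] at hadj
      convert hadj using 2
      show t.get ⟨_, Nat.mod_lt _ hL⟩ = t.get ⟨t.idxOf x + 1, h⟩
      exact congrArg t.get (Fin.ext heq)
    · have hx' : t.idxOf x + 1 = t.length := by omega
      have heq : (t.idxOf x + 1) % t.length = 0 := by rw [hx']; exact Nat.mod_self _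
      have hxl : x = t.getLast ht := by
        rw [← hxg, List.getLast_eq_getElem]
        simp only [List.get_eq_getElem]
        congr 1
        omega
      have hhd : t.get ⟨(t.idxOf x + 1) % t.length, Nat.mod_lt _ hL⟩ = t.head ht := by
        rw [← List.get_mk_zero hL]
        congr 1
        exact Fin.ext heq
      show Adj x (t.get ⟨(t.idxOf x + 1) % t.length, Nat.mod_lt _ hL⟩)
      rw [hhd]
      nth_rewrite 1 [hxl]
      exact hlast

lemma ham_succ {V : Type*} [Fintype V] [DecidableEq V] {G : SimpleGraph V}
    (hham : G.IsHamiltonian) (hcard : Fintype.card V ≠ 1) :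
    ∃ f : V → V, Function.Injective f ∧ ∀ x, G.Adj x (f x) := by
  obtain ⟨a, p, hp⟩ := hham hcard
  set t : List V := p.support.tail with hts
  have hnotnil := hp.isCycle.not_nil
  have hcount : ∀ v, t.count v = 1 := by
    intro v
    have := hp.isHamiltonian_tail v
    rwa [SimpleGraph.Walk.support_tail_of_not_nil p hnotnil] at this
  have hall : ∀ v, v ∈ t := fun v => List.count_pos_iff.mp (by rw [hcount v]; norm_num)
  have hnd : t.Nodup := List.nodup_iff_count_le_one.mpr (fun v => le_of_eq (hcount v))
  have ht : t ≠ [] := by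
    intro h
    exact (List.not_mem_nil (a := a)) (h ▸ hall a)
  have hsupp : p.support = a :: t := SimpleGraph.Walk.support_eq_cons p
  have hchain' : List.Chain' G.Adj p.support := SimpleGraph.Walk.isChain_adj_support p
  have hchain : List.Chain' G.Adj t := by rw [hsupp] at hchain'; exact hchain'.tail
  have hlastsupp : p.support.getLast (by simp [hsupp]) = a := SimpleGraph.Walk.getLast_support p
  have hlast : G.Adj (t.getLast ht) (t.head ht) := by
    have h0 : p.support.getLast? = some a := by
      rw [List.getLast?_eq_getLast (by simp [hsupp]), hlastsupp]
    have h1 : t.getLast ht = a := by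
      rw [hsupp, List.getLast?_cons, List.getLast?_eq_getLast ht] at h0
      simpa using h0
    have h2 : G.Adj a (t.head ht) := by
      rw [hsupp] at hchain'
      rcases t with _ | ⟨b, t'⟩
      · exact absurd rfl ht
      · exact (List.isChain_cons_cons.mp hchain').1
    rwa [h1]
  exact list_succ G.Adj t ht hnd hall hchain hlast


lemma nonunit_zd {S : Type*} [CommRing S] [Finite S] [Nontrivial S] {x : S}
    (h : ¬IsUnit x) : ∃ y ≠ 0, x * y = 0 := by
  have hni : ¬ Function.Injective (fun y : S => x * y) := by
    intro hinj
    obtain ⟨c, hc⟩ := Finite.injective_iff_surjective.mp hinj 1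
    exact h (IsUnit.of_mul_eq_one c hc)
  simp only [Function.Injective, not_forall] at hni
  obtain ⟨u, v, huv, hne⟩ := hni
  exact ⟨u - v, sub_ne_zero.mpr hne, by rw [mul_sub, huv, sub_self]⟩

lemma vert_iff {S : Type*} [CommRing S] [Finite S] [Nontrivial S] (x : S) :
    (x ≠ 0 ∧ ∃ y ≠ 0, x * y = 0) ↔ (x ≠ 0 ∧ ¬IsUnit x) := by
  constructor
  · rintro ⟨hx, y, hy, hxy⟩
    refine ⟨hx, fun hu => hy ?_⟩
    exact hu.mul_left_cancel (by rw [hxy, mul_zero])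
  · rintro ⟨hx, hu⟩
    exact ⟨hx, nonunit_zd hu⟩

lemma boolean_of_trivial_units {S : Type*} [CommRing S] [Finite S]
    (htu : ∀ x : S, IsUnit x → x = 1) (x : S) : x * x = x := by
  obtain ⟨m', n', hmn, hpow⟩ : ∃ m n : ℕ, m ≠ n ∧ x ^ (m + 1) = x ^ (n + 1) := by
    obtain ⟨m, n, hne, h⟩ := Finite.exists_ne_map_eq_of_infinite (fun n : ℕ => x ^ (n + 1))
    exact ⟨m, n, hne, h⟩
  wlog hlt : m' < n' generalizing m' n'
  · exact this n' m' (Ne.symm hmn) hpow.symm (by omega)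
  obtain ⟨i, hi⟩ : ∃ i, i = m' + 1 := ⟨_, rfl⟩
  obtain ⟨d, hd⟩ : ∃ d, d = n' - m' := ⟨_, rfl⟩
  have hd1 : 1 ≤ d := by omega
  have hpow' : x ^ i = x ^ (i + d) := by
    rw [hi, hd, hpow]; congr 1; omega
  have key : ∀ t : ℕ, x ^ (i + t) = x ^ (i + t + d) := by
    intro t
    calc x ^ (i + t) = x ^ i * x ^ t := by rw [pow_add]
      _ = x ^ (i + d) * x ^ t := by rw [hpow']
      _ = x ^ (i + t + d) := by rw [← pow_add]; congr 1; ring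
  have per : ∀ s t : ℕ, x ^ (i + t) = x ^ (i + t + s * d) := by
    intro s
    induction s with
    | zero => simp
    | succ k ih =>
      intro t
      calc x ^ (i + t) = x ^ (i + t + k * d) := ih t
        _ = x ^ (i + (t + k * d)) := by congr 1; ring
        _ = x ^ (i + (t + k * d) + d) := key (t + k * d)
        _ = x ^ (i + t + (k + 1) * d) := by congr 1; ring
  obtain ⟨M, hM⟩ : ∃ M, M = i * d := ⟨_, rfl⟩
  have hMi : i ≤ M := by
    calc i = i * 1 := (mul_one i).symm
      _ ≤ i * d := Nat.mul_le_mul_left i hd1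
      _ = M := hM.symm
  have hM1 : 1 ≤ M := by omega
  obtain ⟨e, he⟩ : ∃ e : S, e = x ^ M := ⟨_, rfl⟩
  have hee : e * e = e := by
    have h := per i (M - i)
    rw [show i + (M - i) = M by omega] at h
    rw [← hM] at h
    calc e * e = x ^ (M + M) := by rw [he, pow_add]
      _ = x ^ M := h.symm
      _ = e := he.symm
  have he1 : e * (1 - e) = 0 := by rw [mul_sub, hee, mul_one, sub_self]
  have he2 : (1 - e) * (1 - e) = 1 - e := by
    have h : (1 - e) * (1 - e) = 1 - e - (e - e * e) := by ring
    rw [h, hee, sub_self, sub_zero]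
  have hxm : x * x ^ (M - 1) = x ^ M := by
    rw [← pow_succ']
    congr 1
    omega
  have hxe : x * e = e := by
    have key2 : (x * x ^ (M - 1)) * (e * e) = e := by
      rw [hxm, hee, ← he, hee]
    have hunit : (x * e + (1 - e)) * (x ^ (M - 1) * e + (1 - e)) = 1 := by
      calc (x * e + (1 - e)) * (x ^ (M - 1) * e + (1 - e))
          = (x * x ^ (M - 1)) * (e * e) + (x + x ^ (M - 1)) * (e * (1 - e))
            + (1 - e) * (1 - e) := by ring
        _ = e + (x + x ^ (M - 1)) * 0 + (1 - e) := by rw [key2, he1, he2]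
        _ = 1 := by ring
    have h1 := htu _ (IsUnit.of_mul_eq_one _ hunit)
    linear_combination h1
  have hz : x * (1 - e) = 0 := by
    have hnil : IsNilpotent (x * (1 - e)) := by
      refine ⟨M, ?_⟩
      have hpow1e : ∀ k : ℕ, (1 - e) ^ (k + 1) = 1 - e := by
        intro k
        induction k with
        | zero => simp
        | succ k ih => rw [pow_succ, ih, he2]
      rw [mul_pow]
      have h2 : (1 - e) ^ M = 1 - e := by
        have h3 := hpow1e (M - 1)
        rwa [show M - 1 + 1 = M by omega] at h3
      rw [h2, ← he, mul_sub, hee, mul_one, sub_self]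
    have h4 := htu _ hnil.isUnit_one_add
    linear_combination h4
  have hxeq : x = e := by
    have h5 : x * e + x * (1 - e) = x := by ring
    rw [hxe, hz, add_zero] at h5
    exact h5.symm
  rw [hxeq, hee]

noncomputable def zdvVertEquiv {R S : Type*} [CommRing R] [CommRing S] (e : R ≃+* S) :
    {x : R // x ≠ 0 ∧ ∃ y ≠ 0, x * y = 0} ≃ {x : S // x ≠ 0 ∧ ∃ y ≠ 0, x * y = 0} :=
  Equiv.subtypeEquiv e.toEquiv (fun x => by
    simp only [RingEquiv.toEquiv_eq_coe, EquivLike.coe_coe]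
    constructor
    · rintro ⟨hx, y, hy, hxy⟩
      refine ⟨fun h => hx (by simpa using (EmbeddingLike.map_eq_zero_iff).mp h), e y,
        fun h => hy (by simpa using (EmbeddingLike.map_eq_zero_iff).mp h), ?_⟩
      rw [← map_mul, hxy, map_zero]
    · rintro ⟨hx, y, hy, hxy⟩
      refine ⟨fun h => hx (by rw [h, map_zero]), e.symm y,
        fun h => hy (by simpa using congrArg e h), ?_⟩
      have := congrArg e.symm hxy
      rwa [map_mul, RingEquiv.symm_apply_apply, map_zero] at this)

lemma zdvVertEquiv_adj {R S : Type*} [CommRing R] [CommRing S] (e : R ≃+* S)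
    (x y : {x : R // x ≠ 0 ∧ ∃ y ≠ 0, x * y = 0}) :
    (zdvGraph S).Adj (zdvVertEquiv e x) (zdvVertEquiv e y) ↔ (zdvGraph R).Adj x y := by
  show ((zdvVertEquiv e x) ≠ (zdvVertEquiv e y) ∧ _) ↔ (x ≠ y ∧ _)
  constructor
  · rintro ⟨hne, hmul⟩
    refine ⟨fun h => hne (by rw [h]), ?_⟩
    have : e ((x : R) * y) = 0 := by rw [map_mul]; exact hmul
    have := congrArg e.symm this
    rwa [RingEquiv.symm_apply_apply, map_zero] at this
  · rintro ⟨hne, hmul⟩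
    refine ⟨fun h => hne ((zdvVertEquiv e).injective h), ?_⟩
    show e x * e y = 0
    rw [← map_mul, hmul, map_zero]

lemma indepNum_congr {V W : Type*} (G : SimpleGraph V) (H : SimpleGraph W) (φ : V ≃ W)
    (hadj : ∀ x y, H.Adj (φ x) (φ y) ↔ G.Adj x y) : indepNum G = indepNum H := by
  unfold indepNum
  congr 1
  ext n
  constructor
  · rintro ⟨s, hs, rfl⟩
    refine ⟨s.map φ.toEmbedding, ?_, by simp⟩
    rintro a ha b hb hab hadj'
    simp only [Finset.coe_map, Set.mem_image, Finset.mem_coe] at ha hb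
    obtain ⟨a', ha', rfl⟩ := ha
    obtain ⟨b', hb', rfl⟩ := hb
    exact hs ha' hb' (fun h => hab (by rw [h])) ((hadj a' b').mp hadj')
  · rintro ⟨s, hs, rfl⟩
    refine ⟨s.map φ.symm.toEmbedding, ?_, by simp⟩
    rintro a ha b hb hab hadj'
    simp only [Finset.coe_map, Set.mem_image, Finset.mem_coe] at ha hb
    obtain ⟨a', ha', rfl⟩ := ha
    obtain ⟨b', hb', rfl⟩ := hb
    refine hs ha' hb' (fun h => hab (by rw [h])) ?_
    rw [← (hadj _ _)] at hadj'
    simpa using hadj'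

lemma unit_ne_zero' {M : Type*} [MonoidWithZero M] [Nontrivial M] {b : M} (hb : IsUnit b) :
    b ≠ 0 := by
  intro h
  rw [h, isUnit_zero_iff] at hb
  exact zero_ne_one (α := M) hb

lemma isUnit_prod_iff {A B : Type*} [CommRing A] [CommRing B] {x : A × B} :
    IsUnit x ↔ IsUnit x.1 ∧ IsUnit x.2 := by
  constructor
  · intro hx
    obtain ⟨c, hc⟩ := hx.exists_right_inv
    exact ⟨IsUnit.of_mul_eq_one c.1 (congrArg Prod.fst hc),
      IsUnit.of_mul_eq_one c.2 (congrArg Prod.snd hc)⟩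
  · rintro ⟨h1, h2⟩
    obtain ⟨c, hc⟩ := h1.exists_right_inv
    obtain ⟨d, hd⟩ := h2.exists_right_inv
    exact IsUnit.of_mul_eq_one (c, d) (by ext <;> simp [hc, hd])

section Main

variable {R₁ R₂ : Type*} [CommRing R₁] [CommRing R₂] [Nontrivial R₁] [Nontrivial R₂]
  [Fintype (R₁ × R₂)]

local notation "S" => (R₁ × R₂)
local notation "V" => {x : R₁ × R₂ // x ≠ 0 ∧ ∃ y ≠ 0, x * y = 0}

set_option maxHeartbeats 4000000 in
theorem prod_main
    (hsucc : ∃ f : V → V, Function.Injective f ∧ ∀ x, (zdvGraph S).Adj x (f x)) :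
    2 * indepNum (zdvGraph S) = Nat.card V := by
  classical
  obtain ⟨f, hfinj, hfadj⟩ := hsucc
  have hvert : ∀ x : (R₁ × R₂), (x ≠ 0 ∧ ∃ y ≠ 0, x * y = 0) ↔ (x ≠ 0 ∧ ¬IsUnit x) :=
    fun x => vert_iff x
  -- upper bound via the successor map
  have hub : ∀ s : Finset V, (s : Set V).Pairwise (fun a b => ¬ (zdvGraph S).Adj a b) →
      2 * s.card ≤ Fintype.card V := by
    intro s hs
    have hdisj : Disjoint s (s.image f) := by
      rw [Finset.disjoint_left]
      intro a ha hai
      obtain ⟨b, hb, hfb⟩ := Finset.mem_image.mp hai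
      have hadj := hfadj b
      rw [hfb] at hadj
      by_cases hab : b = a
      · exact (zdvGraph S).irrefl (hab ▸ hadj)
      · exact hs hb ha hab hadj
    calc 2 * s.card = s.card + (s.image f).card := by
          rw [Finset.card_image_of_injective s hfinj]; ring
      _ = (s ∪ s.image f).card := (Finset.card_union_of_disjoint hdisj).symm
      _ ≤ Fintype.card V := Finset.card_le_univ _
  -- concluding principle
  have conclude : ∀ I : Finset V, (I : Set V).Pairwise (fun a b => ¬ (zdvGraph S).Adj a b) →
      2 * I.card = Fintype.card V → 2 * indepNum (zdvGraph S) = Nat.card V := by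
    intro I hI hcard
    have hbound : ∀ n ∈ {n | ∃ s : Finset V,
        (s : Set V).Pairwise (fun a b => ¬ (zdvGraph S).Adj a b) ∧ s.card = n}, n ≤ I.card := by
      rintro n ⟨s, hs, rfl⟩
      have := hub s hs
      omega
    have heq : indepNum (zdvGraph S) = I.card :=
      le_antisymm (csSup_le ⟨I.card, I, hI, rfl⟩ hbound) (le_csSup ⟨I.card, hbound⟩ ⟨I, hI, rfl⟩)
    rw [heq, hcard, Nat.card_eq_fintype_card]
  -- injective pushing lemma
  have hXY : ∀ (X Y : Finset V), (∀ x ∈ X, f x ∈ Y) → X.card ≤ Y.card := by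
    intro X Y h
    exact Finset.card_le_card_of_injOn f h (Function.Injective.injOn hfinj)
  by_cases hfield : (∀ a : R₁, a ≠ 0 → IsUnit a) ∧ (∀ b : R₂, b ≠ 0 → IsUnit b)
  · obtain ⟨hf1, hf2⟩ := hfield
    set A : Finset V := Finset.univ.filter (fun x : V => (x : R₁ × R₂).1 = 0) with hA
    set B : Finset V := Finset.univ.filter (fun x : V => (x : R₁ × R₂).2 = 0) with hB
    have hmemA : ∀ x : V, x ∈ A ↔ (x : R₁ × R₂).1 = 0 := by
      intro x; simp [hA]
    have hmemB : ∀ x : V, x ∈ B ↔ (x : R₁ × R₂).2 = 0 := by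
      intro x; simp [hB]
    have hx2 : ∀ x : V, (x : R₁ × R₂).1 = 0 → (x : R₁ × R₂).2 ≠ 0 := by
      intro x h1 h2
      exact x.prop.1 (Prod.ext_iff.mpr ⟨by simpa using h1, by simpa using h2⟩)
    have hx1 : ∀ x : V, (x : R₁ × R₂).2 = 0 → (x : R₁ × R₂).1 ≠ 0 := by
      intro x h1 h2
      exact x.prop.1 (Prod.ext_iff.mpr ⟨by simpa using h2, by simpa using h1⟩)
    have hfAB : ∀ x ∈ A, f x ∈ B := by
      intro x hx
      obtain ⟨hne, hmul⟩ := hfadj x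
      have h2 : (x : R₁ × R₂).2 * (f x : R₁ × R₂).2 = 0 := by
        have := congrArg Prod.snd hmul
        simpa using this
      have hu := hf2 _ (hx2 x ((hmemA x).mp hx))
      rw [hmemB]
      exact hu.mul_left_cancel (by rw [h2, mul_zero])
    have hfBA : ∀ x ∈ B, f x ∈ A := by
      intro x hx
      obtain ⟨hne, hmul⟩ := hfadj x
      have h2 : (x : R₁ × R₂).1 * (f x : R₁ × R₂).1 = 0 := by
        have := congrArg Prod.fst hmul
        simpa using this
      have hu := hf1 _ (hx1 x ((hmemB x).mp hx))
      rw [hmemA]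
      exact hu.mul_left_cancel (by rw [h2, mul_zero])
    have hcard_eq : A.card = B.card := le_antisymm (hXY A B hfAB) (hXY B A hfBA)
    have hdisj : Disjoint A B := by
      rw [Finset.disjoint_left]
      intro x hxA hxB
      exact hx2 x ((hmemA x).mp hxA) ((hmemB x).mp hxB)
    have hunion : A ∪ B = Finset.univ := by
      ext x
      simp only [Finset.mem_union, Finset.mem_univ, iff_true, hmemA, hmemB]
      by_contra hcon
      push_neg at hcon
      obtain ⟨h1, h2⟩ := hcon
      exact ((hvert _).mp x.prop).2 (isUnit_prod_iff.mpr ⟨hf1 _ h1, hf2 _ h2⟩)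
    have hcardV : 2 * A.card = Fintype.card V := by
      have := Finset.card_union_of_disjoint hdisj
      rw [hunion, Finset.card_univ] at this
      omega
    have hApair : (A : Set V).Pairwise (fun a b => ¬ (zdvGraph S).Adj a b) := by
      rintro a ha b hb hne ⟨_, hmul⟩
      have h2 : (a : R₁ × R₂).2 * (b : R₁ × R₂).2 = 0 := by
        have := congrArg Prod.snd hmul
        simpa using this
      have hu := hf2 _ (hx2 a ((hmemA a).mp (by simpa using ha)))
      have hb2 : (b : R₁ × R₂).2 = 0 := hu.mul_left_cancel (by rw [h2, mul_zero])
      exact hx2 b ((hmemA b).mp (by simpa using hb)) hb2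
    exact conclude A hApair hcardV
  · rw [not_and_or] at hfield
    push_neg at hfield
    -- L1 : a nonzero nonunit in R₁ forces the units of R₂ to be trivial
    have L1 : ∀ a₀ : R₁, a₀ ≠ 0 → ¬IsUnit a₀ → ∀ w : R₂, IsUnit w → w = 1 := by
      intro a₀ ha0 hna w hw
      by_contra hw1
      set X := Finset.univ.filter
        (fun x : V => (x : R₁ × R₂).1 ≠ 0 ∧ ¬IsUnit (x : R₁ × R₂).1 ∧ IsUnit (x : R₁ × R₂).2)
        with hX
      set Y := Finset.univ.filter
        (fun x : V => ¬IsUnit (x : R₁ × R₂).1 ∧ (x : R₁ × R₂).2 = 0) with hY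
      have hfXY : ∀ x ∈ X, f x ∈ Y := by
        intro x hx
        rw [hX, Finset.mem_filter] at hx
        obtain ⟨-, hx1, hxu, hxU⟩ := hx
        obtain ⟨hne, hmul⟩ := hfadj x
        have h2 : (x : R₁ × R₂).2 * (f x : R₁ × R₂).2 = 0 := by
          have := congrArg Prod.snd hmul; simpa using this
        have hfx2 : (f x : R₁ × R₂).2 = 0 := hxU.mul_left_cancel (by rw [h2, mul_zero])
        have h1 : (x : R₁ × R₂).1 * (f x : R₁ × R₂).1 = 0 := by
          have := congrArg Prod.fst hmul; simpa using this
        have hfx1 : ¬IsUnit (f x : R₁ × R₂).1 := by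
          intro hu
          exact hx1 (hu.mul_left_cancel (by rw [mul_comm] at h1; rw [h1, mul_zero]))
        rw [hY, Finset.mem_filter]
        exact ⟨Finset.mem_univ _, hfx1, hfx2⟩
      have hc1 : X.card ≤ Y.card := hXY X Y hfXY
      -- the coordinate-replacement maps
      have hgmem : ∀ (b : R₂), IsUnit b → ∀ y ∈ Y,
          (((y : R₁ × R₂).1, b) : R₁ × R₂) ≠ 0 ∧ ∃ z ≠ 0, (((y : R₁ × R₂).1, b) : R₁ × R₂) * z = 0 := by
        intro b hb y hy
        rw [hY, Finset.mem_filter] at hy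
        obtain ⟨-, hy1, hy2⟩ := hy
        refine (hvert _).mpr ⟨?_, ?_⟩
        · intro h0
          exact unit_ne_zero' hb (by simpa using congrArg Prod.snd h0)
        · intro hu
          exact hy1 (isUnit_prod_iff.mp hu).1
      set g : R₂ → V → V := fun b y =>
        if h : (((y : R₁ × R₂).1, b) : R₁ × R₂) ≠ 0 ∧ ∃ z ≠ 0, (((y : R₁ × R₂).1, b) : R₁ × R₂) * z = 0
        then ⟨((y : R₁ × R₂).1, b), h⟩ else y with hg
      have hgval : ∀ (b : R₂), IsUnit b → ∀ y ∈ Y, (g b y : R₁ × R₂) = ((y : R₁ × R₂).1, b) := by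
        intro b hb y hy
        rw [hg]
        simp only
        rw [dif_pos (hgmem b hb y hy)]
      have hgX : ∀ (b : R₂), IsUnit b → ∀ y ∈ Y, g b y ∈ X := by
        intro b hb y hy
        have hv := hgval b hb y hy
        have hy' := hy
        rw [hY, Finset.mem_filter] at hy'
        obtain ⟨-, hy1, hy2⟩ := hy'
        have hy10 : (y : R₁ × R₂).1 ≠ 0 := by
          intro h0
          exact y.prop.1 (Prod.ext_iff.mpr ⟨by simpa using h0, by simpa using hy2⟩)
        rw [hX, Finset.mem_filter]
        refine ⟨Finset.mem_univ _, ?_, ?_, ?_⟩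
        · rw [hv]; exact hy10
        · rw [hv]; exact hy1
        · rw [hv]; exact hb
      have hginj : ∀ (b : R₂), IsUnit b → Set.InjOn (g b) Y := by
        intro b hb y hy y' hy' heq
        rw [Finset.mem_coe] at hy hy'
        have h1 := hgval b hb y hy
        have h2 := hgval b hb y' hy'
        have hyv : (y : R₁ × R₂).1 = (y' : R₁ × R₂).1 := by
          have := congrArg (fun v : V => (v : R₁ × R₂).1) heq
          simpa [h1, h2] using this
        have hy2 : (y : R₁ × R₂).2 = 0 := by
          rw [hY, Finset.mem_filter] at hy; exact hy.2.2
        have hy'2 : (y' : R₁ × R₂).2 = 0 := by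
          rw [hY, Finset.mem_filter] at hy'; exact hy'.2.2
        exact Subtype.ext (Prod.ext_iff.mpr ⟨hyv, by rw [hy2, hy'2]⟩)
      have hdisjg : Disjoint (Y.image (g 1)) (Y.image (g w)) := by
        rw [Finset.disjoint_left]
        intro a ha haw
        obtain ⟨y, hy, hyv⟩ := Finset.mem_image.mp ha
        obtain ⟨y', hy', hyv'⟩ := Finset.mem_image.mp haw
        have h1 : (a : R₁ × R₂).2 = 1 := by rw [← hyv, hgval 1 isUnit_one y hy]
        have h2 : (a : R₁ × R₂).2 = w := by rw [← hyv', hgval w hw y' hy']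
        exact hw1 (h2.symm.trans h1)
      have himgX : Y.image (g 1) ∪ Y.image (g w) ⊆ X := by
        intro a ha
        rcases Finset.mem_union.mp ha with h | h
        · obtain ⟨y, hy, hyv⟩ := Finset.mem_image.mp h
          exact hyv ▸ hgX 1 isUnit_one y hy
        · obtain ⟨y, hy, hyv⟩ := Finset.mem_image.mp h
          exact hyv ▸ hgX w hw y hy
      have hc2 : 2 * Y.card ≤ X.card := by
        have e1 : (Y.image (g 1)).card = Y.card := Finset.card_image_of_injOn (hginj 1 isUnit_one)
        have e2 : (Y.image (g w)).card = Y.card := Finset.card_image_of_injOn (hginj w hw)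
        have := Finset.card_le_card himgX
        rw [Finset.card_union_of_disjoint hdisjg, e1, e2] at this
        omega
      have hYne : 1 ≤ Y.card := by
        have hv : ((a₀, 0) : R₁ × R₂) ≠ 0 ∧ ∃ z ≠ 0, ((a₀, 0) : R₁ × R₂) * z = 0 := by
          refine (hvert _).mpr ⟨?_, ?_⟩
          · intro h0; exact ha0 (congrArg Prod.fst h0)
          · intro hu; exact hna (isUnit_prod_iff.mp hu).1
        have hmem : (⟨(a₀, 0), hv⟩ : V) ∈ Y := by
          rw [hY, Finset.mem_filter]
          exact ⟨Finset.mem_univ _, hna, rfl⟩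
        exact Finset.card_pos.mpr ⟨_, hmem⟩
      omega

    -- L1' : a nonzero nonunit in R₂ forces the units of R₁ to be trivial
    have L1' : ∀ b₀ : R₂, b₀ ≠ 0 → ¬IsUnit b₀ → ∀ w : R₁, IsUnit w → w = 1 := by
      intro b₀ hb0 hnb w hw
      by_contra hw1
      set X := Finset.univ.filter
        (fun x : V => (x : R₁ × R₂).2 ≠ 0 ∧ ¬IsUnit (x : R₁ × R₂).2 ∧ IsUnit (x : R₁ × R₂).1)
        with hX
      set Y := Finset.univ.filter
        (fun x : V => ¬IsUnit (x : R₁ × R₂).2 ∧ (x : R₁ × R₂).1 = 0) with hY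
      have hfXY : ∀ x ∈ X, f x ∈ Y := by
        intro x hx
        rw [hX, Finset.mem_filter] at hx
        obtain ⟨-, hx1, hxu, hxU⟩ := hx
        obtain ⟨hne, hmul⟩ := hfadj x
        have h2 : (x : R₁ × R₂).1 * (f x : R₁ × R₂).1 = 0 := by
          have := congrArg Prod.fst hmul; simpa using this
        have hfx2 : (f x : R₁ × R₂).1 = 0 := hxU.mul_left_cancel (by rw [h2, mul_zero])
        have h1 : (x : R₁ × R₂).2 * (f x : R₁ × R₂).2 = 0 := by
          have := congrArg Prod.snd hmul; simpa using this
        have hfx1 : ¬IsUnit (f x : R₁ × R₂).2 := by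
          intro hu
          exact hx1 (hu.mul_left_cancel (by rw [mul_comm] at h1; rw [h1, mul_zero]))
        rw [hY, Finset.mem_filter]
        exact ⟨Finset.mem_univ _, hfx1, hfx2⟩
      have hc1 : X.card ≤ Y.card := hXY X Y hfXY
      have hgmem : ∀ (b : R₁), IsUnit b → ∀ y ∈ Y,
          ((b, (y : R₁ × R₂).2) : R₁ × R₂) ≠ 0 ∧ ∃ z ≠ 0, ((b, (y : R₁ × R₂).2) : R₁ × R₂) * z = 0 := by
        intro b hb y hy
        rw [hY, Finset.mem_filter] at hy
        obtain ⟨-, hy1, hy2⟩ := hy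
        refine (hvert _).mpr ⟨?_, ?_⟩
        · intro h0
          exact unit_ne_zero' hb (by simpa using congrArg Prod.fst h0)
        · intro hu
          exact hy1 (isUnit_prod_iff.mp hu).2
      set g : R₁ → V → V := fun b y =>
        if h : ((b, (y : R₁ × R₂).2) : R₁ × R₂) ≠ 0 ∧ ∃ z ≠ 0, ((b, (y : R₁ × R₂).2) : R₁ × R₂) * z = 0
        then ⟨(b, (y : R₁ × R₂).2), h⟩ else y with hg
      have hgval : ∀ (b : R₁), IsUnit b → ∀ y ∈ Y, (g b y : R₁ × R₂) = (b, (y : R₁ × R₂).2) := by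
        intro b hb y hy
        rw [hg]
        simp only
        rw [dif_pos (hgmem b hb y hy)]
      have hgX : ∀ (b : R₁), IsUnit b → ∀ y ∈ Y, g b y ∈ X := by
        intro b hb y hy
        have hv := hgval b hb y hy
        have hy' := hy
        rw [hY, Finset.mem_filter] at hy'
        obtain ⟨-, hy1, hy2⟩ := hy'
        have hy10 : (y : R₁ × R₂).2 ≠ 0 := by
          intro h0
          exact y.prop.1 (Prod.ext_iff.mpr ⟨by simpa using hy2, by simpa using h0⟩)
        rw [hX, Finset.mem_filter]
        refine ⟨Finset.mem_univ _, ?_, ?_, ?_⟩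
        · rw [hv]; exact hy10
        · rw [hv]; exact hy1
        · rw [hv]; exact hb
      have hginj : ∀ (b : R₁), IsUnit b → Set.InjOn (g b) Y := by
        intro b hb y hy y' hy' heq
        rw [Finset.mem_coe] at hy hy'
        have h1 := hgval b hb y hy
        have h2 := hgval b hb y' hy'
        have hyv : (y : R₁ × R₂).2 = (y' : R₁ × R₂).2 := by
          have := congrArg (fun v : V => (v : R₁ × R₂).2) heq
          simpa [h1, h2] using this
        have hy2 : (y : R₁ × R₂).1 = 0 := by
          rw [hY, Finset.mem_filter] at hy; exact hy.2.2
        have hy'2 : (y' : R₁ × R₂).1 = 0 := by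
          rw [hY, Finset.mem_filter] at hy'; exact hy'.2.2
        exact Subtype.ext (Prod.ext_iff.mpr ⟨by rw [hy2, hy'2], hyv⟩)
      have hdisjg : Disjoint (Y.image (g 1)) (Y.image (g w)) := by
        rw [Finset.disjoint_left]
        intro a ha haw
        obtain ⟨y, hy, hyv⟩ := Finset.mem_image.mp ha
        obtain ⟨y', hy', hyv'⟩ := Finset.mem_image.mp haw
        have h1 : (a : R₁ × R₂).1 = 1 := by rw [← hyv, hgval 1 isUnit_one y hy]
        have h2 : (a : R₁ × R₂).1 = w := by rw [← hyv', hgval w hw y' hy']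
        exact hw1 (h2.symm.trans h1)
      have himgX : Y.image (g 1) ∪ Y.image (g w) ⊆ X := by
        intro a ha
        rcases Finset.mem_union.mp ha with h | h
        · obtain ⟨y, hy, hyv⟩ := Finset.mem_image.mp h
          exact hyv ▸ hgX 1 isUnit_one y hy
        · obtain ⟨y, hy, hyv⟩ := Finset.mem_image.mp h
          exact hyv ▸ hgX w hw y hy
      have hc2 : 2 * Y.card ≤ X.card := by
        have e1 : (Y.image (g 1)).card = Y.card := Finset.card_image_of_injOn (hginj 1 isUnit_one)
        have e2 : (Y.image (g w)).card = Y.card := Finset.card_image_of_injOn (hginj w hw)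
        have := Finset.card_le_card himgX
        rw [Finset.card_union_of_disjoint hdisjg, e1, e2] at this
        omega
      have hYne : 1 ≤ Y.card := by
        have hv : ((0, b₀) : R₁ × R₂) ≠ 0 ∧ ∃ z ≠ 0, ((0, b₀) : R₁ × R₂) * z = 0 := by
          refine (hvert _).mpr ⟨?_, ?_⟩
          · intro h0; exact hb0 (congrArg Prod.snd h0)
          · intro hu; exact hnb (isUnit_prod_iff.mp hu).2
        have hmem : (⟨(0, b₀), hv⟩ : V) ∈ Y := by
          rw [hY, Finset.mem_filter]
          exact ⟨Finset.mem_univ _, hnb, rfl⟩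
        exact Finset.card_pos.mpr ⟨_, hmem⟩
      omega
    -- L2 : if R₂ = {0,1} (every nonzero elt a unit, trivial units) then units of R₁ are trivial
    have L2 : (∀ b : R₂, b ≠ 0 → IsUnit b) → (∀ v : R₂, IsUnit v → v = 1) →
        ∀ w : R₁, IsUnit w → w = 1 := by
      intro hf2 hu2 w hw
      by_contra hw1
      set X := Finset.univ.filter (fun x : V => IsUnit (x : R₁ × R₂).1) with hX
      set Y := Finset.univ.filter (fun x : V => (x : R₁ × R₂).1 = 0) with hY
      have hfXY : ∀ x ∈ X, f x ∈ Y := by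
        intro x hx
        rw [hX, Finset.mem_filter] at hx
        obtain ⟨hne, hmul⟩ := hfadj x
        have h1 : (x : R₁ × R₂).1 * (f x : R₁ × R₂).1 = 0 := by
          have := congrArg Prod.fst hmul; simpa using this
        rw [hY, Finset.mem_filter]
        exact ⟨Finset.mem_univ _, hx.2.mul_left_cancel (by rw [h1, mul_zero])⟩
      have hc1 : X.card ≤ Y.card := hXY X Y hfXY
      have hYone : Y.card ≤ 1 := by
        rw [Finset.card_le_one]
        intro a ha b hb
        rw [hY, Finset.mem_filter] at ha hb
        have ha2 : (a : R₁ × R₂).2 ≠ 0 := by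
          intro h0
          exact a.prop.1 (Prod.ext_iff.mpr ⟨by simpa using ha.2, by simpa using h0⟩)
        have hb2 : (b : R₁ × R₂).2 ≠ 0 := by
          intro h0
          exact b.prop.1 (Prod.ext_iff.mpr ⟨by simpa using hb.2, by simpa using h0⟩)
        have ea := hu2 _ (hf2 _ ha2)
        have eb := hu2 _ (hf2 _ hb2)
        exact Subtype.ext (Prod.ext_iff.mpr ⟨by rw [ha.2, hb.2], by rw [ea, eb]⟩)
      have hv1 : ((1, 0) : R₁ × R₂) ≠ 0 ∧ ∃ z ≠ 0, ((1, 0) : R₁ × R₂) * z = 0 := by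
        refine (hvert _).mpr ⟨?_, ?_⟩
        · intro h0; exact one_ne_zero (α := R₁) (congrArg Prod.fst h0)
        · intro hu
          exact unit_ne_zero' (isUnit_prod_iff.mp hu).2 rfl
      have hvw : ((w, 0) : R₁ × R₂) ≠ 0 ∧ ∃ z ≠ 0, ((w, 0) : R₁ × R₂) * z = 0 := by
        refine (hvert _).mpr ⟨?_, ?_⟩
        · intro h0; exact unit_ne_zero' hw (congrArg Prod.fst h0)
        · intro hu
          exact unit_ne_zero' (isUnit_prod_iff.mp hu).2 rfl
      have hmem1 : (⟨(1, 0), hv1⟩ : V) ∈ X := by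
        rw [hX, Finset.mem_filter]; exact ⟨Finset.mem_univ _, isUnit_one⟩
      have hmemw : (⟨(w, 0), hvw⟩ : V) ∈ X := by
        rw [hX, Finset.mem_filter]; exact ⟨Finset.mem_univ _, hw⟩
      have hnewx : (⟨(1, 0), hv1⟩ : V) ≠ (⟨(w, 0), hvw⟩ : V) := by
        intro h
        exact hw1 (congrArg (fun v : V => (v : R₁ × R₂).1) h).symm
      have hX2 : 2 ≤ X.card := by
        have : ({(⟨(1, 0), hv1⟩ : V), (⟨(w, 0), hvw⟩ : V)} : Finset V) ⊆ X := by
          intro a ha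
          rcases Finset.mem_insert.mp ha with h | h
          · exact h ▸ hmem1
          · exact (Finset.mem_singleton.mp h) ▸ hmemw
        calc 2 = ({(⟨(1, 0), hv1⟩ : V), (⟨(w, 0), hvw⟩ : V)} : Finset V).card :=
              (Finset.card_pair hnewx).symm
          _ ≤ X.card := Finset.card_le_card this
      omega
    -- L2' : mirror of L2
    have L2' : (∀ b : R₁, b ≠ 0 → IsUnit b) → (∀ v : R₁, IsUnit v → v = 1) →
        ∀ w : R₂, IsUnit w → w = 1 := by
      intro hf1 hu1 w hw
      by_contra hw1
      set X := Finset.univ.filter (fun x : V => IsUnit (x : R₁ × R₂).2) with hX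
      set Y := Finset.univ.filter (fun x : V => (x : R₁ × R₂).2 = 0) with hY
      have hfXY : ∀ x ∈ X, f x ∈ Y := by
        intro x hx
        rw [hX, Finset.mem_filter] at hx
        obtain ⟨hne, hmul⟩ := hfadj x
        have h1 : (x : R₁ × R₂).2 * (f x : R₁ × R₂).2 = 0 := by
          have := congrArg Prod.snd hmul; simpa using this
        rw [hY, Finset.mem_filter]
        exact ⟨Finset.mem_univ _, hx.2.mul_left_cancel (by rw [h1, mul_zero])⟩
      have hc1 : X.card ≤ Y.card := hXY X Y hfXY
      have hYone : Y.card ≤ 1 := by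
        rw [Finset.card_le_one]
        intro a ha b hb
        rw [hY, Finset.mem_filter] at ha hb
        have ha2 : (a : R₁ × R₂).1 ≠ 0 := by
          intro h0
          exact a.prop.1 (Prod.ext_iff.mpr ⟨by simpa using h0, by simpa using ha.2⟩)
        have hb2 : (b : R₁ × R₂).1 ≠ 0 := by
          intro h0
          exact b.prop.1 (Prod.ext_iff.mpr ⟨by simpa using h0, by simpa using hb.2⟩)
        have ea := hu1 _ (hf1 _ ha2)
        have eb := hu1 _ (hf1 _ hb2)
        exact Subtype.ext (Prod.ext_iff.mpr ⟨by rw [ea, eb], by rw [ha.2, hb.2]⟩)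
      have hv1 : ((0, 1) : R₁ × R₂) ≠ 0 ∧ ∃ z ≠ 0, ((0, 1) : R₁ × R₂) * z = 0 := by
        refine (hvert _).mpr ⟨?_, ?_⟩
        · intro h0; exact one_ne_zero (α := R₂) (congrArg Prod.snd h0)
        · intro hu
          exact unit_ne_zero' (isUnit_prod_iff.mp hu).1 rfl
      have hvw : ((0, w) : R₁ × R₂) ≠ 0 ∧ ∃ z ≠ 0, ((0, w) : R₁ × R₂) * z = 0 := by
        refine (hvert _).mpr ⟨?_, ?_⟩
        · intro h0; exact unit_ne_zero' hw (congrArg Prod.snd h0)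
        · intro hu
          exact unit_ne_zero' (isUnit_prod_iff.mp hu).1 rfl
      have hmem1 : (⟨(0, 1), hv1⟩ : V) ∈ X := by
        rw [hX, Finset.mem_filter]; exact ⟨Finset.mem_univ _, isUnit_one⟩
      have hmemw : (⟨(0, w), hvw⟩ : V) ∈ X := by
        rw [hX, Finset.mem_filter]; exact ⟨Finset.mem_univ _, hw⟩
      have hnewx : (⟨(0, 1), hv1⟩ : V) ≠ (⟨(0, w), hvw⟩ : V) := by
        intro h
        exact hw1 (congrArg (fun v : V => (v : R₁ × R₂).2) h).symm
      have hX2 : 2 ≤ X.card := by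
        have : ({(⟨(0, 1), hv1⟩ : V), (⟨(0, w), hvw⟩ : V)} : Finset V) ⊆ X := by
          intro a ha
          rcases Finset.mem_insert.mp ha with h | h
          · exact h ▸ hmem1
          · exact (Finset.mem_singleton.mp h) ▸ hmemw
        calc 2 = ({(⟨(0, 1), hv1⟩ : V), (⟨(0, w), hvw⟩ : V)} : Finset V).card :=
              (Finset.card_pair hnewx).symm
          _ ≤ X.card := Finset.card_le_card this
      omega
    -- combine: all units of the product are trivial
    have htu : ∀ x : R₁ × R₂, IsUnit x → x = 1 := by
      have key : (∀ v : R₁, IsUnit v → v = 1) ∧ (∀ v : R₂, IsUnit v → v = 1) := by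
        rcases hfield with ⟨a₀, ha0, hna⟩ | ⟨b₀, hb0, hnb⟩
        · have hu2 := L1 a₀ ha0 hna
          have hu1 : ∀ v : R₁, IsUnit v → v = 1 := by
            by_cases hz2 : ∃ b : R₂, b ≠ 0 ∧ ¬IsUnit b
            · obtain ⟨b₀, hb0, hnb⟩ := hz2
              exact L1' b₀ hb0 hnb
            · push_neg at hz2
              exact L2 hz2 hu2
          exact ⟨hu1, hu2⟩
        · have hu1 := L1' b₀ hb0 hnb
          have hu2 : ∀ v : R₂, IsUnit v → v = 1 := by
            by_cases hz1 : ∃ a : R₁, a ≠ 0 ∧ ¬IsUnit a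
            · obtain ⟨a₀, ha0, hna⟩ := hz1
              exact L1 a₀ ha0 hna
            · push_neg at hz1
              exact L2' hz1 hu1
          exact ⟨hu1, hu2⟩
      intro x hx
      obtain ⟨h1, h2⟩ := isUnit_prod_iff.mp hx
      exact Prod.ext_iff.mpr ⟨by simpa using key.1 _ h1, by simpa using key.2 _ h2⟩
    have hbool : ∀ x : R₁ × R₂, x * x = x := boolean_of_trivial_units htu
    obtain ⟨m, hm⟩ := Ideal.exists_maximal (R₁ × R₂)
    have hprime := hm.isPrime
    set mfin := Finset.univ.filter (fun x : R₁ × R₂ => x ∈ m) with hmf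
    set compl := Finset.univ.filter (fun x : R₁ × R₂ => x ∉ m) with hcf
    have hsplit : mfin.card + compl.card = Fintype.card (R₁ × R₂) := by
      rw [hmf, hcf, Finset.card_filter_add_card_filter_not, Finset.card_univ]
    have hcompl_eq : compl = mfin.image (fun y => 1 + y) := by
      ext x
      simp only [hcf, hmf, Finset.mem_filter, Finset.mem_univ, true_and, Finset.mem_image]
      constructor
      · intro hx
        have hx1 : x - 1 ∈ m := by
          have h0 : x * (x - 1) = 0 := by rw [mul_sub, hbool x, mul_one, sub_self]
          have hmm : x * (x - 1) ∈ m := by rw [h0]; exact m.zero_mem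
          rcases hprime.mem_or_mem hmm with h | h
          · exact absurd h hx
          · exact h
        exact ⟨x - 1, hx1, by ring⟩
      · rintro ⟨y, hy, rfl⟩
        intro hmem
        have h1m : (1 : R₁ × R₂) ∈ m := by
          have := m.sub_mem hmem hy
          simpa using this
        exact hm.ne_top ((Ideal.eq_top_iff_one m).mpr h1m)
    have hcc : compl.card = mfin.card := by
      rw [hcompl_eq]
      exact Finset.card_image_of_injective _ (fun a b h => by simpa using h)
    have h1compl : (1 : R₁ × R₂) ∈ compl := by
      rw [hcf]
      simp only [Finset.mem_filter, Finset.mem_univ, true_and]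
      intro h
      exact hm.ne_top ((Ideal.eq_top_iff_one m).mpr h)
    set I := Finset.univ.filter (fun x : V => (x : R₁ × R₂) ∉ m) with hI
    have hIpair : (I : Set V).Pairwise (fun a b => ¬ (zdvGraph S).Adj a b) := by
      rintro a ha b hb hne ⟨-, hmul⟩
      rw [Finset.mem_coe, hI, Finset.mem_filter] at ha hb
      have hmm : (a : R₁ × R₂) * b ∈ m := by rw [hmul]; exact m.zero_mem
      rcases hprime.mem_or_mem hmm with h | h
      · exact ha.2 h
      · exact hb.2 h
    have hIimg : I.image (fun x : V => (x : R₁ × R₂)) = compl.erase 1 := by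
      ext z
      simp only [Finset.mem_image, Finset.mem_erase]
      constructor
      · rintro ⟨x, hx, rfl⟩
        rw [hI, Finset.mem_filter] at hx
        refine ⟨?_, ?_⟩
        · intro h1
          exact ((hvert _).mp x.prop).2 (h1 ▸ isUnit_one)
        · rw [hcf]
          simp only [Finset.mem_filter, Finset.mem_univ, true_and]
          exact hx.2
      · rintro ⟨hz1, hz⟩
        rw [hcf] at hz
        simp only [Finset.mem_filter, Finset.mem_univ, true_and] at hz
        have hz0 : z ≠ 0 := by
          intro h
          exact hz (h ▸ m.zero_mem)
        have hzu : ¬IsUnit z := fun hu => hz1 (htu z hu)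
        refine ⟨⟨z, (hvert z).mpr ⟨hz0, hzu⟩⟩, ?_, rfl⟩
        rw [hI, Finset.mem_filter]
        exact ⟨Finset.mem_univ _, hz⟩
    have hIcard : I.card = compl.card - 1 := by
      have hcg := congrArg Finset.card hIimg
      rwa [Finset.card_image_of_injective _ Subtype.val_injective,
        Finset.card_erase_of_mem h1compl] at hcg
    have hVS : Fintype.card V = Fintype.card (R₁ × R₂) - 2 := by
      rw [Fintype.card_subtype]
      have hfe : Finset.univ.filter (fun x : R₁ × R₂ => x ≠ 0 ∧ ∃ y ≠ 0, x * y = 0)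
          = Finset.univ \ {0, 1} := by
        ext x
        simp only [Finset.mem_filter, Finset.mem_univ, true_and, Finset.mem_sdiff,
          Finset.mem_insert, Finset.mem_singleton]
        rw [hvert x]
        constructor
        · rintro ⟨h0, hu⟩
          push_neg
          exact ⟨h0, fun h1 => hu (h1 ▸ isUnit_one)⟩
        · intro h
          push_neg at h
          exact ⟨h.1, fun hu => h.2 (htu x hu)⟩
      rw [hfe, Finset.card_sdiff_of_subset (Finset.subset_univ _), Finset.card_univ]
      have : ({0, 1} : Finset (R₁ × R₂)).card = 2 := by
        rw [Finset.card_insert_of_notMem (by simp), Finset.card_singleton]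
      rw [this]
    have hk1 : 1 ≤ compl.card := Finset.card_pos.mpr ⟨1, h1compl⟩
    have hS2 : 2 ≤ Fintype.card (R₁ × R₂) := by omega
    have hfin : 2 * I.card = Fintype.card V := by omega
    exact conclude I hIpair hfin

end Main


theorem stmt5 (R : Type u) [CommRing R] [Nontrivial R] [Fintype R] [DecidableEq R]
    (hdec : IsDecomposable R) (hham : (zdvGraph R).IsHamiltonian) :
    2 * indepNum (zdvGraph R) = Nat.card {x : R // x ≠ 0 ∧ ∃ y ≠ 0, x * y = 0} := by
  obtain ⟨R₁, R₂, i₁, i₂, h₁, h₂, he⟩ := hdec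
  obtain ⟨e⟩ := he
  letI : Fintype (R₁ × R₂) := Fintype.ofEquiv R e.toEquiv
  -- the product has at least two vertices
  have hv01 : ((0, 1) : R₁ × R₂) ≠ 0 ∧ ∃ y ≠ 0, ((0, 1) : R₁ × R₂) * y = 0 := by
    refine ⟨fun h => one_ne_zero (α := R₂) (congrArg Prod.snd h), ((1, 0) : R₁ × R₂),
      fun h => one_ne_zero (α := R₁) (congrArg Prod.fst h), ?_⟩
    ext <;> simp
  have hv10 : ((1, 0) : R₁ × R₂) ≠ 0 ∧ ∃ y ≠ 0, ((1, 0) : R₁ × R₂) * y = 0 := by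
    refine ⟨fun h => one_ne_zero (α := R₁) (congrArg Prod.fst h), ((0, 1) : R₁ × R₂),
      fun h => one_ne_zero (α := R₂) (congrArg Prod.snd h), ?_⟩
    ext <;> simp
  have hnontriv : Nontrivial {x : R₁ × R₂ // x ≠ 0 ∧ ∃ y ≠ 0, x * y = 0} := by
    refine ⟨⟨(0, 1), hv01⟩, ⟨(1, 0), hv10⟩, ?_⟩
    intro h
    exact one_ne_zero (α := R₂) (congrArg (fun v : {x : R₁ × R₂ // _} => (v : R₁ × R₂).2) h)
  have hcards : Nat.card {x : R // x ≠ 0 ∧ ∃ y ≠ 0, x * y = 0}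
      = Nat.card {x : R₁ × R₂ // x ≠ 0 ∧ ∃ y ≠ 0, x * y = 0} := Nat.card_congr (zdvVertEquiv e)
  have hcard1 : Fintype.card {x : R // x ≠ 0 ∧ ∃ y ≠ 0, x * y = 0} ≠ 1 := by
    rw [← Nat.card_eq_fintype_card, hcards]
    have h2 : 1 < Nat.card {x : R₁ × R₂ // x ≠ 0 ∧ ∃ y ≠ 0, x * y = 0} :=
      Finite.one_lt_card_iff_nontrivial.mpr hnontriv
    omega
  obtain ⟨g, hginj, hgadj⟩ := ham_succ hham hcard1
  have hsucc : ∃ f : {x : R₁ × R₂ // x ≠ 0 ∧ ∃ y ≠ 0, x * y = 0} →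
      {x : R₁ × R₂ // x ≠ 0 ∧ ∃ y ≠ 0, x * y = 0},
      Function.Injective f ∧ ∀ x, (zdvGraph (R₁ × R₂)).Adj x (f x) := by
    refine ⟨(zdvVertEquiv e) ∘ g ∘ (zdvVertEquiv e).symm, ?_, ?_⟩
    · exact (zdvVertEquiv e).injective.comp (hginj.comp (zdvVertEquiv e).symm.injective)
    · intro x
      have := hgadj ((zdvVertEquiv e).symm x)
      have h2 := (zdvVertEquiv_adj e ((zdvVertEquiv e).symm x) (g ((zdvVertEquiv e).symm x))).mpr this
      simpa using h2
  have hmain := prod_main hsucc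
  rw [indepNum_congr (zdvGraph R) (zdvGraph (R₁ × R₂)) (zdvVertEquiv e) (fun x y => zdvVertEquiv_adj e x y)]
  rw [hmain, hcards]
end

section
/- Let R be a finite commutative principal ideal ring with identity 1 ≠ 0 which is not decomposable (i.e., R is not isomorphic to a product of two nonzero rings) and is not an integral domain. If the zero-divisor graph Γ(R) is Hamiltonian, then α(Γ(R)) = 1. -/
universe u

/- ### Auxiliary lemmas -/

lemma cycNext {α : Type*} [DecidableEq α] {r : α → α → Prop} {l : List α}
    (hnd : l.Nodup) (hne : l ≠ [])
    (hchain : List.Chain' r l) (hlast : r (l.getLast hne) (l.head hne))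
    {x : α} (hx : x ∈ l) : r x (l.next x hx) := by
  obtain ⟨i, rfl⟩ := List.mem_iff_get.mp hx
  rw [show l.next (l.get i) hx = l.get ⟨((i : ℕ) + 1) % l.length, Nat.mod_lt _ ((Nat.zero_le _).trans_lt i.2)⟩ from List.next_getElem l hnd i i.2]
  rcases lt_or_eq_of_le (Nat.succ_le_of_lt i.2) with h | h
  · have hmod : ((i : ℕ) + 1) % l.length = (i : ℕ) + 1 := Nat.mod_eq_of_lt h
    have h2 := List.isChain_iff_getElem.mp hchain i (by omega)
    have e1 : l.get ⟨((i : ℕ) + 1) % l.length, by omega⟩ = l.get ⟨(i : ℕ) + 1, by omega⟩ := by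
      congr 1
      exact Fin.ext hmod
    rw [e1]
    exact h2
  · have hlen : (i : ℕ) + 1 = l.length := h
    have hmod : ((i : ℕ) + 1) % l.length = 0 := by rw [hlen]; exact Nat.mod_self _
    have h1 : l.get i = l.getLast hne := by
      rw [List.getLast_eq_getElem, List.get_eq_getElem]
      congr 1
      omega
    have h2 : l.get ⟨((i : ℕ) + 1) % l.length, by omega⟩ = l.head hne := by
      rw [List.head_eq_getElem_zero hne, List.get_eq_getElem]
      congr 1
    rw [h1, h2]
    exact hlast

open SimpleGraph in
lemma indep_two_mul_le {V : Type*} [Fintype V] [DecidableEq V] {G : SimpleGraph V}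
    (hham : G.IsHamiltonian) (hcard : Fintype.card V ≠ 1) (s : Finset V)
    (hs : (s : Set V).Pairwise (fun a b => ¬ G.Adj a b)) :
    2 * s.card ≤ Fintype.card V := by
  obtain ⟨a, p, hp⟩ := hham hcard
  set t : List V := p.support.tail with ht
  have hcount : ∀ b, t.count b = 1 :=
    (Walk.isHamiltonianCycle_iff_isCycle_and_support_count_tail_eq_one.mp hp).2
  have hnd : t.Nodup := List.nodup_iff_count_le_one.mpr fun b => (hcount b).le
  have hmem : ∀ b, b ∈ t := fun b => by
    rw [← List.count_pos_iff]
    rw [hcount b]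
    norm_num
  have hne : t ≠ [] := List.ne_nil_of_mem (hmem a)
  have hsupp : p.support = a :: t := p.support_eq_cons
  have hchain0 : List.Chain' G.Adj (a :: t) := by
    have := p.isChain_adj_support
    rwa [hsupp] at this
  have hgl : (a :: t).getLast (List.cons_ne_nil a t) = a := by
    have := p.getLast_support
    simp only [hsupp] at this
    exact this
  have hchain : List.Chain' G.Adj t := hchain0.tail
  have hlastt : t.getLast hne = a := by
    rwa [List.getLast_cons hne] at hgl
  clear_value t
  have hlast : G.Adj (t.getLast hne) (t.head hne) := by
    rw [hlastt]
    rcases t with _ | ⟨b, t'⟩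
    · exact absurd rfl hne
    · exact (List.isChain_cons_cons.mp hchain0).1
  have hadj : ∀ x : V, G.Adj x (t.next x (hmem x)) := fun x =>
    cycNext hnd hne hchain hlast (hmem x)
  have hmaps : ∀ x ∈ s, t.next x (hmem x) ∈ sᶜ := by
    intro x hx
    rw [Finset.mem_compl]
    intro hmem'
    exact hs hx hmem' (G.ne_of_adj (hadj x)) (hadj x)
  have hinj : Set.InjOn (fun x => t.next x (hmem x)) s := by
    intro x hx y hy hxy
    have h1 := List.prev_next t hnd x (hmem x)
    have h2 := List.prev_next t hnd y (hmem y)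
    rw [← h1, ← h2]
    simp only at hxy
    congr 1
  have hcle : s.card ≤ sᶜ.card :=
    Finset.card_le_card_of_injOn _ hmaps hinj
  have := Finset.card_add_card_compl s
  omega

lemma exists_pow_idem {M : Type*} [CommMonoid M] [Finite M] (x : M) :
    ∃ k, 0 < k ∧ x ^ k * x ^ k = x ^ k := by
  obtain ⟨i, j, hij, hpow⟩ := Finite.exists_ne_map_eq_of_infinite (fun n : ℕ => x ^ n)
  wlog h : i < j generalizing i j
  · exact this j i hij.symm hpow.symm (by omega)
  set d := j - i with hd
  have hd1 : 1 ≤ d := by omega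
  have key : ∀ a, i ≤ a → x ^ (a + d) = x ^ a := by
    intro a ha
    have : a + d = (a - i) + j := by omega
    rw [this, pow_add, ← hpow, ← pow_add]
    congr 1
    omega
  have key2 : ∀ m a, i ≤ a → x ^ (a + m * d) = x ^ a := by
    intro m
    induction m with
    | zero => simp
    | succ k ih =>
      intro a ha
      have : a + (k + 1) * d = (a + d) + k * d := by ring
      rw [this, ih (a + d) (by omega), key a ha]
  refine ⟨(i + 1) * d, by positivity, ?_⟩
  rw [← pow_add]
  exact key2 (i + 1) ((i + 1) * d) (by nlinarith)

lemma nilpotent_or_unit (R : Type u) [CommRing R] [Fintype R]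
    (hnd : ¬ IsDecomposable R) (x : R) : IsNilpotent x ∨ IsUnit x := by
  obtain ⟨k, hk, he⟩ := exists_pow_idem x
  set e := x ^ k with hedef
  by_cases h0 : e = 0
  · exact Or.inl ⟨k, h0⟩
  by_cases h1 : e = 1
  · refine Or.inr (IsUnit.of_mul_eq_one (a := x) (x ^ (k - 1)) ?_)
    rw [← pow_succ']
    have : k - 1 + 1 = k := by omega
    rw [this]
    exact h1
  exfalso
  apply hnd
  set I : Ideal R := Ideal.span {e} with hI
  set J : Ideal R := Ideal.span {1 - e} with hJ
  have hIJtop : IsCoprime I J := by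
    rw [Ideal.isCoprime_iff_sup_eq, Ideal.eq_top_iff_one]
    have h1' : (1 : R) = e + (1 - e) := by ring
    rw [h1']
    exact Submodule.add_mem_sup (Ideal.subset_span rfl) (Ideal.subset_span rfl)
  have hIJbot : I ⊓ J = ⊥ := by
    rw [eq_bot_iff]
    intro z hz
    obtain ⟨hzI, hzJ⟩ := Submodule.mem_inf.mp hz
    rw [hI, Ideal.mem_span_singleton'] at hzI
    rw [hJ, Ideal.mem_span_singleton'] at hzJ
    obtain ⟨a, ha⟩ := hzI
    obtain ⟨b, hb⟩ := hzJ
    have h2 : z * e = z := by rw [← ha]; rw [mul_assoc, he]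
    have h3 : z * e = 0 := by rw [← hb]; rw [mul_assoc]; rw [sub_mul, one_mul, he]; ring_nf
    rw [Ideal.mem_bot]
    rw [← h2, h3]
  have hInetop : I ≠ ⊤ := by
    rw [hI, Ne, Ideal.span_singleton_eq_top]
    intro hu
    exact h1 (by
      obtain ⟨u, hu'⟩ := hu
      calc e = 1 * e := (one_mul e).symm
        _ = (↑u⁻¹ * ↑u) * e := by rw [Units.inv_mul]
        _ = ↑u⁻¹ * (e * e) := by rw [hu', mul_assoc]
        _ = ↑u⁻¹ * e := by rw [he]
        _ = ↑u⁻¹ * ↑u := by rw [hu']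
        _ = 1 := Units.inv_mul u)
  have hJnetop : J ≠ ⊤ := by
    rw [hJ, Ne, Ideal.span_singleton_eq_top]
    intro hu
    have hee : (1 - e) * (1 - e) = 1 - e := by
      rw [mul_sub, sub_mul, sub_mul, one_mul, mul_one, he]; ring
    exact h0 (by
      obtain ⟨u, hu'⟩ := hu
      have : (1 : R) - e = 1 := by
        calc (1 : R) - e = 1 * (1 - e) := (one_mul _).symm
          _ = (↑u⁻¹ * ↑u) * (1 - e) := by rw [Units.inv_mul]
          _ = ↑u⁻¹ * ((1 - e) * (1 - e)) := by rw [hu', mul_assoc]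
          _ = ↑u⁻¹ * (1 - e) := by rw [hee]
          _ = ↑u⁻¹ * ↑u := by rw [hu']
          _ = 1 := Units.inv_mul u
      linear_combination -this)
  haveI : Nontrivial (R ⧸ I) := Ideal.Quotient.nontrivial_iff.mpr hInetop
  haveI : Nontrivial (R ⧸ J) := Ideal.Quotient.nontrivial_iff.mpr hJnetop
  refine ⟨R ⧸ I, R ⧸ J, inferInstance, inferInstance, inferInstance, inferInstance, ⟨?_⟩⟩
  exact ((RingEquiv.quotientBot R).symm.trans
    (Ideal.quotEquivOfEq hIJbot.symm)).trans
    (Ideal.quotientInfEquivQuotientProd I J hIJtop)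

theorem stmt6 (R : Type u) [CommRing R] [Nontrivial R] [Fintype R] [DecidableEq R]
    [IsPrincipalIdealRing R] (hnd : ¬ IsDecomposable R) (hdom : ¬ IsDomain R)
    (hham : (zdvGraph R).IsHamiltonian) :
    indepNum (zdvGraph R) = 1 := by
  classical
  have hzd : ∃ x : R, x ≠ 0 ∧ ∃ y, y ≠ 0 ∧ x * y = 0 := by
    by_contra hcon
    push_neg at hcon
    apply hdom
    have : NoZeroDivisors R := ⟨fun {a b} hab => by
      by_contra hc
      push_neg at hc
      exact hcon a hc.1 b hc.2 hab⟩
    exact NoZeroDivisors.to_isDomain R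
  obtain ⟨x₀, hx₀, y₀, hy₀, hxy₀⟩ := hzd
  have dich : ∀ x : R, IsNilpotent x ∨ IsUnit x := nilpotent_or_unit R hnd
  have hzdnil : ∀ x : R, (∃ y, y ≠ 0 ∧ x * y = 0) → IsNilpotent x := by
    rintro x ⟨y, hy, hxy⟩
    rcases dich x with h | h
    · exact h
    · exact absurd (h.mul_right_eq_zero.mp hxy) hy
  obtain ⟨π, hπ⟩ := Submodule.IsPrincipal.principal (nilradical R)
  have hmemiff : ∀ x : R, IsNilpotent x ↔ π ∣ x := by
    intro x
    rw [← mem_nilradical, hπ, Ideal.submodule_span_eq, Ideal.mem_span_singleton]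
  have hπnil : IsNilpotent π := (hmemiff π).mpr dvd_rfl
  have hπne : π ≠ 0 := by
    intro h
    obtain ⟨c, hc⟩ := (hmemiff x₀).mp (hzdnil x₀ ⟨y₀, hy₀, hxy₀⟩)
    exact hx₀ (by rw [hc, h, zero_mul])
  obtain ⟨N, hN⟩ := hπnil
  have hexp : ∃ n, π ^ n = 0 := ⟨N, hN⟩
  have hπnil : IsNilpotent π := hexp
  set n := Nat.find hexp with hn_def
  have hn : π ^ n = 0 := Nat.find_spec hexp
  have hmin : ∀ k, k < n → π ^ k ≠ 0 := fun k hk => Nat.find_min hexp hk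
  have hn2 : 2 ≤ n := by
    have h0 : n ≠ 0 := fun h => by rw [h, pow_zero] at hn; exact one_ne_zero hn
    have h1 : n ≠ 1 := fun h => by rw [h, pow_one] at hn; exact hπne hn
    omega
  have hπn1 : π ^ (n - 1) ≠ 0 := hmin _ (by omega)
  have hvert : ∀ x : R, x ≠ 0 → IsNilpotent x → (x ≠ 0 ∧ ∃ y, y ≠ 0 ∧ x * y = 0) := by
    intro x hx hnx
    refine ⟨hx, π ^ (n - 1), hπn1, ?_⟩
    obtain ⟨c, hc⟩ := (hmemiff x).mp hnx
    rw [hc, mul_comm π c, mul_assoc, ← pow_succ']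
    have hsucc : n - 1 + 1 = n := by omega
    rw [hsucc, hn, mul_zero]
  by_cases hsq : π ^ 2 = 0
  · -- complete graph case
    have hcomplete : ∀ u v : {x : R // x ≠ 0 ∧ ∃ y ≠ 0, x * y = 0}, u ≠ v →
        (zdvGraph R).Adj u v := by
      intro u v huv
      refine ⟨huv, ?_⟩
      obtain ⟨c, hc⟩ := (hmemiff u.1).mp (hzdnil u.1 u.2.2)
      obtain ⟨d, hd⟩ := (hmemiff v.1).mp (hzdnil v.1 v.2.2)
      rw [hc, hd]
      calc π * c * (π * d) = c * d * π ^ 2 := by ring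
        _ = 0 := by rw [hsq, mul_zero]
    have hub : ∀ m : ℕ, (∃ s : Finset {x : R // x ≠ 0 ∧ ∃ y ≠ 0, x * y = 0},
        (s : Set _).Pairwise (fun a b => ¬ (zdvGraph R).Adj a b) ∧ s.card = m) → m ≤ 1 := by
      rintro m ⟨s, hs, rfl⟩
      by_contra hml
      push_neg at hml
      obtain ⟨a, ha, b, hb, hab⟩ := Finset.one_lt_card.mp hml
      exact hs ha hb hab (hcomplete a b hab)
    unfold indepNum
    apply le_antisymm
    · exact csSup_le ⟨0, ⟨∅, by simp, rfl⟩⟩ hub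
    · exact le_csSup ⟨1, hub⟩
        ⟨{⟨x₀, hx₀, y₀, hy₀, hxy₀⟩}, by simp, Finset.card_singleton _⟩
  · -- contradiction case
    exfalso
    have hπ2nil : IsNilpotent (π ^ 2) :=
      ⟨n, by rw [← pow_mul, mul_comm 2 n, pow_mul, hn]; exact zero_pow two_ne_zero⟩
    have vπ := hvert π hπne hπnil
    have vπ2 := hvert (π ^ 2) hsq hπ2nil
    have hne12 : π ≠ π ^ 2 := by
      intro h
      have hz : (1 - π) * π = 0 := by
        have : π - π ^ 2 = 0 := by rw [← h]; ring
        calc (1 - π) * π = π - π ^ 2 := by ring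
          _ = 0 := this
      have hu : IsUnit (1 - π) := hπnil.isUnit_one_sub
      exact hπne (hu.mul_right_eq_zero.mp hz)
    have hcard2 : 1 < Fintype.card {x : R // x ≠ 0 ∧ ∃ y ≠ 0, x * y = 0} :=
      Fintype.one_lt_card_iff_nontrivial.mpr
        ⟨⟨π, vπ⟩, ⟨π ^ 2, vπ2⟩, fun h => hne12 (congrArg Subtype.val h)⟩
    have hcardne : Fintype.card {x : R // x ≠ 0 ∧ ∃ y ≠ 0, x * y = 0} ≠ 1 := by omega
    set S : Finset {x : R // x ≠ 0 ∧ ∃ y ≠ 0, x * y = 0} :=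
      Finset.univ.filter (fun v => ¬ π ^ 2 ∣ (v : R)) with hS
    have hSmem : ∀ v, v ∈ S ↔ ¬ π ^ 2 ∣ (v : R) := by
      intro v
      simp [hS]
    have hSpair : (S : Set _).Pairwise (fun a b => ¬ (zdvGraph R).Adj a b) := by
      intro u hu v hv huv hadj
      obtain ⟨-, hmul⟩ := hadj
      rw [Finset.mem_coe, hSmem] at hu hv
      obtain ⟨c, hc⟩ := (hmemiff u.1).mp (hzdnil u.1 u.2.2)
      obtain ⟨d, hd⟩ := (hmemiff v.1).mp (hzdnil v.1 v.2.2)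
      have hcu : IsUnit c := by
        rcases dich c with hcn | hcu
        · obtain ⟨c', hc'⟩ := (hmemiff c).mp hcn
          exact absurd ⟨c', by rw [hc, hc']; ring⟩ hu
        · exact hcu
      have hdu : IsUnit d := by
        rcases dich d with hdn | hdu
        · obtain ⟨d', hd'⟩ := (hmemiff d).mp hdn
          exact absurd ⟨d', by rw [hd, hd']; ring⟩ hv
        · exact hdu
      have : (c * d) * π ^ 2 = 0 := by
        rw [← hmul, hc, hd]; ring
      exact hsq ((hcu.mul hdu).mul_right_eq_zero.mp this)
    have hgr := indep_two_mul_le hham hcardne S hSpair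
    set MA : Finset R := Finset.univ.filter (fun x => IsNilpotent x) with hMA
    set MB : Finset R := Finset.univ.filter (fun x => π ^ 2 ∣ x) with hMB
    have hMAmem : ∀ x : R, x ∈ MA ↔ IsNilpotent x := by intro x; simp [hMA]
    have hMBmem : ∀ x : R, x ∈ MB ↔ π ^ 2 ∣ x := by intro x; simp [hMB]
    have hBA : MB ⊆ MA := by
      intro x hx
      rw [hMBmem] at hx
      obtain ⟨c, hc⟩ := hx
      rw [hMAmem]
      exact (hmemiff x).mpr ⟨π * c, by rw [hc]; ring⟩
    have h0B : (0 : R) ∈ MB := (hMBmem 0).mpr (dvd_zero _)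
    have h0A : (0 : R) ∈ MA := hBA h0B
    have hfilterV : Finset.univ.filter (fun x : R => x ≠ 0 ∧ ∃ y ≠ 0, x * y = 0)
        = MA.erase 0 := by
      ext x
      rw [Finset.mem_filter, Finset.mem_erase, hMAmem]
      constructor
      · rintro ⟨-, hx, hy⟩
        exact ⟨hx, hzdnil x hy⟩
      · rintro ⟨hx, hnilx⟩
        exact ⟨Finset.mem_univ x, hvert x hx hnilx⟩
    have hcardV : Fintype.card {x : R // x ≠ 0 ∧ ∃ y ≠ 0, x * y = 0} = MA.card - 1 := by
      rw [Fintype.card_subtype, hfilterV, Finset.card_erase_of_mem h0A]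
    have hA1 : 1 ≤ MA.card := Finset.card_pos.mpr ⟨0, h0A⟩
    have himage : S.image Subtype.val = MA \ MB := by
      ext x
      rw [Finset.mem_sdiff, hMAmem, hMBmem]
      constructor
      · rintro hx
        obtain ⟨v, hvS, rfl⟩ := Finset.mem_image.mp hx
        rw [hSmem] at hvS
        exact ⟨hzdnil v.1 v.2.2, hvS⟩
      · rintro ⟨hxA, hxB⟩
        have hx0 : x ≠ 0 := fun h => hxB (h ▸ dvd_zero _)
        refine Finset.mem_image.mpr ⟨⟨x, hvert x hx0 hxA⟩, ?_, rfl⟩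
        rw [hSmem]
        exact hxB
    have hcardS : S.card = MA.card - MB.card := by
      rw [← Finset.card_image_of_injective S Subtype.val_injective, himage,
        Finset.card_sdiff_of_subset hBA]
    have hdvd : MB.card ∣ MA.card := by
      have hle : (Ideal.span {π ^ 2} : Ideal R).toAddSubgroup
          ≤ (nilradical R).toAddSubgroup := by
        intro z hz
        rw [Submodule.mem_toAddSubgroup, Ideal.mem_span_singleton] at hz
        rw [Submodule.mem_toAddSubgroup, mem_nilradical]
        exact (hmemiff z).mpr (dvd_trans (dvd_pow_self π two_ne_zero) hz)
      have hd := AddSubgroup.card_dvd_of_le hle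
      have e1 : Nat.card (Ideal.span {π ^ 2} : Ideal R).toAddSubgroup = MB.card := by
        rw [Nat.card_eq_fintype_card, Fintype.card_subtype]
        exact congrArg Finset.card (Finset.filter_congr (fun x _ => by
          simp [hMB, Submodule.mem_toAddSubgroup, Ideal.mem_span_singleton]))
      have e2 : Nat.card (nilradical R).toAddSubgroup = MA.card := by
        rw [Nat.card_eq_fintype_card, Fintype.card_subtype]
        exact congrArg Finset.card (Finset.filter_congr (fun x _ => by
          simp [hMA, Submodule.mem_toAddSubgroup, mem_nilradical]))
      rw [e1, e2] at hd
      exact hd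
    have hBlt : MB.card < MA.card := by
      have hπA : π ∈ MA := (hMAmem π).mpr hπnil
      have hπB : π ∉ MB := by
        rw [hMBmem]
        rintro ⟨c, hc⟩
        have hz : (1 - π * c) * π = 0 := by
          calc (1 - π * c) * π = π - π ^ 2 * c := by ring
            _ = 0 := by rw [← hc]; ring
        have hu : IsUnit (1 - π * c) :=
          IsNilpotent.isUnit_one_sub ((hmemiff _).mpr ⟨c, by ring⟩)
        exact hπne (hu.mul_right_eq_zero.mp hz)
      exact Finset.card_lt_card ⟨hBA, fun hsub => hπB (hsub hπA)⟩
    have hB1 : 1 ≤ MB.card := Finset.card_pos.mpr ⟨0, h0B⟩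
    have h2B : 2 * MB.card ≤ MA.card := by
      obtain ⟨k, hk⟩ := hdvd
      rcases k with _ | _ | k
      · omega
      · omega
      · nlinarith
    omega
end

section
/- For every natural number n ≥ 2, if the zero-divisor graph Γ(ℤ/nℤ) of the ring of integers modulo n is a Hamiltonian graph, then α(Γ(ℤ/nℤ)) = 1. -/
open Finset SimpleGraph

lemma getVert_eq_support_getElem' {V : Type*} {G : SimpleGraph V} {u v : V} (p : G.Walk u v)
    (i : ℕ) (h : i < p.support.length) : p.getVert i = p.support[i] := by
  induction p generalizing i with
  | nil =>
    simp only [Walk.support_nil, List.length_singleton] at h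
    interval_cases i
    simp
  | cons hadj q ih =>
    cases i with
    | zero => simp
    | succ i =>
      simp only [Walk.support_cons, List.getElem_cons_succ, Walk.getVert_cons_succ]
      exact ih i (by simpa using h)

lemma hamCycle_indep {V : Type*} [Fintype V] [DecidableEq V] {G : SimpleGraph V} {a : V}
    {c : G.Walk a a} (hc : c.IsHamiltonianCycle) {t : Finset V}
    (ht : (t : Set V).Pairwise (fun x y => ¬ G.Adj x y)) :
    2 * t.card ≤ Fintype.card V := by
  have hN : c.length = Fintype.card V := hc.length_eq
  set N := c.length with hNdef
  have hN3 : 3 ≤ N := hc.isCycle.three_le_length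
  have hLlen : c.support.length = N + 1 := by simp [Walk.length_support, hNdef]
  have htl : c.support.tail.length = N := by simp [hLlen]
  have hnodup : c.support.tail.Nodup := by
    rw [List.nodup_iff_count_le_one]
    intro v
    have h1 := hc.isHamiltonian_tail v
    rw [Walk.support_tail_of_not_nil c hc.isCycle.not_nil] at h1
    omega
  set f : ℕ → V := fun k => c.getVert (k + 1) with hf
  have htail : ∀ k (hk : k < N), c.support.tail[k]'(by omega) = f k := by
    intro k hk
    rw [List.getElem_tail, ← getVert_eq_support_getElem' c (k+1) (by omega)]
  have hinj : ∀ i < N, ∀ j < N, f i = f j → i = j := by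
    intro i hi j hj hij
    rw [← htail i hi, ← htail j hj] at hij
    exact hnodup.getElem_inj_iff.mp hij
  have hsurj : ∀ v : V, ∃ i < N, f i = v := by
    intro v
    have hmem : v ∈ c.support.tail := by
      have h1 := hc.isHamiltonian_tail v
      rw [Walk.support_tail_of_not_nil c hc.isCycle.not_nil] at h1
      exact List.count_pos_iff.mp (by omega)
    obtain ⟨k, hk, hkv⟩ := List.getElem_of_mem hmem
    exact ⟨k, by omega, by rw [← htail k (by omega)]; exact hkv⟩
  have hadj : ∀ i < N, G.Adj (f i) (f (if i + 1 = N then 0 else i + 1)) := by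
    intro i hi
    by_cases hiN : i + 1 = N
    · rw [if_pos hiN]
      have h1 : f i = c.getVert 0 := by
        rw [hf]; simp only []
        rw [hiN, Walk.getVert_length, Walk.getVert_zero]
      rw [h1]
      simpa using c.adj_getVert_succ (by omega : 0 < c.length)
    · rw [if_neg hiN]
      exact c.adj_getVert_succ (by omega : i + 1 < c.length)
  classical
  set T : Finset ℕ := (range N).filter (fun i => f i ∈ t) with hT
  have hTcard : T.card = t.card := by
    apply Finset.card_bij (fun i _ => f i)
    · intro i hi; exact (Finset.mem_filter.mp hi).2
    · intro i hi j hj hij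
      have hi' := Finset.mem_range.mp (Finset.mem_filter.mp hi).1
      have hj' := Finset.mem_range.mp (Finset.mem_filter.mp hj).1
      exact hinj i hi' j hj' hij
    · intro v hv
      obtain ⟨i, hiN, hiv⟩ := hsurj v
      exact ⟨i, Finset.mem_filter.mpr ⟨Finset.mem_range.mpr hiN, hiv ▸ hv⟩, hiv⟩
  set σ : ℕ → ℕ := fun i => if i + 1 = N then 0 else i + 1 with hσ
  have hσlt : ∀ i < N, σ i < N := by intro i hi; simp only [hσ]; split <;> omega
  have hkey : ∀ i ∈ T, σ i ∉ T := by
    intro i hiT hσiT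
    have hiN := Finset.mem_range.mp (Finset.mem_filter.mp hiT).1
    have h1 : f i ∈ t := (Finset.mem_filter.mp hiT).2
    have h2 : f (σ i) ∈ t := (Finset.mem_filter.mp hσiT).2
    have hA := hadj i hiN
    exact ht h1 h2 hA.ne hA
  have hσinj : Set.InjOn σ T := by
    intro i hi j hj hij
    simp only [hσ] at hij
    split at hij <;> split at hij <;> omega
  have hdisj : Disjoint T (T.image σ) := by
    rw [Finset.disjoint_left]
    intro x hx hx'
    obtain ⟨i, hi, rfl⟩ := Finset.mem_image.mp hx'
    exact hkey i hi hx
  have hsub : T ∪ T.image σ ⊆ range N := by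
    intro x hx
    rcases Finset.mem_union.mp hx with h | h
    · exact (Finset.mem_filter.mp h).1
    · obtain ⟨i, hi, rfl⟩ := Finset.mem_image.mp h
      exact Finset.mem_range.mpr (hσlt i (Finset.mem_range.mp (Finset.mem_filter.mp hi).1))
  have := Finset.card_le_card hsub
  rw [Finset.card_union_of_disjoint hdisj, Finset.card_image_of_injOn hσinj,
    Finset.card_range] at this
  omega

-- x*y = 0 in ZMod n iff n divides product of vals
lemma zmul_eq_zero_iff (n : ℕ) [NeZero n] (x y : ZMod n) :
    x * y = 0 ↔ n ∣ x.val * y.val := by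
  have h : ((x.val * y.val : ℕ) : ZMod n) = x * y := by
    rw [Nat.cast_mul, ZMod.natCast_rightInverse x, ZMod.natCast_rightInverse y]
  rw [← h, ZMod.natCast_eq_zero_iff]

-- a nonzero multiple of a proper divisor is a vertex
lemma vertex_mk (n p : ℕ) [NeZero n] (hp : 2 ≤ p) (hpn : p ∣ n) {x : ZMod n}
    (hx : p ∣ x.val) (hx0 : x.val ≠ 0) : x ≠ 0 ∧ ∃ y ≠ 0, x * y = 0 := by
  have hn : 0 < n := Nat.pos_of_ne_zero (NeZero.ne n)
  have hnp1 : 0 < n / p := Nat.div_pos (Nat.le_of_dvd hn hpn) (by omega)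
  have hnp2 : n / p < n := Nat.div_lt_self hn (by omega)
  refine ⟨fun h => hx0 (by simp [h]), ⟨((n / p : ℕ) : ZMod n), ?_, ?_⟩⟩
  · rw [Ne, ZMod.natCast_eq_zero_iff]
    intro h
    exact absurd (Nat.le_of_dvd hnp1 h) (by omega)
  · rw [show x = ((x.val : ℕ) : ZMod n) from (ZMod.natCast_rightInverse x).symm,
      ← Nat.cast_mul, ZMod.natCast_eq_zero_iff]
    obtain ⟨m, hm⟩ := hx
    rw [hm, mul_comm p m, mul_assoc, Nat.mul_div_cancel' hpn]
    exact dvd_mul_left _ _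

lemma card_filter_ne_dvd (n d : ℕ) (hn : 0 < n) (hd : d ∣ n) (hd0 : 2 ≤ d) :
    ((range n).filter (fun k => k ≠ 0 ∧ d ∣ k)).card = n / d - 1 := by
  obtain ⟨m, rfl⟩ := hd
  have hm : 0 < m := Nat.pos_of_ne_zero (by rintro rfl; simp at hn)
  obtain ⟨m', rfl⟩ : ∃ m', m = m' + 1 := ⟨m - 1, by omega⟩
  have h1 : d * (m' + 1) - 1 + 1 = d * (m' + 1) := by
    rw [Nat.mul_add, Nat.mul_one]; omega
  have h2 := Nat.card_multiples' (d * (m' + 1) - 1) d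
  rw [Nat.succ_eq_add_one, h1] at h2
  rw [show ((range (d * (m' + 1))).filter (fun k => k ≠ 0 ∧ d ∣ k)) =
    {k ∈ range (d * (m' + 1)) | k ≠ 0 ∧ d ∣ k} from rfl, h2]
  rw [Nat.mul_div_cancel_left _ (by omega : 0 < d)]
  have h3 : d * (m' + 1) - 1 = (d - 1) + d * m' := by
    rw [Nat.mul_add, Nat.mul_one]; omega
  rw [h3, Nat.add_mul_div_left _ _ (by omega : 0 < d), Nat.div_eq_of_lt (by omega)]
  omega

lemma card_filter_dvd' (n d : ℕ) (hn : 0 < n) (hd : d ∣ n) (hd0 : 2 ≤ d) :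
    ((range n).filter (fun k => d ∣ k)).card = n / d := by
  have hsplit : (range n).filter (fun k => d ∣ k) =
      insert 0 ((range n).filter (fun k => k ≠ 0 ∧ d ∣ k)) := by
    ext k
    simp only [Finset.mem_filter, Finset.mem_insert, Finset.mem_range]
    constructor
    · rintro ⟨h1, h2⟩
      by_cases hk : k = 0
      · exact Or.inl hk
      · exact Or.inr ⟨h1, hk, h2⟩
    · rintro (rfl | ⟨h1, h2, h3⟩)
      · exact ⟨hn, dvd_zero d⟩
      · exact ⟨h1, h3⟩
  rw [hsplit, Finset.card_insert_of_notMem (by simp), card_filter_ne_dvd n d hn hd hd0]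
  have : 1 ≤ n / d := Nat.one_le_div_iff (by omega) |>.mpr (Nat.le_of_dvd hn hd)
  omega

lemma card_filter_dvd_not_dvd (n p r q : ℕ) (hn : 0 < n) (hpn : p ∣ n) (hqn : q ∣ n)
    (hp0 : 2 ≤ p) (hq0 : 2 ≤ q)
    (hiff : ∀ k, (p ∣ k ∧ r ∣ k) ↔ q ∣ k) :
    ((range n).filter (fun k => p ∣ k ∧ ¬ r ∣ k)).card = n / p - n / q := by
  have hsplit := Finset.card_filter_add_card_filter_not
    (s := (range n).filter (fun k => p ∣ k)) (p := fun k => r ∣ k)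
  rw [Finset.filter_filter, Finset.filter_filter] at hsplit
  have h1 : ((range n).filter (fun k => p ∣ k ∧ r ∣ k)).card = n / q := by
    rw [show ((range n).filter (fun k => p ∣ k ∧ r ∣ k)) =
        ((range n).filter (fun k => q ∣ k)) from by
      ext k; simp only [Finset.mem_filter]
      exact ⟨fun ⟨h, hpr⟩ => ⟨h, (hiff k).mp hpr⟩,
        fun ⟨h, hq⟩ => ⟨h, (hiff k).mpr hq⟩⟩]
    exact card_filter_dvd' n q hn hqn hq0
  have h2 := card_filter_dvd' n p hn hpn hp0
  have h3 : ((range n).filter (fun k => p ∣ k ∧ ¬ r ∣ k)).card =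
      ((range n).filter (fun a => p ∣ a ∧ ¬ r ∣ a)).card := rfl
  omega

lemma card_subtype_filter {α : Type*} [Fintype α] [DecidableEq α] (P : α → Prop)
    [DecidablePred P] (Q : α → Prop) [DecidablePred Q] [Fintype {x // P x}] :
    ((univ : Finset {x // P x}).filter (fun v => Q v.val)).card
      = ((univ : Finset α).filter (fun x => P x ∧ Q x)).card := by
  apply Finset.card_bij (fun v _ => v.val)
  · intro v hv
    exact Finset.mem_filter.mpr ⟨Finset.mem_univ _, v.2, (Finset.mem_filter.mp hv).2⟩
  · intro v _ w _ h; exact Subtype.ext h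
  · intro x hx
    obtain ⟨-, hP, hQ⟩ := Finset.mem_filter.mp hx
    exact ⟨⟨x, hP⟩, Finset.mem_filter.mpr ⟨Finset.mem_univ _, hQ⟩, rfl⟩

lemma card_zmod_filter (n : ℕ) [NeZero n] (R : ℕ → Prop) [DecidablePred R] :
    ((univ : Finset (ZMod n)).filter (fun x => R x.val)).card
      = ((range n).filter R).card := by
  apply Finset.card_bij (fun x _ => x.val)
  · intro x hx
    exact Finset.mem_filter.mpr ⟨Finset.mem_range.mpr (ZMod.val_lt x),
      (Finset.mem_filter.mp hx).2⟩
  · intro x _ y _ h; exact ZMod.val_injective n h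
  · intro k hk
    obtain ⟨hk1, hk2⟩ := Finset.mem_filter.mp hk
    have hlt := Finset.mem_range.mp hk1
    exact ⟨(k : ZMod n), Finset.mem_filter.mpr ⟨Finset.mem_univ _,
      by rw [ZMod.val_cast_of_lt hlt]; exact hk2⟩, ZMod.val_cast_of_lt hlt⟩

lemma big_indep_contra (n p r q : ℕ) [NeZero n]
    (hp : 2 ≤ p) (hr : 2 ≤ r) (hq : 2 ≤ q)
    (hpn : p ∣ n) (hrn : r ∣ n) (hqn : q ∣ n)
    (hiff : ∀ k, (p ∣ k ∧ r ∣ k) ↔ q ∣ k)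
    (hindep : ∀ x y : ZMod n, ¬ r ∣ x.val → ¬ r ∣ y.val → x * y ≠ 0)
    (harith : n / r - 1 < n / p - n / q)
    (H : (zdvGraph (ZMod n)).IsHamiltonian)
    (hnt : 2 ≤ Fintype.card {x : ZMod n // x ≠ 0 ∧ ∃ y ≠ 0, x * y = 0}) : False := by
  have hn : 0 < n := Nat.pos_of_ne_zero (NeZero.ne n)
  obtain ⟨a, c, hc⟩ := H (by omega)
  have hSindep : (((univ.filter (fun v : {x : ZMod n // x ≠ 0 ∧ ∃ y ≠ 0, x * y = 0} =>
      ¬ r ∣ (v : ZMod n).val)) : Finset _) : Set _).Pairwise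
      (fun x y => ¬ (zdvGraph (ZMod n)).Adj x y) := by
    intro x hx y hy _ hadj
    have h1 : ¬ r ∣ (x : ZMod n).val := (Finset.mem_filter.mp (Finset.mem_coe.mp hx)).2
    have h2 : ¬ r ∣ (y : ZMod n).val := (Finset.mem_filter.mp (Finset.mem_coe.mp hy)).2
    exact hindep _ _ h1 h2 (hadj : x ≠ y ∧ (x : ZMod n) * y = 0).2
  have hpig := hamCycle_indep hc hSindep
  have hsplit := Finset.card_filter_add_card_filter_not
    (s := (univ : Finset {x : ZMod n // x ≠ 0 ∧ ∃ y ≠ 0, x * y = 0}))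
    (p := fun v => ¬ r ∣ (v : ZMod n).val)
  simp only [not_not] at hsplit
  rw [Finset.card_univ] at hsplit
  -- upper bound on the complement
  have hCcard : (univ.filter (fun v : {x : ZMod n // x ≠ 0 ∧ ∃ y ≠ 0, x * y = 0} =>
      r ∣ (v : ZMod n).val)).card ≤ n / r - 1 := by
    have e1 := card_subtype_filter (fun x : ZMod n => x ≠ 0 ∧ ∃ y ≠ 0, x * y = 0)
      (fun x : ZMod n => r ∣ x.val)
    have e2 : ((univ : Finset (ZMod n)).filter
        (fun x => (x ≠ 0 ∧ ∃ y ≠ 0, x * y = 0) ∧ r ∣ x.val)).card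
        ≤ ((univ : Finset (ZMod n)).filter (fun x => x.val ≠ 0 ∧ r ∣ x.val)).card := by
      apply Finset.card_le_card
      apply Finset.monotone_filter_right
      rintro x - ⟨⟨hx0, -⟩, hx⟩
      exact ⟨fun h => hx0 ((ZMod.val_eq_zero x).mp h), hx⟩
    have e3 : ((univ : Finset (ZMod n)).filter (fun x => x.val ≠ 0 ∧ r ∣ x.val)).card
        = ((range n).filter (fun k => k ≠ 0 ∧ r ∣ k)).card :=
      card_zmod_filter n (fun k => k ≠ 0 ∧ r ∣ k)
    rw [card_filter_ne_dvd n r hn hrn hr] at e3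
    omega
  -- lower bound on the independent set
  have hScard : n / p - n / q ≤ (univ.filter
      (fun v : {x : ZMod n // x ≠ 0 ∧ ∃ y ≠ 0, x * y = 0} =>
      ¬ r ∣ (v : ZMod n).val)).card := by
    have e1 := card_subtype_filter (fun x : ZMod n => x ≠ 0 ∧ ∃ y ≠ 0, x * y = 0)
      (fun x : ZMod n => ¬ r ∣ x.val)
    have e2 : ((univ : Finset (ZMod n)).filter (fun x => p ∣ x.val ∧ ¬ r ∣ x.val)).card
        ≤ ((univ : Finset (ZMod n)).filter
        (fun x => (x ≠ 0 ∧ ∃ y ≠ 0, x * y = 0) ∧ ¬ r ∣ x.val)).card := by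
      apply Finset.card_le_card
      apply Finset.monotone_filter_right
      rintro x - ⟨hx1, hx2⟩
      have hx0 : x.val ≠ 0 := fun h => hx2 (h ▸ dvd_zero r)
      exact ⟨vertex_mk n p hp hpn hx1 hx0, hx2⟩
    have e3 : ((univ : Finset (ZMod n)).filter (fun x => p ∣ x.val ∧ ¬ r ∣ x.val)).card
        = ((range n).filter (fun k => p ∣ k ∧ ¬ r ∣ k)).card :=
      card_zmod_filter n (fun k => p ∣ k ∧ ¬ r ∣ k)
    rw [card_filter_dvd_not_dvd n p r q hn hpn hqn hp hq hiff] at e3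
    omega
  omega

lemma vertP {n p A : ℕ} [NeZero n] (hp : p.Prime) (hn : n = p ^ A)
    (x : {x : ZMod n // x ≠ 0 ∧ ∃ y ≠ 0, x * y = 0}) : p ∣ (x : ZMod n).val := by
  by_contra h
  obtain ⟨y, hy0, hxy⟩ := x.2.2
  have hcop : Nat.Coprime n (x : ZMod n).val := by
    have h2 : Nat.Coprime (p ^ A) ((x : ZMod n).val) :=
      Nat.Coprime.pow_left A ((Nat.Prime.coprime_iff_not_dvd hp).mpr h)
    rwa [← hn] at h2
  have hdvd : n ∣ (x : ZMod n).val * y.val := (zmul_eq_zero_iff n _ _).mp hxy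
  have h2 : n ∣ y.val := hcop.dvd_of_dvd_mul_left hdvd
  have h3 : y.val = 0 := Nat.eq_zero_of_dvd_of_lt h2 (ZMod.val_lt y)
  exact hy0 ((ZMod.val_eq_zero y).mp h3)

theorem stmt7 (n : ℕ) (hn : 2 ≤ n) :
    letI : NeZero n := ⟨by omega⟩
    (zdvGraph (ZMod n)).IsHamiltonian → _root_.indepNum (zdvGraph (ZMod n)) = 1 := by
  intro H
  haveI : NeZero n := ⟨by omega⟩
  have key : ∀ t : Finset {x : ZMod n // x ≠ 0 ∧ ∃ y ≠ 0, x * y = 0},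
      (t : Set _).Pairwise (fun a b => ¬ (zdvGraph (ZMod n)).Adj a b) → t.card ≤ 1 := by
    intro t ht
    by_contra hcard
    push_neg at hcard
    obtain ⟨v, hv, w, hw, hvw⟩ := Finset.one_lt_card.mp hcard
    have hnadj : ¬ (zdvGraph (ZMod n)).Adj v w :=
      ht (Finset.mem_coe.mpr hv) (Finset.mem_coe.mpr hw) hvw
    have hnt : 2 ≤ Fintype.card {x : ZMod n // x ≠ 0 ∧ ∃ y ≠ 0, x * y = 0} :=
      Fintype.one_lt_card_iff_nontrivial.mpr ⟨v, w, hvw⟩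
    have hp : n.minFac.Prime := Nat.minFac_prime (by omega)
    have hpn : n.minFac ∣ n := Nat.minFac_dvd n
    set p := n.minFac with hpdef
    by_cases hpow : n = p ^ (n.factorization p)
    · set A := n.factorization p with hAdef
      have hA1 : A ≠ 0 := by
        rintro h
        rw [h, pow_zero] at hpow
        omega
      rcases lt_or_ge A 3 with hA3 | hA3
      · -- A = 1 or A = 2
        have hAv := vertP hp hpow v
        have hAw := vertP hp hpow w
        have hv0 : (v : ZMod n).val ≠ 0 := fun h => v.2.1 ((ZMod.val_eq_zero _).mp h)
        rcases (by omega : A = 1 ∨ A = 2) with h1 | h2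
        · rw [h1, pow_one] at hpow
          have h4 : p ≤ (v : ZMod n).val := Nat.le_of_dvd (by omega) hAv
          have h5 := ZMod.val_lt (v : ZMod n)
          omega
        · apply hnadj
          refine ⟨hvw, ?_⟩
          obtain ⟨a, ha'⟩ : ∃ a, (v : ZMod n).val = a := ⟨_, rfl⟩
          obtain ⟨b, hb'⟩ : ∃ b, (w : ZMod n).val = b := ⟨_, rfl⟩
          rw [ha'] at hAv; rw [hb'] at hAw
          rw [zmul_eq_zero_iff, ha', hb', hpow, h2, pow_two]
          obtain ⟨a', ha⟩ := hAv
          obtain ⟨b', hb⟩ := hAw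
          rw [ha, hb]
          exact mul_dvd_mul (dvd_mul_right _ _) (dvd_mul_right _ _)
      · -- A ≥ 3
        have hC2 : 2 ≤ (A + 1) / 2 := by omega
        have hC0 : (A + 1) / 2 ≠ 0 := by omega
        have hCA : (A + 1) / 2 < A := by omega
        have h2C : 2 * ((A + 1) / 2) ≤ A + 1 := by omega
        set C := (A + 1) / 2 with hCdef
        have hp2 : 2 ≤ p := hp.two_le
        have hpow_le : ∀ k : ℕ, k ≠ 0 → 2 ≤ p ^ k := by
          intro k hk
          have h1 : p ^ 1 ≤ p ^ k := Nat.pow_le_pow_right (by omega : 0 < p) (by omega : 1 ≤ k)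
          rw [pow_one] at h1
          omega
        have hpC2 : 2 ≤ p ^ C := hpow_le C hC0
        have hrn : p ^ C ∣ n := by rw [hpow]; exact pow_dvd_pow p (by omega)
        refine big_indep_contra n p (p ^ C) (p ^ C) hp2 hpC2 hpC2 hpn hrn hrn
          (fun k => ⟨fun h => h.2, fun h => ⟨dvd_trans (dvd_pow_self p hC0) h, h⟩⟩)
          ?_ ?_ H hnt
        · intro x y hx hy h0
          have hdvd : n ∣ x.val * y.val := (zmul_eq_zero_iff n _ _).mp h0
          obtain ⟨a, ha⟩ : ∃ a, x.val = a := ⟨_, rfl⟩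
          obtain ⟨b, hb⟩ : ∃ b, y.val = b := ⟨_, rfl⟩
          rw [ha] at hx; rw [hb] at hy; rw [ha, hb] at hdvd
          rw [hpow] at hdvd
          have ha0 : a ≠ 0 := fun h => hx (h ▸ dvd_zero _)
          have hb0 : b ≠ 0 := fun h => hy (h ▸ dvd_zero _)
          have hfA : A ≤ (a * b).factorization p :=
            (Nat.Prime.pow_dvd_iff_le_factorization hp (mul_ne_zero ha0 hb0)).mp hdvd
          rw [Nat.factorization_mul ha0 hb0, Finsupp.add_apply] at hfA
          have hfx : ¬ C ≤ a.factorization p :=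
            fun h => hx ((Nat.Prime.pow_dvd_iff_le_factorization hp ha0).mpr h)
          have hfy : ¬ C ≤ b.factorization p :=
            fun h => hy ((Nat.Prime.pow_dvd_iff_le_factorization hp hb0).mpr h)
          omega
        · have e1 : n / p = p ^ (A - 1) := by
            have h1 := Nat.pow_div (show 1 ≤ A by omega) hp.pos (x := p)
            rw [pow_one] at h1
            rw [hpow]
            exact h1
          have e2 : n / p ^ C = p ^ (A - C) := by
            rw [hpow]
            exact Nat.pow_div (show C ≤ A by omega) hp.pos
          have e3 : p ^ (A - 1) = p ^ (A - C) * p ^ (C - 1) := by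
            rw [← pow_add]
            congr 1
            omega
          have e4 : 2 ≤ p ^ (C - 1) := hpow_le (C - 1) (by omega)
          have e5 : 1 ≤ p ^ (A - C) := Nat.one_le_pow _ _ hp.pos
          have e6 : 2 * p ^ (A - C) ≤ p ^ (A - 1) := by
            rw [e3]
            calc 2 * p ^ (A - C) = p ^ (A - C) * 2 := by ring
            _ ≤ p ^ (A - C) * p ^ (C - 1) := Nat.mul_le_mul_left _ e4
          rw [e1, e2]
          omega
    · -- two distinct primes
      have hn0 : n ≠ 0 := by omega
      have hm1 : n / p ^ (n.factorization p) ≠ 1 := by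
        intro h
        have := Nat.ordProj_mul_ordCompl_eq_self n p
        rw [h, mul_one] at this
        exact hpow this.symm
      set m := n / p ^ (n.factorization p) with hmdef
      have hs : m.minFac.Prime := Nat.minFac_prime hm1
      have hsm : m.minFac ∣ m := Nat.minFac_dvd m
      have hmn : m ∣ n := Nat.ordCompl_dvd n p
      have hsn : m.minFac ∣ n := dvd_trans hsm hmn
      set s := m.minFac with hsdef
      have hps : p ≠ s := by
        intro h
        rw [← h] at hsm
        exact Nat.not_dvd_ordCompl hp hn0 hsm
      have hple : p ≤ s := Nat.minFac_le_of_dvd hs.two_le hsn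
      have hplt : p < s := lt_of_le_of_ne hple hps
      have hp2 : 2 ≤ p := hp.two_le
      have hs2 : 2 ≤ s := hs.two_le
      have hcop : Nat.Coprime p s := (Nat.coprime_primes hp hs).mpr hps
      have hqn : p * s ∣ n := hcop.mul_dvd_of_dvd_of_dvd hpn hsn
      have hq2 : 2 ≤ p * s := le_trans hp2 (Nat.le_mul_of_pos_right p (by omega))
      refine big_indep_contra n p s (p * s) hp2 hs2 hq2 hpn hsn hqn
        (fun k => ⟨fun h => hcop.mul_dvd_of_dvd_of_dvd h.1 h.2,
          fun h => ⟨dvd_trans (dvd_mul_right p s) h, dvd_trans (dvd_mul_left s p) h⟩⟩)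
        ?_ ?_ H hnt
      · intro x y hx hy h0
        have hdvd : n ∣ x.val * y.val := (zmul_eq_zero_iff n _ _).mp h0
        have : s ∣ x.val * y.val := dvd_trans hsn hdvd
        rcases (Nat.Prime.dvd_mul hs).mp this with h | h
        · exact hx h
        · exact hy h
      · obtain ⟨t', ht'⟩ := hqn
        have ht0 : 1 ≤ t' := by
          rcases Nat.eq_zero_or_pos t' with h | h
          · rw [h, mul_zero] at ht'; omega
          · exact h
        have e1 : n / p = s * t' := by
          rw [ht', mul_assoc, Nat.mul_div_cancel_left _ (by omega : 0 < p)]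
        have e2 : n / s = p * t' := by
          rw [ht', show p * s * t' = s * (p * t') by ring,
            Nat.mul_div_cancel_left _ (by omega : 0 < s)]
        have e3 : n / (p * s) = t' := by
          rw [ht', Nat.mul_div_cancel_left _ (by omega : 0 < p * s)]
        rw [e1, e2, e3]
        have h1 : (p + 1) * t' ≤ s * t' := Nat.mul_le_mul_right t' (by omega)
        rw [add_mul, one_mul] at h1
        have h2 : 0 < p * t' := Nat.mul_pos (by omega) (by omega)
        calc p * t' - 1 < p * t' := Nat.sub_lt (by omega) one_pos
        _ ≤ s * t' - t' := Nat.le_sub_of_add_le h1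
  -- nonempty vertex set
  rcases isEmpty_or_nonempty {x : ZMod n // x ≠ 0 ∧ ∃ y ≠ 0, x * y = 0} with he | hne
  · have hc0 : Fintype.card {x : ZMod n // x ≠ 0 ∧ ∃ y ≠ 0, x * y = 0} = 0 :=
      Fintype.card_eq_zero
    obtain ⟨a, -, -⟩ := H (by omega)
    exact (he.false a).elim
  · obtain ⟨v0⟩ := hne
    rw [_root_.indepNum]
    apply le_antisymm
    · apply csSup_le
      · exact ⟨0, ∅, by simp, rfl⟩
      · rintro m ⟨t, ht, rfl⟩
        exact key t ht
    · refine le_csSup ⟨1, ?_⟩ ?_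
      · rintro m ⟨t, ht, rfl⟩
        exact key t ht
      · exact ⟨{v0}, by simp, Finset.card_singleton v0⟩
end

section
/- Let F1, F2, F3 be finite fields with |F_i \ {0}| = n_i for i = 1, 2, 3, where n1 ≥ n2 ≥ n3. If R = F1 × F2 × F3, then α(Γ(R)) = n1·n2 + n1·n3 + max{n1, n2·n3}. -/
section Aux

/-- Splitting a subtype of a triple product into a product of subtypes. -/
def prodSubtypeEquiv {α β γ : Type*} (p : α → Prop) (q : β → Prop) (r : γ → Prop) :
    {x : α × β × γ // p x.1 ∧ q x.2.1 ∧ r x.2.2} ≃ {a // p a} × {b // q b} × {c // r c} where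
  toFun x := (⟨x.1.1, x.2.1⟩, ⟨x.1.2.1, x.2.2.1⟩, ⟨x.1.2.2, x.2.2.2⟩)
  invFun y := ⟨(y.1.1, y.2.1.1, y.2.2.1), y.1.2, y.2.1.2, y.2.2.2⟩
  left_inv _ := rfl
  right_inv _ := rfl

lemma arith_bound (n₁ n₂ n₃ a b c d e f : ℕ) (h1 : 1 ≤ n₃) (h12 : n₂ ≤ n₁) (h23 : n₃ ≤ n₂)
    (ha : a ≤ n₁) (hb : b ≤ n₂) (hc : c ≤ n₃) (hd : d ≤ n₁*n₂) (he : e ≤ n₁*n₃) (hf : f ≤ n₂*n₃)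
    (hab : a = 0 ∨ b = 0) (hac : a = 0 ∨ c = 0) (hbc : b = 0 ∨ c = 0)
    (haf : a = 0 ∨ f = 0) (hbe : b = 0 ∨ e = 0) (hcd : c = 0 ∨ d = 0) :
    a+b+c+d+e+f ≤ n₁*n₂ + n₁*n₃ + max n₁ (n₂*n₃) := by
  have h1' : 1 ≤ n₁ := le_trans h1 (le_trans h23 h12)
  have k1 : n₂*n₃ ≤ n₁*n₃ := Nat.mul_le_mul_right _ h12
  have k2 : n₂ ≤ n₁*n₂ := Nat.le_mul_of_pos_left _ h1'
  have k3 : n₃ ≤ n₁*n₂ := le_trans h23 k2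
  have k4 : n₁ ≤ max n₁ (n₂*n₃) := le_max_left _ _
  have k5 : n₂*n₃ ≤ max n₁ (n₂*n₃) := le_max_right _ _
  generalize n₁*n₂ = p12 at *
  generalize n₁*n₃ = p13 at *
  generalize n₂*n₃ = p23 at *
  generalize max n₁ p23 = M at *
  omega

variable {F₁ F₂ F₃ : Type*} [Field F₁] [Field F₂] [Field F₃]

lemma mem_vertex (x : F₁ × F₂ × F₃) :
    (x ≠ 0 ∧ ∃ y ≠ 0, x * y = 0) ↔
      ¬(x.1 = 0 ∧ x.2.1 = 0 ∧ x.2.2 = 0) ∧ (x.1 = 0 ∨ x.2.1 = 0 ∨ x.2.2 = 0) := by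
  constructor
  · rintro ⟨hx, y, hy, hxy⟩
    refine ⟨fun ⟨u1,u2,u3⟩ => hx (by simp [Prod.ext_iff, u1, u2, u3]), ?_⟩
    by_contra h
    push_neg at h
    obtain ⟨u1, u2, u3⟩ := h
    apply hy
    simp only [Prod.ext_iff, Prod.fst_mul, Prod.snd_mul, Prod.fst_zero, Prod.snd_zero,
      mul_eq_zero] at hxy
    simp [Prod.ext_iff, hxy.1.resolve_left u1, hxy.2.1.resolve_left u2, hxy.2.2.resolve_left u3]
  · rintro ⟨hnz, hz⟩
    refine ⟨fun h => hnz (by simp [h]), ?_⟩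
    rcases hz with h | h | h
    · exact ⟨(1,0,0), by simp [Prod.ext_iff], by simp [Prod.ext_iff, h]⟩
    · exact ⟨(0,1,0), by simp [Prod.ext_iff], by simp [Prod.ext_iff, h]⟩
    · exact ⟨(0,0,1), by simp [Prod.ext_iff], by simp [Prod.ext_iff, h]⟩

lemma mul_ne_zero3 {x y : F₁ × F₂ × F₃}
    (h : (x.1 ≠ 0 ∧ y.1 ≠ 0) ∨ (x.2.1 ≠ 0 ∧ y.2.1 ≠ 0) ∨ (x.2.2 ≠ 0 ∧ y.2.2 ≠ 0)) :
    x * y ≠ 0 := by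
  intro hxy
  simp only [Prod.ext_iff, Prod.fst_mul, Prod.snd_mul, Prod.fst_zero, Prod.snd_zero,
    mul_eq_zero] at hxy
  tauto

/-- The embedding used when `n₂ * n₃ ≤ n₁`. -/
def phiA : {a : F₁ // a ≠ 0} × (F₂ ⊕ {c : F₃ // c ≠ 0}) →
    {x : F₁ × F₂ × F₃ // x ≠ 0 ∧ ∃ y ≠ 0, x * y = 0}
  | (a, Sum.inl b) => ⟨(a.1, b, 0), (mem_vertex _).mpr (by simp [a.2])⟩
  | (a, Sum.inr c) => ⟨(a.1, 0, c.1), (mem_vertex _).mpr (by simp [a.2])⟩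

lemma phiA_injective :
    Function.Injective (phiA (F₁ := F₁) (F₂ := F₂) (F₃ := F₃)) := by
  rintro ⟨⟨a,ha⟩, b|⟨c,hc⟩⟩ ⟨⟨a',ha'⟩, b'|⟨c',hc'⟩⟩ h <;>
    simp_all [phiA, Subtype.ext_iff, Prod.ext_iff, eq_comm]

lemma phiA_prop (t) : ((phiA (F₁ := F₁) (F₂ := F₂) (F₃ := F₃) t : F₁ × F₂ × F₃)).1 ≠ 0 := by
  rcases t with ⟨⟨a,ha⟩, b|c⟩ <;> exact ha

/-- The embedding used when `n₁ ≤ n₂ * n₃`. -/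
def phiB : ({a : F₁ // a ≠ 0} × {b : F₂ // b ≠ 0}) ⊕
    (({a : F₁ // a ≠ 0} × {c : F₃ // c ≠ 0}) ⊕ ({b : F₂ // b ≠ 0} × {c : F₃ // c ≠ 0})) →
    {x : F₁ × F₂ × F₃ // x ≠ 0 ∧ ∃ y ≠ 0, x * y = 0}
  | Sum.inl (a, b) => ⟨(a.1, b.1, 0), (mem_vertex _).mpr (by simp [a.2, b.2])⟩
  | Sum.inr (Sum.inl (a, c)) => ⟨(a.1, 0, c.1), (mem_vertex _).mpr (by simp [a.2, c.2])⟩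
  | Sum.inr (Sum.inr (b, c)) => ⟨(0, b.1, c.1), (mem_vertex _).mpr (by simp [b.2, c.2])⟩

lemma phiB_injective :
    Function.Injective (phiB (F₁ := F₁) (F₂ := F₂) (F₃ := F₃)) := by
  rintro (⟨⟨a,ha⟩,⟨b,hb⟩⟩|⟨⟨a,ha⟩,⟨c,hc⟩⟩|⟨⟨b,hb⟩,⟨c,hc⟩⟩)
    (⟨⟨a',ha'⟩,⟨b',hb'⟩⟩|⟨⟨a',ha'⟩,⟨c',hc'⟩⟩|⟨⟨b',hb'⟩,⟨c',hc'⟩⟩) h <;>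
    simp_all [phiB, Subtype.ext_iff, Prod.ext_iff, eq_comm]

lemma phiB_prop (t) :
    ((phiB (F₁ := F₁) (F₂ := F₂) (F₃ := F₃) t : F₁ × F₂ × F₃).1 ≠ 0 ∧
      (phiB t : F₁ × F₂ × F₃).2.1 ≠ 0) ∨
    ((phiB t : F₁ × F₂ × F₃).1 ≠ 0 ∧ (phiB t : F₁ × F₂ × F₃).2.2 ≠ 0) ∨
    ((phiB t : F₁ × F₂ × F₃).2.1 ≠ 0 ∧ (phiB t : F₁ × F₂ × F₃).2.2 ≠ 0) := by
  rcases t with (⟨⟨a,ha⟩,⟨b,hb⟩⟩|⟨⟨a,ha⟩,⟨c,hc⟩⟩|⟨⟨b,hb⟩,⟨c,hc⟩⟩)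
  · exact Or.inl ⟨ha, hb⟩
  · exact Or.inr (Or.inl ⟨ha, hc⟩)
  · exact Or.inr (Or.inr ⟨hb, hc⟩)

end Aux

set_option maxHeartbeats 1000000 in
theorem stmt9 (F₁ F₂ F₃ : Type*) [Field F₁] [Field F₂] [Field F₃]
    [Finite F₁] [Finite F₂] [Finite F₃] (n₁ n₂ n₃ : ℕ)
    (h₁ : Nat.card {x : F₁ // x ≠ 0} = n₁) (h₂ : Nat.card {x : F₂ // x ≠ 0} = n₂)
    (h₃ : Nat.card {x : F₃ // x ≠ 0} = n₃)
    (h12 : n₂ ≤ n₁) (h23 : n₃ ≤ n₂) :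
    indepNum (zdvGraph (F₁ × F₂ × F₃)) = n₁ * n₂ + n₁ * n₃ + max n₁ (n₂ * n₃) := by
  classical
  haveI := Fintype.ofFinite F₁
  haveI := Fintype.ofFinite F₂
  haveI := Fintype.ofFinite F₃
  haveI : Nonempty {x : F₃ // x ≠ 0} := ⟨⟨1, one_ne_zero⟩⟩
  have hn₃ : 1 ≤ n₃ := h₃ ▸ Nat.card_pos (α := {x : F₃ // x ≠ 0})
  have cardclass : ∀ (p : F₁ → Prop) (q : F₂ → Prop) (r : F₃ → Prop),
      Nat.card {x : F₁ × F₂ × F₃ // p x.1 ∧ q x.2.1 ∧ r x.2.2}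
        = Nat.card {a // p a} * (Nat.card {b // q b} * Nat.card {c // r c}) := by
    intro p q r
    rw [Nat.card_congr (prodSubtypeEquiv p q r), Nat.card_prod, Nat.card_prod]
  apply IsGreatest.csSup_eq
  constructor
  · -- lower bound : exhibit a maximum independent set
    rcases le_total n₁ (n₂ * n₃) with hmax | hmax
    · refine ⟨Finset.univ.map ⟨phiB, phiB_injective⟩, ?_, ?_⟩
      · intro u hu v hv hne
        rw [Finset.mem_coe, Finset.mem_map] at hu hv
        obtain ⟨t, -, rfl⟩ := hu
        obtain ⟨t', -, rfl⟩ := hv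
        rintro ⟨-, hmul⟩
        refine mul_ne_zero3 ?_ hmul
        have hp1 := phiB_prop t
        have hp2 := phiB_prop t'
        tauto
      · rw [Finset.card_map, Finset.card_univ, ← Nat.card_eq_fintype_card,
          Nat.card_sum, Nat.card_sum, Nat.card_prod, Nat.card_prod, Nat.card_prod,
          h₁, h₂, h₃, Nat.max_eq_right hmax]
        ring
    · have hF₂ : Nat.card F₂ = n₂ + 1 := by
        have e1 : Nat.card {x : F₂ // ¬ x ≠ 0} = 1 := by
          rw [Nat.card_congr (Equiv.subtypeEquivRight
            (fun x : F₂ => not_not (a := x = 0)))]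
          simp
        rw [← Nat.card_congr (Equiv.sumCompl (fun x : F₂ => x ≠ 0)), Nat.card_sum, h₂, e1]
      refine ⟨Finset.univ.map ⟨phiA, phiA_injective⟩, ?_, ?_⟩
      · intro u hu v hv hne
        rw [Finset.mem_coe, Finset.mem_map] at hu hv
        obtain ⟨t, -, rfl⟩ := hu
        obtain ⟨t', -, rfl⟩ := hv
        rintro ⟨-, hmul⟩
        exact mul_ne_zero3 (Or.inl ⟨phiA_prop t, phiA_prop t'⟩) hmul
      · rw [Finset.card_map, Finset.card_univ, ← Nat.card_eq_fintype_card,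
          Nat.card_prod, Nat.card_sum, h₁, h₃, hF₂, Nat.max_eq_left hmax]
        ring
  · -- upper bound
    rintro m ⟨s, hs, rfl⟩
    have fbound : ∀ (t : Finset {x : F₁ × F₂ × F₃ // x ≠ 0 ∧ ∃ y ≠ 0, x * y = 0})
        (p : F₁ → Prop) (q : F₂ → Prop) (r : F₃ → Prop),
        (∀ v ∈ t, p (v : F₁ × F₂ × F₃).1 ∧ q (v : F₁ × F₂ × F₃).2.1 ∧
          r (v : F₁ × F₂ × F₃).2.2) →
        t.card ≤ Nat.card {a // p a} * (Nat.card {b // q b} * Nat.card {c // r c}) := by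
      intro t p q r ht
      rw [← cardclass p q r, Nat.card_eq_fintype_card, Fintype.card_subtype]
      exact Finset.card_le_card_of_injOn Subtype.val
        (fun v hv => by simpa using ht v hv) (fun u _ v _ h => Subtype.ext h)
    have pairzero : ∀ t u : Finset {x : F₁ × F₂ × F₃ // x ≠ 0 ∧ ∃ y ≠ 0, x * y = 0},
        t ⊆ s → u ⊆ s →
        (∀ v ∈ t, ∀ w ∈ u, (v : F₁ × F₂ × F₃) ≠ w ∧ (v : F₁ × F₂ × F₃) * w = 0) →
        t.card = 0 ∨ u.card = 0 := by
      intro t u hts hus h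
      by_contra hcon
      push_neg at hcon
      obtain ⟨v, hv⟩ := Finset.card_pos.mp (Nat.pos_of_ne_zero hcon.1)
      obtain ⟨w, hw⟩ := Finset.card_pos.mp (Nat.pos_of_ne_zero hcon.2)
      obtain ⟨hne, hmul⟩ := h v hv w hw
      exact hs (Finset.mem_coe.mpr (hts hv)) (Finset.mem_coe.mpr (hus hw))
        (fun e => hne (congrArg Subtype.val e)) ⟨fun e => hne (congrArg Subtype.val e), hmul⟩
    set f1 := s.filter (fun v : {x : F₁ × F₂ × F₃ // x ≠ 0 ∧ ∃ y ≠ 0, x * y = 0} => (v : F₁ × F₂ × F₃).1 ≠ 0 ∧ (v : F₁ × F₂ × F₃).2.1 = 0 ∧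
      (v : F₁ × F₂ × F₃).2.2 = 0) with hf1
    set f2 := s.filter (fun v : {x : F₁ × F₂ × F₃ // x ≠ 0 ∧ ∃ y ≠ 0, x * y = 0} => (v : F₁ × F₂ × F₃).1 = 0 ∧ (v : F₁ × F₂ × F₃).2.1 ≠ 0 ∧
      (v : F₁ × F₂ × F₃).2.2 = 0) with hf2
    set f3 := s.filter (fun v : {x : F₁ × F₂ × F₃ // x ≠ 0 ∧ ∃ y ≠ 0, x * y = 0} => (v : F₁ × F₂ × F₃).1 = 0 ∧ (v : F₁ × F₂ × F₃).2.1 = 0 ∧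
      (v : F₁ × F₂ × F₃).2.2 ≠ 0) with hf3
    set f4 := s.filter (fun v : {x : F₁ × F₂ × F₃ // x ≠ 0 ∧ ∃ y ≠ 0, x * y = 0} => (v : F₁ × F₂ × F₃).1 ≠ 0 ∧ (v : F₁ × F₂ × F₃).2.1 ≠ 0 ∧
      (v : F₁ × F₂ × F₃).2.2 = 0) with hf4
    set f5 := s.filter (fun v : {x : F₁ × F₂ × F₃ // x ≠ 0 ∧ ∃ y ≠ 0, x * y = 0} => (v : F₁ × F₂ × F₃).1 ≠ 0 ∧ (v : F₁ × F₂ × F₃).2.1 = 0 ∧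
      (v : F₁ × F₂ × F₃).2.2 ≠ 0) with hf5
    set f6 := s.filter (fun v : {x : F₁ × F₂ × F₃ // x ≠ 0 ∧ ∃ y ≠ 0, x * y = 0} => (v : F₁ × F₂ × F₃).1 = 0 ∧ (v : F₁ × F₂ × F₃).2.1 ≠ 0 ∧
      (v : F₁ × F₂ × F₃).2.2 ≠ 0) with hf6
    have cover : s ⊆ f1 ∪ f2 ∪ f3 ∪ f4 ∪ f5 ∪ f6 := by
      intro v hv
      obtain ⟨hnz, hz⟩ := (mem_vertex (v : F₁ × F₂ × F₃)).mp v.2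
      by_cases e1 : (v : F₁ × F₂ × F₃).1 = 0 <;>
        by_cases e2 : (v : F₁ × F₂ × F₃).2.1 = 0 <;>
        by_cases e3 : (v : F₁ × F₂ × F₃).2.2 = 0
      · exact absurd ⟨e1, e2, e3⟩ hnz
      · have m : v ∈ f3 := by rw [hf3, Finset.mem_filter]; exact ⟨hv, e1, e2, e3⟩
        exact Finset.mem_union_left _ (Finset.mem_union_left _ (Finset.mem_union_left _
          (Finset.mem_union_right _ m)))
      · have m : v ∈ f2 := by rw [hf2, Finset.mem_filter]; exact ⟨hv, e1, e2, e3⟩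
        exact Finset.mem_union_left _ (Finset.mem_union_left _ (Finset.mem_union_left _
          (Finset.mem_union_left _ (Finset.mem_union_right _ m))))
      · have m : v ∈ f6 := by rw [hf6, Finset.mem_filter]; exact ⟨hv, e1, e2, e3⟩
        exact Finset.mem_union_right _ m
      · have m : v ∈ f1 := by rw [hf1, Finset.mem_filter]; exact ⟨hv, e1, e2, e3⟩
        exact Finset.mem_union_left _ (Finset.mem_union_left _ (Finset.mem_union_left _
          (Finset.mem_union_left _ (Finset.mem_union_left _ m))))
      · have m : v ∈ f5 := by rw [hf5, Finset.mem_filter]; exact ⟨hv, e1, e2, e3⟩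
        exact Finset.mem_union_left _ (Finset.mem_union_right _ m)
      · have m : v ∈ f4 := by rw [hf4, Finset.mem_filter]; exact ⟨hv, e1, e2, e3⟩
        exact Finset.mem_union_left _ (Finset.mem_union_left _ (Finset.mem_union_right _ m))
      · rcases hz with h | h | h
        · exact absurd h e1
        · exact absurd h e2
        · exact absurd h e3
    have b1 : f1.card ≤ n₁ := by
      simpa only [h₁, Nat.card_unique, mul_one, one_mul] using fbound f1 (fun a => a ≠ 0) (fun b => b = 0) (fun c => c = 0)
        (fun v hv => by rw [hf1, Finset.mem_filter] at hv; exact hv.2)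
    have b2 : f2.card ≤ n₂ := by
      simpa only [h₂, Nat.card_unique, mul_one, one_mul] using fbound f2 (fun a => a = 0) (fun b => b ≠ 0) (fun c => c = 0)
        (fun v hv => by rw [hf2, Finset.mem_filter] at hv; exact hv.2)
    have b3 : f3.card ≤ n₃ := by
      simpa only [h₃, Nat.card_unique, mul_one, one_mul] using fbound f3 (fun a => a = 0) (fun b => b = 0) (fun c => c ≠ 0)
        (fun v hv => by rw [hf3, Finset.mem_filter] at hv; exact hv.2)
    have b4 : f4.card ≤ n₁ * n₂ := by
      simpa only [h₁, h₂, Nat.card_unique, mul_one, one_mul] using fbound f4 (fun a => a ≠ 0) (fun b => b ≠ 0) (fun c => c = 0)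
        (fun v hv => by rw [hf4, Finset.mem_filter] at hv; exact hv.2)
    have b5 : f5.card ≤ n₁ * n₃ := by
      simpa only [h₁, h₃, Nat.card_unique, mul_one, one_mul] using fbound f5 (fun a => a ≠ 0) (fun b => b = 0) (fun c => c ≠ 0)
        (fun v hv => by rw [hf5, Finset.mem_filter] at hv; exact hv.2)
    have b6 : f6.card ≤ n₂ * n₃ := by
      simpa only [h₂, h₃, Nat.card_unique, mul_one, one_mul] using fbound f6 (fun a => a = 0) (fun b => b ≠ 0) (fun c => c ≠ 0)
        (fun v hv => by rw [hf6, Finset.mem_filter] at hv; exact hv.2)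
    have z12 : f1.card = 0 ∨ f2.card = 0 := by
      refine pairzero f1 f2 (Finset.filter_subset _ _) (Finset.filter_subset _ _) ?_
      intro v hv w hw
      rw [hf1, Finset.mem_filter] at hv; rw [hf2, Finset.mem_filter] at hw
      exact ⟨fun e => hv.2.1 (by rw [e]; exact hw.2.1),
        by simp [Prod.ext_iff, hv.2.2.1, hv.2.2.2, hw.2.1, hw.2.2.2]⟩
    have z13 : f1.card = 0 ∨ f3.card = 0 := by
      refine pairzero f1 f3 (Finset.filter_subset _ _) (Finset.filter_subset _ _) ?_
      intro v hv w hw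
      rw [hf1, Finset.mem_filter] at hv; rw [hf3, Finset.mem_filter] at hw
      exact ⟨fun e => hv.2.1 (by rw [e]; exact hw.2.1),
        by simp [Prod.ext_iff, hv.2.2.1, hv.2.2.2, hw.2.1, hw.2.2.1]⟩
    have z23 : f2.card = 0 ∨ f3.card = 0 := by
      refine pairzero f2 f3 (Finset.filter_subset _ _) (Finset.filter_subset _ _) ?_
      intro v hv w hw
      rw [hf2, Finset.mem_filter] at hv; rw [hf3, Finset.mem_filter] at hw
      exact ⟨fun e => hv.2.2.1 (by rw [e]; exact hw.2.2.1),
        by simp [Prod.ext_iff, hv.2.1, hv.2.2.2, hw.2.1, hw.2.2.1]⟩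
    have z16 : f1.card = 0 ∨ f6.card = 0 := by
      refine pairzero f1 f6 (Finset.filter_subset _ _) (Finset.filter_subset _ _) ?_
      intro v hv w hw
      rw [hf1, Finset.mem_filter] at hv; rw [hf6, Finset.mem_filter] at hw
      exact ⟨fun e => hv.2.1 (by rw [e]; exact hw.2.1),
        by simp [Prod.ext_iff, hv.2.2.1, hv.2.2.2, hw.2.1]⟩
    have z25 : f2.card = 0 ∨ f5.card = 0 := by
      refine pairzero f2 f5 (Finset.filter_subset _ _) (Finset.filter_subset _ _) ?_
      intro v hv w hw
      rw [hf2, Finset.mem_filter] at hv; rw [hf5, Finset.mem_filter] at hw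
      exact ⟨fun e => hv.2.2.1 (by rw [e]; exact hw.2.2.1),
        by simp [Prod.ext_iff, hv.2.1, hv.2.2.2, hw.2.2.1]⟩
    have z34 : f3.card = 0 ∨ f4.card = 0 := by
      refine pairzero f3 f4 (Finset.filter_subset _ _) (Finset.filter_subset _ _) ?_
      intro v hv w hw
      rw [hf3, Finset.mem_filter] at hv; rw [hf4, Finset.mem_filter] at hw
      exact ⟨fun e => hv.2.2.2 (by rw [e]; exact hw.2.2.2),
        by simp [Prod.ext_iff, hv.2.1, hv.2.2.1, hw.2.2.2]⟩
    have hsum : s.card ≤ f1.card + f2.card + f3.card + f4.card + f5.card + f6.card := by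
      have u6 := Finset.card_union_le (f1 ∪ f2 ∪ f3 ∪ f4 ∪ f5) f6
      have u5 := Finset.card_union_le (f1 ∪ f2 ∪ f3 ∪ f4) f5
      have u4 := Finset.card_union_le (f1 ∪ f2 ∪ f3) f4
      have u3 := Finset.card_union_le (f1 ∪ f2) f3
      have u2 := Finset.card_union_le f1 f2
      have u0 := Finset.card_le_card cover
      omega
    exact le_trans hsum (arith_bound n₁ n₂ n₃ _ _ _ _ _ _ hn₃ h12 h23
      b1 b2 b3 b4 b5 b6 z12 z13 z23 z16 z25 z34)
end

section
/- Let F1, F2, F3, F4 be finite fields with |F_i \ {0}| = n_i for i = 1, 2, 3, 4, where n1 ≥ n2 ≥ n3 ≥ n4, and let R = F1 × F2 × F3 × F4. If n1 ≥ n2·n3·n4, then α(Γ(R)) = n1·(n2n3 + n2n4 + n3n4 + n2 + n3 + n4 + 1). -/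
open scoped Classical

section Aux

variable {F₁ F₂ F₃ F₄ : Type*} [Field F₁] [Field F₂] [Field F₃] [Field F₄]
variable [Finite F₁] [Finite F₂] [Finite F₃] [Finite F₄]

/-- support pattern of an element of the product ring -/
noncomputable def supp (x : F₁ × F₂ × F₃ × F₄) : Bool × Bool × Bool × Bool :=
  (decide (x.1 ≠ 0), decide (x.2.1 ≠ 0), decide (x.2.2.1 ≠ 0), decide (x.2.2.2 ≠ 0))

lemma card_pair {α β : Type*} (p : α → Prop) (q : β → Prop) :
    Nat.card {c : α × β // p c.1 ∧ q c.2} = Nat.card {a // p a} * Nat.card {b // q b} := by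
  rw [Nat.card_congr (Equiv.subtypeProdEquivProd), Nat.card_prod]

lemma card_compl {α : Type*} [Finite α] (p : α → Prop) :
    Nat.card {a // p a} + Nat.card {a // ¬ p a} = Nat.card α := by
  rw [← Nat.card_sum, Nat.card_congr (Equiv.sumCompl p)]

lemma card_single (F : Type*) [Field F] [Finite F] (b : Bool) :
    Nat.card {a : F // decide (a ≠ 0) = b} = cond b (Nat.card {a : F // a ≠ 0}) 1 := by
  cases b with
  | true => exact Nat.card_congr (Equiv.subtypeEquivRight fun a => by simp)
  | false =>
    have e : Nat.card {a : F // decide (a ≠ 0) = false} = Nat.card {a : F // a = 0} :=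
      Nat.card_congr (Equiv.subtypeEquivRight fun a => by simp)
    rw [e]
    haveI : Unique {a : F // a = 0} :=
      ⟨⟨⟨0, rfl⟩⟩, by rintro ⟨a, rfl⟩; rfl⟩
    simp [Nat.card_unique]

lemma card_field (F : Type*) [Field F] [Finite F] :
    Nat.card F = Nat.card {a : F // a ≠ 0} + 1 := by
  rw [← Nat.card_congr (Equiv.sumCompl (fun a : F => a ≠ 0)), Nat.card_sum]
  congr 1
  have e : Nat.card {a : F // ¬ a ≠ 0} = Nat.card {a : F // a = 0} :=
    Nat.card_congr (Equiv.subtypeEquivRight fun a => by simp)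
  rw [e]
  haveI : Unique {a : F // a = 0} := ⟨⟨⟨0, rfl⟩⟩, by rintro ⟨a, rfl⟩; rfl⟩
  simp [Nat.card_unique]

lemma card_fiber (b : Bool × Bool × Bool × Bool) :
    Nat.card {x : F₁ × F₂ × F₃ × F₄ // supp x = b} =
      (cond b.1 (Nat.card {a : F₁ // a ≠ 0}) 1) *
      ((cond b.2.1 (Nat.card {a : F₂ // a ≠ 0}) 1) *
      ((cond b.2.2.1 (Nat.card {a : F₃ // a ≠ 0}) 1) *
      (cond b.2.2.2 (Nat.card {a : F₄ // a ≠ 0}) 1))) := by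
  obtain ⟨b1, b2, b3, b4⟩ := b
  have e : {x : F₁ × F₂ × F₃ × F₄ // supp x = (b1, b2, b3, b4)} ≃
      {a : F₁ // decide (a ≠ 0) = b1} × {a : F₂ // decide (a ≠ 0) = b2} ×
      {a : F₃ // decide (a ≠ 0) = b3} × {a : F₄ // decide (a ≠ 0) = b4} := by
    refine ⟨fun x => ?_, fun y => ?_, ?_, ?_⟩
    · have h : decide (x.1.1 ≠ 0) = b1 ∧ decide (x.1.2.1 ≠ 0) = b2 ∧
          decide (x.1.2.2.1 ≠ 0) = b3 ∧ decide (x.1.2.2.2 ≠ 0) = b4 := by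
        have := x.2
        simpa [supp, Prod.ext_iff] using this
      exact (⟨x.1.1, h.1⟩, ⟨x.1.2.1, h.2.1⟩, ⟨x.1.2.2.1, h.2.2.1⟩, ⟨x.1.2.2.2, h.2.2.2⟩)
    · exact ⟨(y.1.1, y.2.1.1, y.2.2.1.1, y.2.2.2.1), by
        simp [supp, Prod.ext_iff, y.1.2, y.2.1.2, y.2.2.1.2, y.2.2.2.2]⟩
    · intro x; ext <;> rfl
    · intro y; rfl
  rw [Nat.card_congr e, Nat.card_prod, Nat.card_prod, Nat.card_prod,
    card_single, card_single, card_single, card_single]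

lemma mul_parts (x y : F₁ × F₂ × F₃ × F₄) :
    x * y = 0 ↔ x.1 * y.1 = 0 ∧ x.2.1 * y.2.1 = 0 ∧ x.2.2.1 * y.2.2.1 = 0 ∧
      x.2.2.2 * y.2.2.2 = 0 := by
  simp [Prod.ext_iff]

lemma mul_eq_zero_of_supp {G : Type*} [Field G] {a a' : G} {β : Bool}
    (h : decide (a ≠ 0) = β) (h' : decide (a' ≠ 0) = !β) : a * a' = 0 := by
  cases β <;> simp_all

lemma zd_iff (x : F₁ × F₂ × F₃ × F₄) :
    (∃ y ≠ 0, x * y = 0) ↔ ¬(x.1 ≠ 0 ∧ x.2.1 ≠ 0 ∧ x.2.2.1 ≠ 0 ∧ x.2.2.2 ≠ 0) := by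
  constructor
  · rintro ⟨y, hy, hxy⟩ ⟨ha, hb, hc, hd⟩
    rw [mul_parts] at hxy
    apply hy
    have h1 := (mul_eq_zero.1 hxy.1).resolve_left ha
    have h2 := (mul_eq_zero.1 hxy.2.1).resolve_left hb
    have h3 := (mul_eq_zero.1 hxy.2.2.1).resolve_left hc
    have h4 := (mul_eq_zero.1 hxy.2.2.2).resolve_left hd
    exact Prod.ext h1 (Prod.ext h2 (Prod.ext h3 h4))
  · intro h
    by_cases ha : x.1 = 0
    · exact ⟨(1, 0, 0, 0), by simp [Prod.ext_iff], by simp [mul_parts, ha]⟩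
    by_cases hb : x.2.1 = 0
    · exact ⟨(0, 1, 0, 0), by simp [Prod.ext_iff], by simp [mul_parts, hb]⟩
    by_cases hc : x.2.2.1 = 0
    · exact ⟨(0, 0, 1, 0), by simp [Prod.ext_iff], by simp [mul_parts, hc]⟩
    by_cases hd : x.2.2.2 = 0
    · exact ⟨(0, 0, 0, 1), by simp [Prod.ext_iff], by simp [mul_parts, hd]⟩
    · exact absurd ⟨ha, hb, hc, hd⟩ h

end Aux

theorem stmt10 (F₁ F₂ F₃ F₄ : Type*) [Field F₁] [Field F₂] [Field F₃] [Field F₄]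
    [Finite F₁] [Finite F₂] [Finite F₃] [Finite F₄] (n₁ n₂ n₃ n₄ : ℕ)
    (h₁ : Nat.card {x : F₁ // x ≠ 0} = n₁) (h₂ : Nat.card {x : F₂ // x ≠ 0} = n₂)
    (h₃ : Nat.card {x : F₃ // x ≠ 0} = n₃) (h₄ : Nat.card {x : F₄ // x ≠ 0} = n₄)
    (h12 : n₂ ≤ n₁) (h23 : n₃ ≤ n₂) (h34 : n₄ ≤ n₃)
    (hbig : n₂ * n₃ * n₄ ≤ n₁) :
    indepNum (zdvGraph (F₁ × F₂ × F₃ × F₄)) =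
      n₁ * (n₂ * n₃ + n₂ * n₄ + n₃ * n₄ + n₂ + n₃ + n₄ + 1) := by
  set R := F₁ × F₂ × F₃ × F₄ with hR
  set N := n₁ * (n₂ * n₃ + n₂ * n₄ + n₃ * n₄ + n₂ + n₃ + n₄ + 1) with hNdef
  haveI : Fintype {x : R // x ≠ 0 ∧ ∃ y ≠ 0, x * y = 0} := Fintype.ofFinite _
  haveI : Nonempty {x : F₁ // x ≠ 0} := ⟨⟨1, one_ne_zero⟩⟩
  haveI : Nonempty {x : F₂ // x ≠ 0} := ⟨⟨1, one_ne_zero⟩⟩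
  haveI : Nonempty {x : F₃ // x ≠ 0} := ⟨⟨1, one_ne_zero⟩⟩
  haveI : Nonempty {x : F₄ // x ≠ 0} := ⟨⟨1, one_ne_zero⟩⟩
  -- positivity of the nᵢ
  have q1 : 1 ≤ n₁ := h₁ ▸ Nat.card_pos (α := {x : F₁ // x ≠ 0})
  have q2 : 1 ≤ n₂ := h₂ ▸ Nat.card_pos (α := {x : F₂ // x ≠ 0})
  have q3 : 1 ≤ n₃ := h₃ ▸ Nat.card_pos (α := {x : F₃ // x ≠ 0})
  have q4 : 1 ≤ n₄ := h₄ ▸ Nat.card_pos (α := {x : F₄ // x ≠ 0})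
  -- the fiber counts, with h₁...h₄ substituted
  have hfib : ∀ b : Bool × Bool × Bool × Bool,
      Nat.card {x : R // supp x = b} =
        (cond b.1 n₁ 1) * ((cond b.2.1 n₂ 1) * ((cond b.2.2.1 n₃ 1) * (cond b.2.2.2 n₄ 1))) := by
    intro b; rw [card_fiber, h₁, h₂, h₃, h₄]
  -- UPPER BOUND
  have upper : ∀ m ∈ {n | ∃ s : Finset {x : R // x ≠ 0 ∧ ∃ y ≠ 0, x * y = 0},
      (s : Set _).Pairwise (fun a b => ¬ (zdvGraph R).Adj a b) ∧ s.card = n}, m ≤ N := by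
    rintro m ⟨s, hs, rfl⟩
    have hsum : s.card = ∑ b : Bool × Bool × Bool × Bool,
        (s.filter fun v => supp v.1 = b).card :=
      Finset.card_eq_sum_card_fiberwise (fun x _ => Finset.mem_univ _)
    set c : Bool × Bool × Bool × Bool → ℕ :=
      fun b => (s.filter fun v => supp v.1 = b).card with hc
    have hle : ∀ b, c b ≤
        (cond b.1 n₁ 1) * ((cond b.2.1 n₂ 1) * ((cond b.2.2.1 n₃ 1) * (cond b.2.2.2 n₄ 1))) := by
      intro b
      rw [← hfib b]
      have e : c b = Nat.card {v // v ∈ s.filter fun v => supp v.1 = b} := by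
        rw [Nat.card_eq_fintype_card, Fintype.card_coe]
      rw [e]
      refine Nat.card_le_card_of_injective
        (fun v => (⟨v.1.1, (Finset.mem_filter.1 v.2).2⟩ : {x : R // supp x = b})) ?_
      intro u v huv
      have h' := congrArg Subtype.val huv
      exact Subtype.ext (Subtype.ext h')
    have hpair : ∀ b1 b2 b3 b4 : Bool,
        c (b1, b2, b3, b4) = 0 ∨ c (!b1, !b2, !b3, !b4) = 0 := by
      intro b1 b2 b3 b4
      by_contra h
      push_neg at h
      obtain ⟨u, hu⟩ := Finset.card_pos.1 (Nat.pos_of_ne_zero h.1)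
      obtain ⟨v, hv⟩ := Finset.card_pos.1 (Nat.pos_of_ne_zero h.2)
      rw [Finset.mem_filter] at hu hv
      have hne : u ≠ v := by
        intro huv
        rw [huv, hv.2] at hu
        have := hu.2
        have h1 : b1 = !b1 := congrArg Prod.fst this.symm
        simp at h1
      have hsu := hu.2
      have hsv := hv.2
      have hmul : u.1 * v.1 = 0 := by
        rw [mul_parts]
        refine ⟨?_, ?_, ?_, ?_⟩
        · exact mul_eq_zero_of_supp (congrArg Prod.fst hsu) (congrArg Prod.fst hsv)
        · exact mul_eq_zero_of_supp (congrArg (fun p => p.2.1) hsu) (congrArg (fun p => p.2.1) hsv)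
        · exact mul_eq_zero_of_supp (congrArg (fun p => p.2.2.1) hsu) (congrArg (fun p => p.2.2.1) hsv)
        · exact mul_eq_zero_of_supp (congrArg (fun p => p.2.2.2) hsu) (congrArg (fun p => p.2.2.2) hsv)
      exact hs hu.1 hv.1 hne ⟨hne, hmul⟩
    have hbot : c (false, false, false, false) = 0 := by
      rw [hc]
      rw [Finset.card_eq_zero, Finset.filter_eq_empty_iff]
      intro v _
      intro hsupp
      apply v.2.1
      have h1 : decide ((v : R).1 ≠ 0) = false := congrArg Prod.fst hsupp
      have h2 : decide ((v : R).2.1 ≠ 0) = false := congrArg (fun p => p.2.1) hsupp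
      have h3 : decide ((v : R).2.2.1 ≠ 0) = false := congrArg (fun p => p.2.2.1) hsupp
      have h4 : decide ((v : R).2.2.2 ≠ 0) = false := congrArg (fun p => p.2.2.2) hsupp
      simp at h1 h2 h3 h4
      exact Prod.ext h1 (Prod.ext h2 (Prod.ext h3 h4))
    have htop : c (true, true, true, true) = 0 := by
      rw [hc]
      rw [Finset.card_eq_zero, Finset.filter_eq_empty_iff]
      intro v _
      intro hsupp
      have h1 : decide ((v : R).1 ≠ 0) = true := congrArg Prod.fst hsupp
      have h2 : decide ((v : R).2.1 ≠ 0) = true := congrArg (fun p => p.2.1) hsupp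
      have h3 : decide ((v : R).2.2.1 ≠ 0) = true := congrArg (fun p => p.2.2.1) hsupp
      have h4 : decide ((v : R).2.2.2 ≠ 0) = true := congrArg (fun p => p.2.2.2) hsupp
      simp at h1 h2 h3 h4
      exact (zd_iff (v : R)).1 v.2.2 ⟨h1, h2, h3, h4⟩
    -- the seven nonlinear inequalities
    have i1 : n₂ * (n₃ * n₄) ≤ n₁ := by rwa [mul_assoc] at hbig
    have i2 : n₂ ≤ n₁ * (n₃ * n₄) := by
      calc n₂ = n₂ * (1 * 1) := by ring
        _ ≤ n₁ * (n₃ * n₄) := Nat.mul_le_mul h12 (Nat.mul_le_mul q3 q4)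
    have i3 : n₃ ≤ n₁ * (n₂ * n₄) := by
      calc n₃ = n₃ * (1 * 1) := by ring
        _ ≤ n₁ * (n₂ * n₄) := Nat.mul_le_mul (h23.trans h12) (Nat.mul_le_mul q2 q4)
    have i4 : n₄ ≤ n₁ * (n₂ * n₃) := by
      calc n₄ = n₄ * (1 * 1) := by ring
        _ ≤ n₁ * (n₂ * n₃) := Nat.mul_le_mul ((h34.trans h23).trans h12) (Nat.mul_le_mul q2 q3)
    have i5 : n₃ * n₄ ≤ n₁ * n₂ := by
      calc n₃ * n₄ = 1 * (n₃ * n₄) := by ring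
        _ ≤ n₂ * (n₃ * n₄) := Nat.mul_le_mul q2 le_rfl
        _ ≤ n₁ := i1
        _ = n₁ * 1 := by ring
        _ ≤ n₁ * n₂ := Nat.mul_le_mul le_rfl q2
    have i6 : n₂ * n₄ ≤ n₁ * n₃ := by
      calc n₂ * n₄ = n₂ * (1 * n₄) := by ring
        _ ≤ n₂ * (n₃ * n₄) := Nat.mul_le_mul le_rfl (Nat.mul_le_mul q3 le_rfl)
        _ ≤ n₁ := i1
        _ = n₁ * 1 := by ring
        _ ≤ n₁ * n₃ := Nat.mul_le_mul le_rfl q3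
    have i7 : n₂ * n₃ ≤ n₁ * n₄ := by
      calc n₂ * n₃ = n₂ * (n₃ * 1) := by ring
        _ ≤ n₂ * (n₃ * n₄) := Nat.mul_le_mul le_rfl (Nat.mul_le_mul le_rfl q4)
        _ ≤ n₁ := i1
        _ = n₁ * 1 := by ring
        _ ≤ n₁ * n₄ := Nat.mul_le_mul le_rfl q4
    have key : ∀ b b' : Bool × Bool × Bool × Bool, ∀ M : ℕ,
        (c b = 0 ∨ c b' = 0) → c b ≤ M → c b' ≤ M → c b + c b' ≤ M := by
      rintro b b' M (h | h) hA hB <;> omega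
    have P1 : c (true, false, false, false) + c (false, true, true, true) ≤ n₁ := by
      have hA := hle (true, false, false, false)
      have hB := hle (false, true, true, true)
      simp only [Bool.cond_true, Bool.cond_false, one_mul, mul_one] at hA hB
      have h := hpair true false false false
      simp only [Bool.not_true, Bool.not_false] at h
      rcases h with h | h
      · rw [h, zero_add]; exact hB.trans i1
      · rw [h, add_zero]; exact hA
    have P2 : c (false, true, false, false) + c (true, false, true, true) ≤ n₁ * (n₃ * n₄) := by
      have hA := hle (false, true, false, false)
      have hB := hle (true, false, true, true)
      simp only [Bool.cond_true, Bool.cond_false, one_mul, mul_one] at hA hB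
      have h := hpair false true false false
      simp only [Bool.not_true, Bool.not_false] at h
      rcases h with h | h
      · rw [h, zero_add]; exact hB
      · rw [h, add_zero]; exact hA.trans i2
    have P3 : c (false, false, true, false) + c (true, true, false, true) ≤ n₁ * (n₂ * n₄) := by
      have hA := hle (false, false, true, false)
      have hB := hle (true, true, false, true)
      simp only [Bool.cond_true, Bool.cond_false, one_mul, mul_one] at hA hB
      have h := hpair false false true false
      simp only [Bool.not_true, Bool.not_false] at h
      rcases h with h | h
      · rw [h, zero_add]; exact hB
      · rw [h, add_zero]; exact hA.trans i3
    have P4 : c (false, false, false, true) + c (true, true, true, false) ≤ n₁ * (n₂ * n₃) := by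
      have hA := hle (false, false, false, true)
      have hB := hle (true, true, true, false)
      simp only [Bool.cond_true, Bool.cond_false, one_mul, mul_one] at hA hB
      have h := hpair false false false true
      simp only [Bool.not_true, Bool.not_false] at h
      rcases h with h | h
      · rw [h, zero_add]; exact hB
      · rw [h, add_zero]; exact hA.trans i4
    have P5 : c (true, true, false, false) + c (false, false, true, true) ≤ n₁ * n₂ := by
      have hA := hle (true, true, false, false)
      have hB := hle (false, false, true, true)
      simp only [Bool.cond_true, Bool.cond_false, one_mul, mul_one] at hA hB
      have h := hpair true true false false
      simp only [Bool.not_true, Bool.not_false] at h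
      rcases h with h | h
      · rw [h, zero_add]; exact hB.trans i5
      · rw [h, add_zero]; exact hA
    have P6 : c (true, false, true, false) + c (false, true, false, true) ≤ n₁ * n₃ := by
      have hA := hle (true, false, true, false)
      have hB := hle (false, true, false, true)
      simp only [Bool.cond_true, Bool.cond_false, one_mul, mul_one] at hA hB
      have h := hpair true false true false
      simp only [Bool.not_true, Bool.not_false] at h
      rcases h with h | h
      · rw [h, zero_add]; exact hB.trans i6
      · rw [h, add_zero]; exact hA
    have P7 : c (true, false, false, true) + c (false, true, true, false) ≤ n₁ * n₄ := by
      have hA := hle (true, false, false, true)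
      have hB := hle (false, true, true, false)
      simp only [Bool.cond_true, Bool.cond_false, one_mul, mul_one] at hA hB
      have h := hpair true false false true
      simp only [Bool.not_true, Bool.not_false] at h
      rcases h with h | h
      · rw [h, zero_add]; exact hB.trans i7
      · rw [h, add_zero]; exact hA
    have hNeq : N = n₁ + n₁ * (n₃ * n₄) + n₁ * (n₂ * n₄) + n₁ * (n₂ * n₃) +
        n₁ * n₂ + n₁ * n₃ + n₁ * n₄ := by rw [hNdef]; ring
    rw [hsum, hNeq]
    rw [show (∑ b : Bool × Bool × Bool × Bool,
        (s.filter fun v => supp v.1 = b).card) = ∑ b : Bool × Bool × Bool × Bool, c b from rfl]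
    rw [Fintype.sum_prod_type]
    simp only [Fintype.sum_prod_type, Fintype.sum_bool]
    linarith [P1, P2, P3, P4, P5, P6, P7, hbot, htop]
  -- LOWER BOUND
  have hmem : N ∈ {n | ∃ s : Finset {x : R // x ≠ 0 ∧ ∃ y ≠ 0, x * y = 0},
      (s : Set _).Pairwise (fun a b => ¬ (zdvGraph R).Adj a b) ∧ s.card = n} := by
    refine ⟨Finset.univ.filter (fun v => (v : R).1 ≠ 0), ?_, ?_⟩
    · intro u hu v hv hne hadj
      rw [Finset.mem_coe, Finset.mem_filter] at hu hv
      obtain ⟨-, hmul⟩ := hadj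
      rw [mul_parts] at hmul
      exact mul_ne_zero hu.2 hv.2 hmul.1
    · have e0 : (Finset.univ.filter (fun v : {x : R // x ≠ 0 ∧ ∃ y ≠ 0, x * y = 0} =>
          (v : R).1 ≠ 0)).card = Nat.card {v : {x : R // x ≠ 0 ∧ ∃ y ≠ 0, x * y = 0} //
          (v : R).1 ≠ 0} := by
        rw [Nat.card_eq_fintype_card, Fintype.card_subtype]
      rw [e0]
      have e1 : {v : {x : R // x ≠ 0 ∧ ∃ y ≠ 0, x * y = 0} // (v : R).1 ≠ 0} ≃
          {x : R // x.1 ≠ 0 ∧ ¬(x.2.1 ≠ 0 ∧ x.2.2.1 ≠ 0 ∧ x.2.2.2 ≠ 0)} := by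
        refine (Equiv.subtypeSubtypeEquivSubtypeInter (fun x : R => x ≠ 0 ∧ ∃ y ≠ 0, x * y = 0) (fun x : R => x.1 ≠ 0)).trans
          (Equiv.subtypeEquivRight fun x => ?_)
        constructor
        · rintro ⟨⟨hx0, hzd⟩, hx1⟩
          exact ⟨hx1, fun hall => (zd_iff x).1 hzd ⟨hx1, hall⟩⟩
        · rintro ⟨hx1, hrest⟩
          refine ⟨⟨fun h0 => hx1 (by rw [h0]; rfl), (zd_iff x).2 ?_⟩, hx1⟩
          rintro ⟨-, hall⟩
          exact hrest hall
      rw [Nat.card_congr e1]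
      have e2 : Nat.card {x : R // x.1 ≠ 0 ∧ ¬(x.2.1 ≠ 0 ∧ x.2.2.1 ≠ 0 ∧ x.2.2.2 ≠ 0)} =
          Nat.card {a : F₁ // a ≠ 0} *
          Nat.card {v : F₂ × F₃ × F₄ // ¬(v.1 ≠ 0 ∧ v.2.1 ≠ 0 ∧ v.2.2 ≠ 0)} :=
        card_pair (fun a : F₁ => a ≠ 0)
          (fun v : F₂ × F₃ × F₄ => ¬(v.1 ≠ 0 ∧ v.2.1 ≠ 0 ∧ v.2.2 ≠ 0))
      rw [e2, h₁]
      have e3 : Nat.card {v : F₂ × F₃ × F₄ // v.1 ≠ 0 ∧ v.2.1 ≠ 0 ∧ v.2.2 ≠ 0} =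
          n₂ * (n₃ * n₄) := by
        rw [card_pair (fun a : F₂ => a ≠ 0) (fun w : F₃ × F₄ => w.1 ≠ 0 ∧ w.2 ≠ 0),
          card_pair (fun a : F₃ => a ≠ 0) (fun a : F₄ => a ≠ 0), h₂, h₃, h₄]
      have e4 : Nat.card (F₂ × F₃ × F₄) = (n₂ + 1) * ((n₃ + 1) * (n₄ + 1)) := by
        rw [Nat.card_prod, Nat.card_prod, card_field F₂, card_field F₃, card_field F₄, h₂, h₃, h₄]
      have e5 := card_compl (fun v : F₂ × F₃ × F₄ => v.1 ≠ 0 ∧ v.2.1 ≠ 0 ∧ v.2.2 ≠ 0)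
      rw [e3, e4] at e5
      have e6 : Nat.card {v : F₂ × F₃ × F₄ // ¬(v.1 ≠ 0 ∧ v.2.1 ≠ 0 ∧ v.2.2 ≠ 0)} =
          n₂ * n₃ + n₂ * n₄ + n₃ * n₄ + n₂ + n₃ + n₄ + 1 := by
        have : (n₂ + 1) * ((n₃ + 1) * (n₄ + 1)) =
            n₂ * (n₃ * n₄) + (n₂ * n₃ + n₂ * n₄ + n₃ * n₄ + n₂ + n₃ + n₄ + 1) := by ring
        omega
      rw [e6]
  -- conclude
  show sSup _ = N
  exact le_antisymm (csSup_le ⟨N, hmem⟩ upper) (le_csSup ⟨N, upper⟩ hmem)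
end

section
/- Let F1, F2, F3, F4 be finite fields with |F_i \ {0}| = n_i for i = 1, 2, 3, 4, where n1 ≥ n2 ≥ n3 ≥ n4, and let R = F1 × F2 × F3 × F4. If n1 ≤ n2·n3·n4 and n1·n4 ≥ n2·n3, then α(Γ(R)) = n1·(n2n3 + n2n4 + n3n4 + n2 + n3 + n4) + n2·n3·n4. -/
namespace ZD

abbrev Pat : Type := Bool × Bool × Bool × Bool

def LL : List Pat := [(true, true, true, false), (true, true, false, true),
  (true, false, true, true), (true, true, false, false), (true, false, true, false),
  (true, false, false, true), (false, true, true, true)]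

lemma Lkey : ∀ p ∈ LL, ∀ q ∈ LL,
    (p.1 = true ∧ q.1 = true) ∨ (p.2.1 = true ∧ q.2.1 = true) ∨
    (p.2.2.1 = true ∧ q.2.2.1 = true) ∨ (p.2.2.2 = true ∧ q.2.2.2 = true) := by decide

lemma Lprop : ∀ p ∈ LL, (p.1 = true ∨ p.2.1 = true) ∧
    (p.1 = false ∨ p.2.1 = false ∨ p.2.2.1 = false ∨ p.2.2.2 = false) := by decide

lemma Lnodup : LL.Nodup := by decide

end ZD

attribute [local instance 10] Classical.propDecidable

namespace ZD

def Q {F : Type*} [Zero F] (b : Bool) (a : F) : Prop := if b then a ≠ 0 else a = 0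

lemma cardQ {F : Type*} [Field F] [Finite F] {n : ℕ}
    (h : Nat.card {x : F // x ≠ 0} = n) (b : Bool) :
    Nat.card {a : F // Q b a} = if b then n else 1 := by
  cases b with
  | false =>
    haveI : Unique {a : F // Q false a} :=
      ⟨⟨⟨0, by simp [Q]⟩⟩, fun a => Subtype.ext (by simpa [Q] using a.2)⟩
    simp [Nat.card_unique]
  | true => simpa [Q] using h

lemma count4 {F₁ F₂ F₃ F₄ : Type*} (q₁ : F₁ → Prop) (q₂ : F₂ → Prop)
    (q₃ : F₃ → Prop) (q₄ : F₄ → Prop) :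
    Nat.card {x : F₁ × F₂ × F₃ × F₄ // q₁ x.1 ∧ q₂ x.2.1 ∧ q₃ x.2.2.1 ∧ q₄ x.2.2.2} =
      Nat.card {a // q₁ a} * (Nat.card {a // q₂ a} *
        (Nat.card {a // q₃ a} * Nat.card {a // q₄ a})) := by
  rw [← Nat.card_prod, ← Nat.card_prod, ← Nat.card_prod]
  exact Nat.card_congr <|
    (Equiv.subtypeProdEquivProd).trans <|
      Equiv.prodCongr (Equiv.refl _) <|
        (Equiv.subtypeProdEquivProd).trans <|
          Equiv.prodCongr (Equiv.refl _) Equiv.subtypeProdEquivProd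

variable {F₁ F₂ F₃ F₄ : Type*}

noncomputable def pt [Zero F₁] [Zero F₂] [Zero F₃] [Zero F₄]
    (x : F₁ × F₂ × F₃ × F₄) : Pat :=
  (decide (x.1 ≠ 0), decide (x.2.1 ≠ 0), decide (x.2.2.1 ≠ 0), decide (x.2.2.2 ≠ 0))

lemma decb {F : Type*} [Zero F] (a : F) (b : Bool) :
    (decide (a ≠ 0) = b) ↔ Q b a := by cases b <;> simp [Q]

lemma decb2 {F : Type*} [Zero F] (a : F) (b : Bool) :
    (decide (a = 0) = !b) ↔ Q b a := by cases b <;> simp [Q]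

lemma pt_eq_iff [Zero F₁] [Zero F₂] [Zero F₃] [Zero F₄]
    (x : F₁ × F₂ × F₃ × F₄) (p : Pat) :
    pt x = p ↔ Q p.1 x.1 ∧ Q p.2.1 x.2.1 ∧ Q p.2.2.1 x.2.2.1 ∧ Q p.2.2.2 x.2.2.2 := by
  obtain ⟨b₁, b₂, b₃, b₄⟩ := p
  simp [pt, Prod.ext_iff, decb, decb2]

lemma ext4 {G₁ G₂ G₃ G₄ : Type*} {x y : G₁ × G₂ × G₃ × G₄} :
    x = y ↔ x.1 = y.1 ∧ x.2.1 = y.2.1 ∧ x.2.2.1 = y.2.2.1 ∧ x.2.2.2 = y.2.2.2 := by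
  simp [Prod.ext_iff]

lemma mulQ {F : Type*} [MulZeroClass F] {a b : F} {c : Bool}
    (ha : Q c a) (hb : Q (!c) b) : a * b = 0 := by
  cases c <;> simp [Q] at ha hb <;> simp [ha, hb]

lemma exists_ann [Field F₁] [Field F₂] [Field F₃] [Field F₄] (x : F₁ × F₂ × F₃ × F₄)
    (h : x.1 = 0 ∨ x.2.1 = 0 ∨ x.2.2.1 = 0 ∨ x.2.2.2 = 0) :
    ∃ y ≠ 0, x * y = 0 := by
  rcases h with h | h | h | h
  · exact ⟨(1, 0, 0, 0), by simp [ext4], by simp [ext4, Prod.fst_mul, Prod.snd_mul, h]⟩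
  · exact ⟨(0, 1, 0, 0), by simp [ext4], by simp [ext4, Prod.fst_mul, Prod.snd_mul, h]⟩
  · exact ⟨(0, 0, 1, 0), by simp [ext4], by simp [ext4, Prod.fst_mul, Prod.snd_mul, h]⟩
  · exact ⟨(0, 0, 0, 1), by simp [ext4], by simp [ext4, Prod.fst_mul, Prod.snd_mul, h]⟩

end ZD

theorem stmt11 (F₁ F₂ F₃ F₄ : Type*) [Field F₁] [Field F₂] [Field F₃] [Field F₄]
    [Finite F₁] [Finite F₂] [Finite F₃] [Finite F₄] (n₁ n₂ n₃ n₄ : ℕ)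
    (h₁ : Nat.card {x : F₁ // x ≠ 0} = n₁) (h₂ : Nat.card {x : F₂ // x ≠ 0} = n₂)
    (h₃ : Nat.card {x : F₃ // x ≠ 0} = n₃) (h₄ : Nat.card {x : F₄ // x ≠ 0} = n₄)
    (h12 : n₂ ≤ n₁) (h23 : n₃ ≤ n₂) (h34 : n₄ ≤ n₃)
    (hle : n₁ ≤ n₂ * n₃ * n₄) (hge : n₂ * n₃ ≤ n₁ * n₄) :
    indepNum (zdvGraph (F₁ × F₂ × F₃ × F₄)) =
      n₁ * (n₂ * n₃ + n₂ * n₄ + n₃ * n₄ + n₂ + n₃ + n₄) + n₂ * n₃ * n₄ := by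
  classical
  haveI : Nonempty {x : F₁ // x ≠ 0} := ⟨⟨1, one_ne_zero⟩⟩
  haveI : Nonempty {x : F₂ // x ≠ 0} := ⟨⟨1, one_ne_zero⟩⟩
  haveI : Nonempty {x : F₃ // x ≠ 0} := ⟨⟨1, one_ne_zero⟩⟩
  haveI : Nonempty {x : F₄ // x ≠ 0} := ⟨⟨1, one_ne_zero⟩⟩
  have hn1 : 1 ≤ n₁ := h₁ ▸ Nat.card_pos
  have hn2 : 1 ≤ n₂ := h₂ ▸ Nat.card_pos
  have hn3 : 1 ≤ n₃ := h₃ ▸ Nat.card_pos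
  have hn4 : 1 ≤ n₄ := h₄ ▸ Nat.card_pos
  haveI : Fintype (F₁ × F₂ × F₃ × F₄) := Fintype.ofFinite _
  set N := n₁ * (n₂ * n₃ + n₂ * n₄ + n₃ * n₄ + n₂ + n₃ + n₄) + n₂ * n₃ * n₄ with hN
  set W : ZD.Pat → ℕ := fun p =>
    (if p.1 then n₁ else 1) * ((if p.2.1 then n₂ else 1) *
      ((if p.2.2.1 then n₃ else 1) * (if p.2.2.2 then n₄ else 1))) with hW
  have hfib : ∀ p, Nat.card {x : F₁ × F₂ × F₃ × F₄ // ZD.pt x = p} = W p := by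
    intro p
    rw [Nat.card_congr (Equiv.subtypeEquivRight fun x => ZD.pt_eq_iff x p),
      ZD.count4, ZD.cardQ h₁, ZD.cardQ h₂, ZD.cardQ h₃, ZD.cardQ h₄]
  have hfib' : ∀ p, (Finset.univ.filter fun x : F₁ × F₂ × F₃ × F₄ => ZD.pt x = p).card
      = W p := by
    intro p
    rw [← Fintype.card_subtype, ← Nat.card_eq_fintype_card, hfib]
  -- Upper bound
  have hub : ∀ s : Finset {x : F₁ × F₂ × F₃ × F₄ // x ≠ 0 ∧ ∃ y ≠ 0, x * y = 0},
      (s : Set _).Pairwise (fun a b => ¬ (zdvGraph (F₁ × F₂ × F₃ × F₄)).Adj a b) →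
      s.card ≤ N := by
    intro s hs
    have key : ∀ p, (s.filter fun v => ZD.pt v.val = p).card ≤ W p := by
      intro p
      rw [← hfib p]
      haveI : Fintype {x : F₁ × F₂ × F₃ × F₄ // ZD.pt x = p} := Fintype.ofFinite _
      rw [Nat.card_eq_fintype_card]
      calc (s.filter fun v => ZD.pt v.val = p).card
          = Fintype.card (s.filter fun v => ZD.pt v.val = p) := (Fintype.card_coe _).symm
        _ ≤ Fintype.card {x // ZD.pt x = p} := Fintype.card_le_of_injective
            (fun v => ⟨v.val.val, (Finset.mem_filter.mp v.2).2⟩)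
            (by intro a b hab
                simp only [Subtype.mk.injEq] at hab
                exact Subtype.ext (Subtype.ext hab))
    have hFFFF : (s.filter fun v => ZD.pt v.val = (false, false, false, false)).card = 0 := by
      rw [Finset.card_eq_zero, Finset.filter_eq_empty_iff]
      intro v _ hv
      have hq := (ZD.pt_eq_iff _ _).mp hv
      simp only [ZD.Q, if_neg (by simp : ¬ (false = true))] at hq
      exact v.2.1 (ZD.ext4.mpr ⟨hq.1, hq.2.1, hq.2.2.1, hq.2.2.2⟩)
    have hTTTT : (s.filter fun v => ZD.pt v.val = (true, true, true, true)).card = 0 := by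
      rw [Finset.card_eq_zero, Finset.filter_eq_empty_iff]
      intro v _ hv
      have hq := (ZD.pt_eq_iff _ _).mp hv
      simp only [ZD.Q, if_pos rfl] at hq
      obtain ⟨y, hy0, hxy⟩ := v.2.2
      rw [ZD.ext4] at hxy
      simp only [Prod.fst_mul, Prod.snd_mul, Prod.fst_zero, Prod.snd_zero] at hxy
      apply hy0
      rw [ZD.ext4]
      exact ⟨(mul_eq_zero.mp hxy.1).resolve_left hq.1,
        (mul_eq_zero.mp hxy.2.1).resolve_left hq.2.1,
        (mul_eq_zero.mp hxy.2.2.1).resolve_left hq.2.2.1,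
        (mul_eq_zero.mp hxy.2.2.2).resolve_left hq.2.2.2⟩
    have hpairb : ∀ p q : ZD.Pat, q.1 = !p.1 → q.2.1 = !p.2.1 → q.2.2.1 = !p.2.2.1 →
        q.2.2.2 = !p.2.2.2 → ∀ m : ℕ, W p ≤ m → W q ≤ m →
        (s.filter fun v => ZD.pt v.val = p).card
          + (s.filter fun v => ZD.pt v.val = q).card ≤ m := by
      intro p q e1 e2 e3 e4 m hm1 hm2
      by_cases hp : (s.filter fun v => ZD.pt v.val = p).Nonempty
      · by_cases hq : (s.filter fun v => ZD.pt v.val = q).Nonempty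
        · exfalso
          obtain ⟨x, hx⟩ := hp; obtain ⟨y, hy⟩ := hq
          obtain ⟨hxs, hxp⟩ := Finset.mem_filter.mp hx
          obtain ⟨hys, hyp⟩ := Finset.mem_filter.mp hy
          have hne : x ≠ y := by
            intro h
            rw [h, hyp] at hxp
            have : q.1 = p.1 := congrArg Prod.fst hxp
            rw [e1] at this
            simp at this
          have hqx := (ZD.pt_eq_iff _ _).mp hxp
          have hqy := (ZD.pt_eq_iff _ _).mp hyp
          rw [e1] at hqy; rw [e2] at hqy; rw [e3] at hqy; rw [e4] at hqy
          refine hs (Finset.mem_coe.mpr hxs) (Finset.mem_coe.mpr hys) hne ⟨hne, ?_⟩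
          rw [ZD.ext4]
          exact ⟨ZD.mulQ hqx.1 hqy.1, ZD.mulQ hqx.2.1 hqy.2.1,
            ZD.mulQ hqx.2.2.1 hqy.2.2.1, ZD.mulQ hqx.2.2.2 hqy.2.2.2⟩
        · have h0 : (s.filter fun v => ZD.pt v.val = q).card = 0 :=
            Finset.card_eq_zero.mpr (Finset.not_nonempty_iff_eq_empty.mp hq)
          rw [h0, add_zero]; exact le_trans (key p) hm1
      · have h0 : (s.filter fun v => ZD.pt v.val = p).card = 0 :=
          Finset.card_eq_zero.mpr (Finset.not_nonempty_iff_eq_empty.mp hp)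
        rw [h0, zero_add]; exact le_trans (key q) hm2
    have b1 := hpairb (true, false, false, false) (false, true, true, true)
      rfl rfl rfl rfl (n₂ * (n₃ * n₄))
      (by simp [hW]; simpa [mul_assoc] using hle) (by simp [hW])
    have b2 := hpairb (false, true, false, false) (true, false, true, true)
      rfl rfl rfl rfl (n₁ * (n₃ * n₄))
      (by simp [hW]; exact le_trans h12 (Nat.le_mul_of_pos_right _ (by positivity)))
      (by simp [hW])
    have b3 := hpairb (false, false, true, false) (true, true, false, true)
      rfl rfl rfl rfl (n₁ * (n₂ * n₄))
      (by simp [hW]; exact le_trans (le_trans h23 h12) (Nat.le_mul_of_pos_right _ (by positivity)))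
      (by simp [hW])
    have b4 := hpairb (false, false, false, true) (true, true, true, false)
      rfl rfl rfl rfl (n₁ * (n₂ * n₃))
      (by simp [hW]; exact le_trans (le_trans h34 (le_trans h23 h12)) (Nat.le_mul_of_pos_right _ (by positivity)))
      (by simp [hW])
    have b5 := hpairb (false, false, true, true) (true, true, false, false)
      rfl rfl rfl rfl (n₁ * n₂)
      (by simp [hW]; exact Nat.mul_le_mul (le_trans h23 h12) (le_trans h34 h23))
      (by simp [hW])
    have b6 := hpairb (false, true, false, true) (true, false, true, false)
      rfl rfl rfl rfl (n₁ * n₃)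
      (by simp [hW]; exact Nat.mul_le_mul h12 h34)
      (by simp [hW])
    have b7 := hpairb (false, true, true, false) (true, false, false, true)
      rfl rfl rfl rfl (n₁ * n₄)
      (by simp [hW]; exact hge)
      (by simp [hW])
    have hsum : s.card = ∑ p : ZD.Pat, (s.filter fun v => ZD.pt v.val = p).card :=
      Finset.card_eq_sum_card_fiberwise (fun x _ => Finset.mem_univ _)
    have hNe : N = n₂ * (n₃ * n₄) + n₁ * (n₃ * n₄) + n₁ * (n₂ * n₄) + n₁ * (n₂ * n₃)
        + n₁ * n₂ + n₁ * n₃ + n₁ * n₄ := by rw [hN]; ring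
    rw [hsum, hNe]
    simp only [Fintype.sum_prod_type, Fintype.sum_bool]
    linarith [b1, b2, b3, b4, b5, b6, b7, hFFFF, hTTTT]
  -- Lower bound
  have hlb : ∃ t : Finset {x : F₁ × F₂ × F₃ × F₄ // x ≠ 0 ∧ ∃ y ≠ 0, x * y = 0},
      (t : Set _).Pairwise (fun a b => ¬ (zdvGraph (F₁ × F₂ × F₃ × F₄)).Adj a b) ∧
      t.card = N := by
    set L : Finset ZD.Pat := ZD.LL.toFinset with hL
    have hLkey : ∀ p ∈ L, ∀ q ∈ L,
        (p.1 = true ∧ q.1 = true) ∨ (p.2.1 = true ∧ q.2.1 = true) ∨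
        (p.2.2.1 = true ∧ q.2.2.1 = true) ∨ (p.2.2.2 = true ∧ q.2.2.2 = true) := by
      intro p hp q hq
      exact ZD.Lkey p (List.mem_toFinset.mp hp) q (List.mem_toFinset.mp hq)
    have hLprop : ∀ p ∈ L, (p.1 = true ∨ p.2.1 = true) ∧
        (p.1 = false ∨ p.2.1 = false ∨ p.2.2.1 = false ∨ p.2.2.2 = false) := by
      intro p hp
      exact ZD.Lprop p (List.mem_toFinset.mp hp)
    have hvert : ∀ x : F₁ × F₂ × F₃ × F₄, ZD.pt x ∈ L →
        x ≠ 0 ∧ ∃ y ≠ 0, x * y = 0 := by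
      intro x hx
      obtain ⟨hnz, hz⟩ := hLprop _ hx
      constructor
      · intro h0
        rcases hnz with h | h <;> rw [h0] at h <;> simp [ZD.pt] at h
      · apply ZD.exists_ann
        rcases hz with h | h | h | h
        · simp [ZD.pt] at h; exact Or.inl h
        · simp [ZD.pt] at h; exact Or.inr (Or.inl h)
        · simp [ZD.pt] at h; exact Or.inr (Or.inr (Or.inl h))
        · simp [ZD.pt] at h; exact Or.inr (Or.inr (Or.inr h))
    refine ⟨(Finset.univ.filter fun x : F₁ × F₂ × F₃ × F₄ => ZD.pt x ∈ L).subtype _, ?_, ?_⟩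
    · intro a ha b hb hab hAdj
      obtain ⟨_, hmul⟩ := hAdj
      have haL : ZD.pt a.val ∈ L := by
        have := Finset.mem_subtype.mp (Finset.mem_coe.mp ha)
        exact (Finset.mem_filter.mp this).2
      have hbL : ZD.pt b.val ∈ L := by
        have := Finset.mem_subtype.mp (Finset.mem_coe.mp hb)
        exact (Finset.mem_filter.mp this).2
      rcases hLkey _ haL _ hbL with ⟨ea, eb⟩ | ⟨ea, eb⟩ | ⟨ea, eb⟩ | ⟨ea, eb⟩
      · simp [ZD.pt] at ea eb
        exact (mul_ne_zero ea eb) (congrArg Prod.fst hmul)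
      · simp [ZD.pt] at ea eb
        exact (mul_ne_zero ea eb) (congrArg (fun z => z.2.1) hmul)
      · simp [ZD.pt] at ea eb
        exact (mul_ne_zero ea eb) (congrArg (fun z => z.2.2.1) hmul)
      · simp [ZD.pt] at ea eb
        exact (mul_ne_zero ea eb) (congrArg (fun z => z.2.2.2) hmul)
    · rw [Finset.card_subtype]
      rw [Finset.filter_eq_self.mpr (fun x hx => hvert x (Finset.mem_filter.mp hx).2)]
      rw [Finset.card_eq_sum_card_fiberwise
        (f := fun x => ZD.pt x) (s := Finset.univ.filter fun x : F₁ × F₂ × F₃ × F₄ => ZD.pt x ∈ L) (t := L) (fun x hx => (Finset.mem_filter.mp hx).2)]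
      have he : ∀ p ∈ L, ((Finset.univ.filter fun x : F₁ × F₂ × F₃ × F₄ => ZD.pt x ∈ L).filter
          fun x => ZD.pt x = p).card = W p := by
        intro p hp
        rw [show ((Finset.univ.filter fun x : F₁ × F₂ × F₃ × F₄ => ZD.pt x ∈ L).filter
            fun x => ZD.pt x = p) = Finset.univ.filter fun x => ZD.pt x = p from by
          ext x
          simp only [Finset.mem_filter, Finset.mem_univ, true_and]
          exact ⟨fun h => h.2, fun h => ⟨by rw [h]; exact hp, h⟩⟩]
        exact hfib' p
      rw [Finset.sum_congr rfl he]
      rw [hL, List.sum_toFinset _ ZD.Lnodup]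
      simp only [ZD.LL, List.map_cons, List.map_nil, List.sum_cons, List.sum_nil, hW]
      simp only [if_true, Bool.false_eq_true, ite_true, ite_false]
      rw [hN]; ring
  -- Conclusion
  obtain ⟨t, htp, htc⟩ := hlb
  unfold indepNum
  apply le_antisymm
  · exact csSup_le ⟨0, ∅, by simp, by simp⟩ (by rintro n ⟨s, hp, rfl⟩; exact hub s hp)
  · exact le_csSup ⟨N, by rintro n ⟨s, hp, rfl⟩; exact hub s hp⟩ ⟨t, htp, htc⟩
end
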